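/- arXiv:1307.0655 — 12 statements merged into one kernel-verified Lean document; each statement's English description precedes it below -/
import Mathlib

section
/- If μ : (0,1) → ℝ satisfies μ(xy) = μ(x)μ(y) for all x, y ∈ (0,1) with xy ∈ (0,1), μ extends to a multiplicative function on [0,∞), and μ(x) = μ(1−x) for all x ∈ (0,1), then either μ ≡ 1 on (0,1) or μ ≡ 0 on (0,1). -/
open Set

theorem stmt_0 (μ : ℝ → ℝ)
    (hmul : ∀ x ∈ Ioo (0:ℝ) 1, ∀ y ∈ Ioo (0:ℝ) 1, x * y ∈ Ioo (0:ℝ) 1 →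
      μ (x * y) = μ x * μ y)
    (hext : ∃ ν : ℝ → ℝ, (∀ x y : ℝ, 0 ≤ x → 0 ≤ y → ν (x * y) = ν x * ν y) ∧
      ∀ x ∈ Ioo (0:ℝ) 1, ν x = μ x)
    (hsym : ∀ x ∈ Ioo (0:ℝ) 1, μ x = μ (1 - x)) :
    (∀ x ∈ Ioo (0:ℝ) 1, μ x = 1) ∨ (∀ x ∈ Ioo (0:ℝ) 1, μ x = 0) := by
  obtain ⟨ν, hν, hvμ⟩ := hext
  have h1 : ν 1 = ν 1 * ν 1 := by simpa using hν 1 1 zero_le_one zero_le_one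
  by_cases h0 : ν 1 = 0
  · right
    intro x hx
    have := hν x 1 hx.1.le zero_le_one
    rw [mul_one, h0, mul_zero] at this
    rw [← hvμ x hx, this]
  · left
    have hν1 : ν 1 = 1 := by
      have : ν 1 * 1 = ν 1 * ν 1 := by rw [mul_one]; exact h1
      exact (mul_left_cancel₀ h0 this).symm
    -- ν never vanishes on positives
    have hne : ∀ x : ℝ, 0 < x → ν x ≠ 0 := by
      intro x hx
      have h := hν x x⁻¹ hx.le (inv_nonneg.mpr hx.le)
      rw [mul_inv_cancel₀ hx.ne', hν1] at h
      exact left_ne_zero_of_mul_eq_one h.symm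
    -- symmetry for ν on (0,1)
    have hvsym : ∀ x ∈ Ioo (0:ℝ) 1, ν (1 - x) = ν x := by
      intro x hx
      have hx' : (1 - x) ∈ Ioo (0:ℝ) 1 := ⟨by linarith [hx.2], by linarith [hx.1]⟩
      rw [hvμ x hx, hvμ (1 - x) hx', hsym x hx]
    -- ν (1+x) = ν x for x ∈ (0,1)
    have hshift : ∀ x ∈ Ioo (0:ℝ) 1, ν (1 + x) = ν x := by
      intro x hx
      obtain ⟨hx0, hx1⟩ := hx
      have hsq : (x * x) ∈ Ioo (0:ℝ) 1 :=
        ⟨mul_pos hx0 hx0, by nlinarith⟩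
      have e1 : ν (1 - x * x) = ν (1 - x) * ν (1 + x) := by
        have := hν (1 - x) (1 + x) (by linarith) (by linarith)
        rw [show (1 - x) * (1 + x) = 1 - x * x by ring] at this
        exact this
      have e2 : ν (x * x) = ν x * ν x := hν x x hx0.le hx0.le
      have e3 : ν (1 - x * x) = ν (x * x) := hvsym _ hsq
      have e4 : ν (1 - x) = ν x := hvsym x ⟨hx0, hx1⟩
      have : ν x * ν (1 + x) = ν x * ν x := by
        rw [← e4, ← e1, e3, e2, e4]
      exact mul_left_cancel₀ (hne x hx0) this
    -- ν (x / (1+x)) = 1 for x ∈ (0,1)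
    have hfrac : ∀ x ∈ Ioo (0:ℝ) 1, ν (x / (1 + x)) = 1 := by
      intro x hx
      obtain ⟨hx0, hx1⟩ := hx
      have h1x : (0:ℝ) < 1 + x := by linarith
      have h := hν (x / (1 + x)) (1 + x) (div_nonneg hx0.le h1x.le) h1x.le
      rw [div_mul_cancel₀ _ h1x.ne', hshift x ⟨hx0, hx1⟩] at h
      have : ν (x / (1 + x)) * ν x = 1 * ν x := by rw [one_mul, ← h]
      exact mul_right_cancel₀ (hne x hx0) this
    -- ν y = 1 for y ∈ (0, 1/2)
    have hsmall : ∀ y : ℝ, 0 < y → y < 1 / 2 → ν y = 1 := by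
      intro y hy0 hy2
      have h1y : (0:ℝ) < 1 - y := by linarith
      have hx : y / (1 - y) ∈ Ioo (0:ℝ) 1 := by
        constructor
        · exact div_pos hy0 h1y
        · rw [div_lt_one h1y]; linarith
      have := hfrac _ hx
      have heq : (y / (1 - y)) / (1 + y / (1 - y)) = y := by
        field_simp
        ring
      rw [heq] at this
      exact this
    -- positivity on positives
    have hpos : ∀ x : ℝ, 0 < x → 0 < ν x := by
      intro x hx
      have hs : (0:ℝ) ≤ Real.sqrt x := Real.sqrt_nonneg x
      have h := hν (Real.sqrt x) (Real.sqrt x) hs hs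
      rw [Real.mul_self_sqrt hx.le] at h
      have : 0 ≤ ν x := h ▸ mul_self_nonneg _
      exact lt_of_le_of_ne this (Ne.symm (hne x hx))
    -- ν (1/2) = 1
    have hhalf : ν (1 / 2 : ℝ) = 1 := by
      have h := hν (1/2 : ℝ) (1/2) (by norm_num) (by norm_num)
      have hq : ν ((1:ℝ)/4) = 1 := hsmall (1/4) (by norm_num) (by norm_num)
      rw [show (1/2 : ℝ) * (1/2) = 1/4 by norm_num, hq] at h
      have hp := hpos (1/2 : ℝ) (by norm_num)
      nlinarith
    intro x hx
    rw [← hvμ x hx]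
    rcases lt_trichotomy x (1/2) with h | h | h
    · exact hsmall x hx.1 h
    · rw [h]; exact hhalf
    · rw [← hvsym x hx]
      exact hsmall (1 - x) (by linarith [hx.2]) (by linarith)
end

section
/- If μ : [0,∞) → ℝ is multiplicative (μ(xy) = μ(x)μ(y) for all x, y ≥ 0) and satisfies μ(p/(p+q)) = μ(q/(p+q)) for all p, q > 0, then μ is identically 0 or identically 1 on (0,∞). -/
theorem stmt_1 (μ : ℝ → ℝ)
    (hmul : ∀ x y : ℝ, 0 ≤ x → 0 ≤ y → μ (x * y) = μ x * μ y)
    (hsym : ∀ p q : ℝ, 0 < p → 0 < q → μ (p / (p + q)) = μ (q / (p + q))) :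
    (∀ x : ℝ, 0 < x → μ x = 0) ∨ (∀ x : ℝ, 0 < x → μ x = 1) := by
  have h1 : μ 1 = μ 1 * μ 1 := by
    have := hmul 1 1 zero_le_one zero_le_one
    simpa using this
  have hcase : μ 1 = 0 ∨ μ 1 = 1 := by
    rcases eq_or_ne (μ 1) 0 with h | h
    · exact Or.inl h
    · right
      have := mul_left_cancel₀ h (by rw [mul_one, ← h1] : μ 1 * 1 = μ 1 * μ 1)
      exact this.symm
  rcases hcase with h0 | h1'
  · left
    intro x hx
    have := hmul x 1 hx.le zero_le_one
    simp [h0] at this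
    simpa using this
  · right
    intro x hx
    have hx1 : (0:ℝ) < x + 1 := by linarith
    have hinv : μ (x + 1) * μ (x + 1)⁻¹ = 1 := by
      have := hmul (x + 1) (x + 1)⁻¹ hx1.le (inv_nonneg.mpr hx1.le)
      rw [mul_inv_cancel₀ hx1.ne'] at this
      rw [← this, h1']
    have hne : μ (x + 1)⁻¹ ≠ 0 := by
      intro h
      rw [h, mul_zero] at hinv
      exact one_ne_zero hinv.symm
    have hs := hsym x 1 hx one_pos
    have hrw : x / (x + 1) = x * (x + 1)⁻¹ := div_eq_mul_inv x (x+1)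
    have hrw2 : (1:ℝ) / (x + 1) = (x + 1)⁻¹ := one_div _
    rw [hrw, hrw2, hmul x (x+1)⁻¹ hx.le (inv_nonneg.mpr hx1.le)] at hs
    exact mul_right_cancel₀ hne (by rw [hs, one_mul])
end

section
/- If l : (0,∞) → ℝ satisfies l(xy) = l(x) + l(y) for all x, y > 0, and l(x) = l(1−x) for all x ∈ (0,1), then l ≡ 0 on (0,∞). -/
open Set

theorem stmt_2 (l : ℝ → ℝ)
    (hlog : ∀ x y : ℝ, 0 < x → 0 < y → l (x * y) = l x + l y)
    (hsym : ∀ x ∈ Ioo (0:ℝ) 1, l x = l (1 - x)) :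
    ∀ x : ℝ, 0 < x → l x = 0 := by
  intro x hx
  have hy : (0:ℝ) < 1 + x := by linarith
  have hone : l 1 = 0 := by
    have := hlog 1 1 one_pos one_pos
    simp at this
    linarith
  have hinv : l (1+x)⁻¹ = - l (1+x) := by
    have := hlog (1+x) (1+x)⁻¹ hy (by positivity)
    rw [mul_inv_cancel₀ (ne_of_gt hy), hone] at this
    linarith
  have hmem : x * (1+x)⁻¹ ∈ Ioo (0:ℝ) 1 := by
    constructor
    · positivity
    · rw [mul_inv_lt_iff₀ hy]
      linarith
  have hs := hsym _ hmem
  have heq : 1 - x * (1+x)⁻¹ = (1+x)⁻¹ := by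
    field_simp
    ring
  rw [heq, hlog x (1+x)⁻¹ hx (by positivity), hinv] at hs
  linarith
end

section
/- If A : (0,∞)² → ℝ (functions of two positive real variables) satisfies A(u, v+w) = A(v, u+w) for all u, v, w > 0, then there exists a function φ : (0,∞) → ℝ such that A(u, v) = φ(u+v) for all u, v > 0. -/
theorem stmt_4 (A : ℝ → ℝ → ℝ)
    (hA : ∀ u v w : ℝ, 0 < u → 0 < v → 0 < w → A u (v + w) = A v (u + w)) :
    ∃ φ : ℝ → ℝ, ∀ u v : ℝ, 0 < u → 0 < v → A u v = φ (u + v) := by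
  refine ⟨fun s => A (s/2) (s/2), fun u v hu hv => ?_⟩
  have key : ∀ a b x : ℝ, 0 < a → 0 < x → x < b → A a b = A x (a + b - x) := by
    intro a b x ha hx hxb
    have h := hA a x (b - x) ha hx (by linarith)
    convert h using 2 <;> ring
  have h1 : A u v = A (v/2) (u + v - v/2) :=
    key u v (v/2) hu (by linarith) (by linarith)
  have h2 : A (v/2) (u + v - v/2) = A ((u+v)/2) ((u+v)/2) := by
    have := key (v/2) (u + v - v/2) ((u+v)/2) (by linarith) (by linarith) (by linarith)
    rw [this]; ring_nf
  rw [h1, h2]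
end

section
/- If A : (0,∞)² → ℝ is continuous and satisfies A(u, v+w) = A(v, u+w) for all u, v, w > 0, then there exists a continuous φ : (0,∞) → ℝ with A(u, v) = φ(u+v) for all u, v > 0. -/
open Set

theorem stmt_5 (A : ℝ → ℝ → ℝ)
    (hcont : ContinuousOn (fun p : ℝ × ℝ => A p.1 p.2) (Ioi (0:ℝ) ×ˢ Ioi (0:ℝ)))
    (hA : ∀ u v w : ℝ, 0 < u → 0 < v → 0 < w → A u (v + w) = A v (u + w)) :
    ∃ φ : ℝ → ℝ, ContinuousOn φ (Ioi (0:ℝ)) ∧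
      ∀ u v : ℝ, 0 < u → 0 < v → A u v = φ (u + v) := by
  have key : ∀ a b c d : ℝ, 0 < a → 0 < b → 0 < c → a + b = c + d → c < b →
      A a b = A c d := by
    intro a b c d ha hb hc hsum hcb
    have hw : 0 < b - c := sub_pos.mpr hcb
    have h1 : A a (c + (b - c)) = A c (a + (b - c)) := hA a c (b - c) ha hc hw
    have e1 : c + (b - c) = b := by ring
    have e2 : a + (b - c) = d := by linarith
    rw [e1, e2] at h1
    exact h1
  refine ⟨fun s => A (s / 2) (s / 2), ?_, ?_⟩
  · have hmap : MapsTo (fun s : ℝ => ((s / 2 : ℝ), (s / 2 : ℝ))) (Ioi (0:ℝ))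
        (Ioi (0:ℝ) ×ˢ Ioi (0:ℝ)) := by
      intro s hs
      simp only [mem_prod, mem_Ioi] at *
      constructor <;> linarith
    exact hcont.comp ((continuous_id.div_const 2).prodMk
      (continuous_id.div_const 2)).continuousOn hmap
  · intro u v hu hv
    set s := u + v with hs
    have hspos : 0 < s := by positivity
    set c := min v (s / 2) / 2 with hc
    have hcpos : 0 < c := by
      have : 0 < min v (s / 2) := lt_min hv (by linarith)
      positivity
    have hcv : c < v := by
      have : min v (s / 2) ≤ v := min_le_left _ _
      simp only [hc]; linarith
    have hcs : c < s / 2 := by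
      have : min v (s / 2) ≤ s / 2 := min_le_right _ _
      simp only [hc]; linarith
    have h1 : A u v = A c (s - c) := key u v c (s - c) hu hv hcpos (by ring) hcv
    have h2 : A c (s - c) = A (s / 2) (s / 2) :=
      key c (s - c) (s / 2) (s / 2) hcpos (by linarith) (by linarith) (by ring)
        (by linarith)
    simp only [h1, h2]
end

section
/- If A : ((0,∞)^k)² → ℝ satisfies A(u, v+w) = A(v, u+w) for all u, v, w in the positive cone of ℝ^k (with componentwise addition and ordering), then there exists φ : (0,∞)^k → ℝ such that A(u, v) = φ(u+v) for all u, v in the positive cone. -/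
theorem stmt_6 (k : ℕ) (hk : 0 < k) (A : (Fin k → ℝ) → (Fin k → ℝ) → ℝ)
    (hA : ∀ u v w : Fin k → ℝ, (∀ i, 0 < u i) → (∀ i, 0 < v i) → (∀ i, 0 < w i) →
      A u (v + w) = A v (u + w)) :
    ∃ φ : (Fin k → ℝ) → ℝ, ∀ u v : Fin k → ℝ,
      (∀ i, 0 < u i) → (∀ i, 0 < v i) → A u v = φ (u + v) := by
  refine ⟨fun s => A ((1/4 : ℝ) • s) ((3/4 : ℝ) • s), fun u v hu hv => ?_⟩
  have h1 := hA u ((1/2 : ℝ) • v) ((1/2 : ℝ) • v) hu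
    (fun i => by simpa using mul_pos (by norm_num : (0:ℝ) < 1/2) (hv i))
    (fun i => by simpa using mul_pos (by norm_num : (0:ℝ) < 1/2) (hv i))
  have h2 := hA ((1/2 : ℝ) • v) ((1/4 : ℝ) • (u + v)) ((3/4 : ℝ) • u + (1/4 : ℝ) • v)
    (fun i => by simpa using mul_pos (by norm_num : (0:ℝ) < 1/2) (hv i))
    (fun i => by
      simp only [Pi.smul_apply, Pi.add_apply, smul_eq_mul]
      have := add_pos (hu i) (hv i); linarith)
    (fun i => by
      simp only [Pi.smul_apply, Pi.add_apply, smul_eq_mul]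
      nlinarith [hu i, hv i])
  have e1 : (1/2 : ℝ) • v + (1/2 : ℝ) • v = v := by funext i; simp; ring
  have e2 : (1/4 : ℝ) • (u + v) + ((3/4 : ℝ) • u + (1/4 : ℝ) • v) = u + (1/2 : ℝ) • v := by
    funext i; simp; ring
  have e3 : (1/2 : ℝ) • v + ((3/4 : ℝ) • u + (1/4 : ℝ) • v) = (3/4 : ℝ) • (u + v) := by
    funext i; simp; ring
  rw [e1] at h1
  rw [e2, e3] at h2
  simp only [h1, h2]
end

section
/- Let f : [0,∞)³ → ℝ be symmetric (invariant under all permutations of its three arguments) and satisfy the modified entropy equation f(x,y,z) = f(x, y+z, 0) + (y+z)·f(0, y/(y+z), z/(y+z)) for all x, y, z > 0. Then there exist a logarithmic function l : (0,∞) → ℝ and a function ψ : (0,∞) → ℝ such that f(x,y,z) = x·l(x) + y·l(y) + z·l(z) + ψ(x+y+z) for all x, y, z > 0. -/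
set_option maxHeartbeats 1000000
set_option linter.unusedSectionVars false

namespace Stmt11Aux


theorem fs_rat_real : Algebra.FormallySmooth ℚ ℝ := by
  obtain ⟨s, hs⟩ := exists_isTranscendenceBasis ℚ ℝ
  set K := IntermediateField.adjoin ℚ (Set.range (Subtype.val : s → ℝ)) with hK
  haveI h1 : Algebra.IsAlgebraic K ℝ := hs.isAlgebraic_field
  haveI : CharZero K := charZero_of_injective_algebraMap (algebraMap ℚ K).injective
  haveI : Algebra.IsIntegral K ℝ := h1.isIntegral
  haveI : Algebra.IsSeparable K ℝ := Algebra.IsSeparable.of_integral K ℝ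
  haveI : Algebra.FormallyEtale K ℝ := Algebra.FormallyEtale.of_isSeparable K ℝ
  haveI : Algebra.FormallySmooth K ℝ := inferInstance
  haveI : Algebra.FormallySmooth (MvPolynomial s ℚ) (FractionRing (MvPolynomial s ℚ)) :=
    Algebra.FormallySmooth.of_isLocalization (nonZeroDivisors (MvPolynomial s ℚ))
  haveI h2 : @Algebra.FormallySmooth ℚ (FractionRing (MvPolynomial s ℚ)) _ _
      OreLocalization.instAlgebra :=
    @Algebra.FormallySmooth.comp ℚ _ (MvPolynomial s ℚ) _ _ (FractionRing (MvPolynomial s ℚ)) _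
      OreLocalization.instAlgebra _ (by infer_instance) (by infer_instance) (by infer_instance)
  haveI : Algebra.FormallySmooth ℚ K :=
    @Algebra.FormallySmooth.of_equiv ℚ _ (FractionRing (MvPolynomial s ℚ)) K _
      OreLocalization.instAlgebra _ _ h2 hs.1.aevalEquivField
  exact Algebra.FormallySmooth.comp ℚ K ℝ


noncomputable def pext (g : ℝ → ℝ) (a : ℝ) : ℝ := g (a + (|a| + 1)) - g (|a| + 1)

section
variable {g : ℝ → ℝ} (hg : ∀ x y : ℝ, 0 < x → 0 < y → g (x + y) = g x + g y)
include hg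

theorem pext_eq {a n : ℝ} (hn : 0 < n) (han : 0 < a + n) : pext g a = g (a + n) - g n := by
  have hm : (0:ℝ) < |a| + 1 := by positivity
  have ham : 0 < a + (|a| + 1) := by
    have : -a ≤ |a| := neg_le_abs a
    linarith
  have k1 : g (a + n + (|a| + 1)) = g (a + n) + g (|a| + 1) := hg _ _ han hm
  have k2 : g (a + (|a| + 1) + n) = g (a + (|a| + 1)) + g n := hg _ _ ham hn
  have : a + n + (|a| + 1) = a + (|a| + 1) + n := by ring
  rw [this] at k1
  unfold pext
  linarith
theorem pext_pos {a : ℝ} (ha : 0 < a) : pext g a = g a := by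
  rw [pext_eq hg one_pos (by linarith), hg a 1 ha one_pos]; ring

theorem pext_add (a b : ℝ) : pext g (a + b) = pext g a + pext g b := by
  have h1 : (0:ℝ) < |a| + 1 := by positivity
  have h2 : (0:ℝ) < |b| + 1 := by positivity
  have ha : 0 < a + (|a| + 1) := by have := neg_le_abs a; linarith
  have hb : 0 < b + (|b| + 1) := by have := neg_le_abs b; linarith
  have hs : 0 < a + b + (|a| + 1 + (|b| + 1)) := by linarith
  rw [pext_eq hg (by linarith : (0:ℝ) < |a| + 1 + (|b| + 1)) hs,
      pext_eq hg h1 ha, pext_eq hg h2 hb]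
  have e1 : g (a + b + (|a| + 1 + (|b| + 1))) = g (a + (|a| + 1)) + g (b + (|b| + 1)) := by
    have : a + b + (|a| + 1 + (|b| + 1)) = (a + (|a| + 1)) + (b + (|b| + 1)) := by ring
    rw [this, hg _ _ ha hb]
  have e2 : g (|a| + 1 + (|b| + 1)) = g (|a| + 1) + g (|b| + 1) := hg _ _ h1 h2
  rw [e1, e2]; ring

end

theorem add_vanish {g : ℝ → ℝ} (hadd : ∀ a b : ℝ, g (a + b) = g a + g b)
    (hpos : ∀ a : ℝ, 0 < a → g a = 0) : ∀ a, g a = 0 := by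
  intro a
  have h1 : (0:ℝ) < |a| + 1 := by positivity
  have ha : 0 < a + (|a| + 1) := by have := neg_le_abs a; linarith
  have := hadd a (|a| + 1)
  rw [hpos _ ha, hpos _ h1] at this
  linarith


structure E1 (Bb : ℝ → ℝ → ℝ) where
  a : ℝ
  e : ℝ

theorem E1.ext' {Bb : ℝ → ℝ → ℝ} {p q : E1 Bb} (h1 : p.a = q.a) (h2 : p.e = q.e) : p = q := by
  cases p; cases q; cases h1; cases h2; rfl

theorem exists_potential (Bb : ℝ → ℝ → ℝ)
    (hsym : ∀ a b, Bb a b = Bb b a)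
    (hz : ∀ a, Bb a 0 = 0)
    (hcoc : ∀ a b c, Bb a b + Bb (a + b) c = Bb a (b + c) + Bb b c) :
    ∃ φ : ℝ → ℝ, ∀ a b, φ a + φ b - φ (a + b) = Bb a b := by
  have hz' : ∀ a, Bb 0 a = 0 := fun a => (hsym 0 a).trans (hz a)
  letI : Add (E1 Bb) := ⟨fun p q => ⟨p.a + q.a, p.e + q.e + Bb p.a q.a⟩⟩
  letI : Zero (E1 Bb) := ⟨⟨0, 0⟩⟩
  letI : Neg (E1 Bb) := ⟨fun p => ⟨-p.a, -p.e - Bb p.a (-p.a)⟩⟩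
  have hadd : ∀ p q : E1 Bb, p + q = ⟨p.a + q.a, p.e + q.e + Bb p.a q.a⟩ := fun _ _ => rfl
  have hzero : (0 : E1 Bb) = ⟨0, 0⟩ := rfl
  have hneg : ∀ p : E1 Bb, -p = ⟨-p.a, -p.e - Bb p.a (-p.a)⟩ := fun _ => rfl
  letI : AddCommGroup (E1 Bb) :=
    { add := (· + ·)
      zero := 0
      neg := (- ·)
      add_assoc := by
        intro p q s
        rw [hadd, hadd, hadd, hadd]
        exact E1.ext' (by dsimp; ring) (by dsimp; have := hcoc p.a q.a s.a; linarith)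
      zero_add := fun p => by rw [hadd, hzero]; exact E1.ext' (by simp) (by dsimp; rw [hz']; ring)
      add_zero := fun p => by rw [hadd, hzero]; exact E1.ext' (by simp) (by dsimp; rw [hz]; ring)
      add_comm := fun p q => by
        rw [hadd, hadd]; exact E1.ext' (by dsimp; ring) (by dsimp; rw [hsym p.a q.a]; ring)
      neg_add_cancel := fun p => by
        rw [hneg, hadd, hzero]
        exact E1.ext' (by dsimp; ring) (by dsimp; rw [hsym (-p.a) p.a]; ring)
      nsmul := nsmulRec
      zsmul := zsmulRec }
  let ι : ℝ →+ E1 Bb := AddMonoidHom.mk' (fun x => ⟨0, x⟩)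
    (by intro x y; rw [hadd]; exact E1.ext' (by simp) (by dsimp; rw [hz]; ring))
  have hι : Function.Injective ι := by
    intro x y h
    exact congrArg E1.e h
  obtain ⟨r, hr⟩ := (Module.Baer.of_divisible ℝ).injective.out
    ι.toIntLinearMap hι (LinearMap.id : ℝ →ₗ[ℤ] ℝ)
  refine ⟨fun x => r ⟨x, 0⟩, fun a b => ?_⟩
  have hi : ∀ c, ι c = (⟨0, c⟩ : E1 Bb) := fun _ => rfl
  have e1 : (⟨a, 0⟩ : E1 Bb) + ⟨b, 0⟩ = (⟨a + b, 0⟩ : E1 Bb) + ι (Bb a b) := by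
    rw [hi, hadd, hadd]
    exact E1.ext' (by dsimp; ring) (by dsimp; rw [hz (a + b)]; ring)
  have e2 := congrArg r e1
  rw [map_add, map_add] at e2
  have e3 : r (ι (Bb a b)) = Bb a b := hr (Bb a b)
  rw [e3] at e2
  linarith


noncomputable def Mx (B : ℝ → ℝ → ℝ) (a b : ℝ) : ℝ :=
  if 0 < a + b then -B (a + b) (-b) else if a + b < 0 then B (-a - b) a else 0

noncomputable def Bbar (B : ℝ → ℝ → ℝ) (a b : ℝ) : ℝ :=
  if 0 < a ∧ 0 < b then B a b
  else if a < 0 ∧ b < 0 then -B (-a) (-b)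
  else if 0 < a ∧ b < 0 then Mx B a b
  else if a < 0 ∧ 0 < b then Mx B b a
  else 0

section BbarLemmas

variable (B : ℝ → ℝ → ℝ)

theorem Mx_pos {a b : ℝ} (h : 0 < a + b) : Mx B a b = -B (a + b) (-b) := by
  unfold Mx; rw [if_pos h]

theorem Mx_neg {a b : ℝ} (h : a + b < 0) : Mx B a b = B (-a - b) a := by
  unfold Mx; rw [if_neg (by linarith), if_pos h]

theorem Mx_zero {a b : ℝ} (h : a + b = 0) : Mx B a b = 0 := by
  unfold Mx; rw [if_neg (by linarith), if_neg (by linarith)]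

theorem Bbar_pp {a b : ℝ} (ha : 0 < a) (hb : 0 < b) : Bbar B a b = B a b := by
  unfold Bbar; rw [if_pos ⟨ha, hb⟩]

theorem Bbar_nn {a b : ℝ} (ha : a < 0) (hb : b < 0) : Bbar B a b = -B (-a) (-b) := by
  unfold Bbar; rw [if_neg (by rintro ⟨h, _⟩; linarith), if_pos ⟨ha, hb⟩]

theorem Bbar_pn {a b : ℝ} (ha : 0 < a) (hb : b < 0) : Bbar B a b = Mx B a b := by
  unfold Bbar
  rw [if_neg (by rintro ⟨_, h⟩; linarith), if_neg (by rintro ⟨h, _⟩; linarith),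
    if_pos ⟨ha, hb⟩]

theorem Bbar_np {a b : ℝ} (ha : a < 0) (hb : 0 < b) : Bbar B a b = Mx B b a := by
  unfold Bbar
  rw [if_neg (by rintro ⟨h, _⟩; linarith), if_neg (by rintro ⟨_, h⟩; linarith),
    if_neg (by rintro ⟨h, _⟩; linarith), if_pos ⟨ha, hb⟩]

theorem Bbar_zl (b : ℝ) : Bbar B 0 b = 0 := by
  unfold Bbar
  rw [if_neg (by rintro ⟨h, _⟩; linarith), if_neg (by rintro ⟨h, _⟩; linarith),
    if_neg (by rintro ⟨h, _⟩; linarith), if_neg (by rintro ⟨h, _⟩; linarith)]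

theorem Bbar_zr (a : ℝ) : Bbar B a 0 = 0 := by
  unfold Bbar
  rw [if_neg (by rintro ⟨_, h⟩; linarith), if_neg (by rintro ⟨_, h⟩; linarith),
    if_neg (by rintro ⟨_, h⟩; linarith), if_neg (by rintro ⟨_, h⟩; linarith)]

theorem Bbar_neg (a b : ℝ) : Bbar B (-a) (-b) = -Bbar B a b := by
  rcases lt_trichotomy a 0 with ha | ha | ha
  · rcases lt_trichotomy b 0 with hb | hb | hb
    · rw [Bbar_pp B (by linarith) (by linarith), Bbar_nn B ha hb]; ring_nf
    · subst hb; rw [neg_zero, Bbar_zr, Bbar_zr]; ring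
    · -- a<0<b : -a>0, -b<0
      rw [Bbar_pn B (by linarith) (by linarith), Bbar_np B ha hb]
      rcases lt_trichotomy (b + a) 0 with hs | hs | hs
      · rw [Mx_pos B (by linarith : 0 < -a + -b), Mx_neg B hs]; ring_nf
      · rw [Mx_zero B (by linarith : -a + -b = 0), Mx_zero B hs]; ring
      · rw [Mx_neg B (by linarith : -a + -b < 0), Mx_pos B hs]; ring_nf
  · subst ha; rw [neg_zero, Bbar_zl, Bbar_zl]; ring
  · rcases lt_trichotomy b 0 with hb | hb | hb
    · -- a>0>b : -a<0, -b>0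
      rw [Bbar_np B (by linarith) (by linarith), Bbar_pn B ha hb]
      rcases lt_trichotomy (a + b) 0 with hs | hs | hs
      · rw [Mx_pos B (by linarith : 0 < -b + -a), Mx_neg B hs]; ring_nf
      · rw [Mx_zero B (by linarith : -b + -a = 0), Mx_zero B hs]; ring
      · rw [Mx_neg B (by linarith : -b + -a < 0), Mx_pos B hs]; ring_nf
    · subst hb; rw [neg_zero, Bbar_zr, Bbar_zr]; ring
    · rw [Bbar_nn B (by linarith) (by linarith), Bbar_pp B ha hb]; ring_nf

variable {B}
variable (hsymB : ∀ x y, 0 < x → 0 < y → B x y = B y x)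
variable (hcocB : ∀ x y z, 0 < x → 0 < y → 0 < z →
  B x y + B (x + y) z = B x (y + z) + B y z)

include hsymB in
theorem Bbar_symm (a b : ℝ) : Bbar B a b = Bbar B b a := by
  rcases lt_trichotomy a 0 with ha | ha | ha
  · rcases lt_trichotomy b 0 with hb | hb | hb
    · rw [Bbar_nn B ha hb, Bbar_nn B hb ha, hsymB (-a) (-b) (by linarith) (by linarith)]
    · subst hb; rw [Bbar_zl, Bbar_zr]
    · rw [Bbar_np B ha hb, Bbar_pn B hb ha]
  · subst ha; rw [Bbar_zl, Bbar_zr]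
  · rcases lt_trichotomy b 0 with hb | hb | hb
    · rw [Bbar_pn B ha hb, Bbar_np B hb ha]
    · subst hb; rw [Bbar_zl, Bbar_zr]
    · rw [Bbar_pp B ha hb, Bbar_pp B hb ha, hsymB a b ha hb]

include hsymB hcocB in
theorem key_ppp {u v w : ℝ} (hu : 0 < u) (hv : 0 < v) (hw : 0 < w) :
    Bbar B u v + Bbar B (u + v) w - Bbar B u (v + w) - Bbar B v w = 0 := by
  rw [Bbar_pp B hu hv, Bbar_pp B (by linarith) hw, Bbar_pp B hu (by linarith),
    Bbar_pp B hv hw]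
  have k := hcocB u v w hu hv hw
  linarith

include hsymB hcocB in
theorem key_ppn {u v w : ℝ} (hu : 0 < u) (hv : 0 < v) (hw : w < 0) :
    Bbar B u v + Bbar B (u + v) w - Bbar B u (v + w) - Bbar B v w = 0 := by
  have huv : 0 < u + v := by linarith
  rcases lt_trichotomy (v + w) 0 with hq | hq | hq
  · rcases lt_trichotomy (u + v + w) 0 with hs | hs | hs
    · rw [Bbar_pp B hu hv, Bbar_pn B huv hw, Mx_neg B (by linarith : (u+v)+w < 0),
        Bbar_pn B hu hq, Mx_neg B (by linarith : u+(v+w) < 0),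
        Bbar_pn B hv hw, Mx_neg B hq]
      have k := hcocB (-(u+v+w)) u v (by linarith) hu hv
      ring_nf at k ⊢
      linarith
    · rw [Bbar_pp B hu hv, Bbar_pn B huv hw, Mx_zero B (by linarith : (u+v)+w = 0),
        Bbar_pn B hu hq, Mx_zero B (by linarith : u+(v+w) = 0),
        Bbar_pn B hv hw, Mx_neg B hq]
      have e : -v - w = u := by linarith
      rw [e]; ring
    · rw [Bbar_pp B hu hv, Bbar_pn B huv hw, Mx_pos B (by linarith : 0 < (u+v)+w),
        Bbar_pn B hu hq, Mx_pos B (by linarith : 0 < u+(v+w)),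
        Bbar_pn B hv hw, Mx_neg B hq]
      have k := hcocB (u+v+w) (-(v+w)) v hs (by linarith) hv
      ring_nf at k ⊢; linarith
  · have hw' : w = -v := by linarith
    subst hw'
    rw [Bbar_pp B hu hv, Bbar_pn B huv (by linarith : -v < 0),
      Mx_pos B (by linarith : 0 < (u+v) + -v),
      show v + -v = (0:ℝ) from by ring, Bbar_zr,
      Bbar_pn B hv (by linarith : -v < 0), Mx_zero B (by ring)]
    ring_nf
  · rw [Bbar_pp B hu hv, Bbar_pn B huv hw, Mx_pos B (by linarith : 0 < (u+v)+w),
      Bbar_pp B hu hq, Bbar_pn B hv hw, Mx_pos B hq]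
    have k := hcocB u (v+w) (-w) hu hq (by linarith)
    ring_nf at k ⊢; linarith

include hsymB hcocB in
theorem key_pnp {u v w : ℝ} (hu : 0 < u) (hv : v < 0) (hw : 0 < w) :
    Bbar B u v + Bbar B (u + v) w - Bbar B u (v + w) - Bbar B v w = 0 := by
  rcases lt_trichotomy (u + v) 0 with hp | hp | hp
  · rcases lt_trichotomy (v + w) 0 with hq | hq | hq
    · rcases lt_trichotomy (u + v + w) 0 with hs | hs | hs
      · rw [Bbar_pn B hu hv, Mx_neg B hp,
          Bbar_np B hp hw, Mx_neg B (by linarith : w+(u+v) < 0),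
          Bbar_pn B hu hq, Mx_neg B (by linarith : u+(v+w) < 0),
          Bbar_np B hv hw, Mx_neg B (by linarith : w+v < 0)]
        have k1 := hcocB (-(u+v+w)) u w (by linarith) hu hw
        have k2 := hcocB (-(u+v+w)) w u (by linarith) hw hu
        have m := hsymB u w hu hw
        ring_nf at k1 k2 ⊢; linarith
      · have hv' : v = -(u+w) := by linarith
        subst hv'
        rw [Bbar_pn B hu (by linarith : -(u+w) < 0), Mx_neg B hp,
          Bbar_np B hp hw, Mx_zero B (by ring),
          Bbar_pn B hu (by linarith : -(u+w)+w < 0), Mx_zero B (by ring),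
          Bbar_np B (by linarith : -(u+w) < 0) hw, Mx_neg B (by linarith : w + -(u+w) < 0)]
        have m := hsymB u w hu hw
        ring_nf; linarith
      · rw [Bbar_pn B hu hv, Mx_neg B hp,
          Bbar_np B hp hw, Mx_pos B (by linarith : 0 < w+(u+v)),
          Bbar_pn B hu hq, Mx_pos B (by linarith : 0 < u+(v+w)),
          Bbar_np B hv hw, Mx_neg B (by linarith : w+v < 0)]
        have k1 := hcocB (u+v+w) (-(v+w)) w hs (by linarith) hw
        have k2 := hcocB (u+v+w) (-(u+v)) u hs (by linarith) hu
        have m := hsymB u w hu hw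
        ring_nf at k1 k2 ⊢; linarith
    · have hw' : w = -v := by linarith
      subst hw'
      rw [Bbar_pn B hu hv, Mx_neg B hp,
        Bbar_np B hp (by linarith : 0 < -v), Mx_pos B (by linarith : 0 < -v + (u+v)),
        show v + -v = (0:ℝ) from by ring, Bbar_zr,
        Bbar_np B hv (by linarith : 0 < -v), Mx_zero B (by ring)]
      have m := hsymB (-u-v) u (by linarith) hu
      ring_nf at m ⊢; linarith
    · rw [Bbar_pn B hu hv, Mx_neg B hp,
        Bbar_np B hp hw, Mx_pos B (by linarith : 0 < w+(u+v)),
        Bbar_pp B hu hq,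
        Bbar_np B hv hw, Mx_pos B (by linarith : 0 < w+v)]
      have k := hcocB (-(u+v)) u (v+w) (by linarith) hu hq
      have m1 := hsymB (-(u+v)) (u+(v+w)) (by linarith) (by linarith)
      have m2 := hsymB (-v) (v+w) (by linarith) hq
      ring_nf at k m1 m2 ⊢; linarith
  · have hv' : v = -u := by linarith
    subst hv'
    rw [Bbar_pn B hu (by linarith : -u < 0), Mx_zero B (by ring),
      show u + -u = (0:ℝ) from by ring, Bbar_zl]
    rcases lt_trichotomy (-u + w) 0 with hr | hr | hr
    · rw [Bbar_pn B hu hr, Mx_pos B (by linarith : 0 < u + (-u+w)),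
        Bbar_np B (by linarith : -u < 0) hw, Mx_neg B (by linarith : w + -u < 0)]
      have m := hsymB w (u-w) hw (by linarith)
      ring_nf at m ⊢; linarith
    · rw [show -u + w = (0:ℝ) from by linarith, Bbar_zr,
        Bbar_np B (by linarith : -u < 0) hw, Mx_zero B (by linarith)]
      ring
    · rw [Bbar_pp B hu hr, Bbar_np B (by linarith : -u < 0) hw,
        Mx_pos B (by linarith : 0 < w + -u)]
      have m := hsymB u (-u+w) hu hr
      ring_nf at m ⊢; linarith
  · rcases lt_trichotomy (v + w) 0 with hq | hq | hq
    · rw [Bbar_pn B hu hv, Mx_pos B (by linarith : 0 < u+v),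
        Bbar_pp B hp hw,
        Bbar_pn B hu hq, Mx_pos B (by linarith : 0 < u + (v+w)),
        Bbar_np B hv hw, Mx_neg B (by linarith : w+v < 0)]
      have k := hcocB (u+v) w (-(v+w)) hp hw (by linarith)
      have m := hsymB w (-(v+w)) hw (by linarith)
      ring_nf at k m ⊢; linarith
    · have hw' : w = -v := by linarith
      subst hw'
      rw [Bbar_pn B hu hv, Mx_pos B (by linarith : 0 < u+v),
        Bbar_pp B hp (by linarith : 0 < -v),
        show v + -v = (0:ℝ) from by ring, Bbar_zr,
        Bbar_np B hv (by linarith : 0 < -v), Mx_zero B (by ring)]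
      ring_nf
    · rw [Bbar_pn B hu hv, Mx_pos B (by linarith : 0 < u+v),
        Bbar_pp B hp hw, Bbar_pp B hu hq,
        Bbar_np B hv hw, Mx_pos B (by linarith : 0 < w+v)]
      have k := hcocB (u+v) (-v) (v+w) hp (by linarith) hq
      have m := hsymB (-v) (v+w) (by linarith) hq
      ring_nf at k m ⊢; linarith

include hsymB hcocB in
theorem Bbar_cocycle (u v w : ℝ) :
    Bbar B u v + Bbar B (u + v) w = Bbar B u (v + w) + Bbar B v w := by
  have hrev : ∀ a b c : ℝ,
      Bbar B a b + Bbar B (a + b) c - Bbar B a (b + c) - Bbar B b c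
        = -(Bbar B c b + Bbar B (c + b) a - Bbar B c (b + a) - Bbar B b a) := by
    intro a b c
    rw [Bbar_symm hsymB c b, Bbar_symm hsymB (c+b) a, show c + b = b + c from by ring,
      Bbar_symm hsymB c (b+a), show b + a = a + b from by ring, Bbar_symm hsymB b a]
    ring
  have hneg : ∀ a b c : ℝ,
      Bbar B a b + Bbar B (a + b) c - Bbar B a (b + c) - Bbar B b c
        = -(Bbar B (-a) (-b) + Bbar B (-a + -b) (-c) - Bbar B (-a) (-b + -c)
            - Bbar B (-b) (-c)) := by
    intro a b c
    rw [show -a + -b = -(a+b) from by ring, show -b + -c = -(b+c) from by ring,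
      Bbar_neg, Bbar_neg, Bbar_neg, Bbar_neg]
    ring
  suffices h : Bbar B u v + Bbar B (u + v) w - Bbar B u (v + w) - Bbar B v w = 0 by linarith
  rcases lt_trichotomy u 0 with hu | hu | hu
  · rcases lt_trichotomy v 0 with hv | hv | hv
    · rcases lt_trichotomy w 0 with hw | hw | hw
      · -- (-,-,-)
        rw [hneg]
        have := key_ppp hsymB hcocB (by linarith : (0:ℝ) < -u) (by linarith : (0:ℝ) < -v)
          (by linarith : (0:ℝ) < -w)
        linarith
      · subst hw
        rw [Bbar_zr, Bbar_zr, show v + 0 = v from by ring]; ring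
      · -- (-,-,+)
        rw [hrev, hneg w v u]
        have := hrev (-w) (-v) (-u)
        have hk := key_ppn hsymB hcocB (by linarith : (0:ℝ) < -u) (by linarith : (0:ℝ) < -v)
          (by linarith : -w < 0)
        linarith
    · subst hv
      rw [Bbar_zr, Bbar_zl, show u + 0 = u from by ring, show (0:ℝ) + w = w from by ring]; ring
    · rcases lt_trichotomy w 0 with hw | hw | hw
      · -- (-,+,-)
        rw [hneg]
        have := key_pnp hsymB hcocB (by linarith : (0:ℝ) < -u) (by linarith : -v < 0)
          (by linarith : (0:ℝ) < -w)
        linarith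
      · subst hw
        rw [Bbar_zr, Bbar_zr, show v + 0 = v from by ring]; ring
      · -- (-,+,+)
        rw [hrev]
        have := key_ppn hsymB hcocB hw hv hu
        linarith
  · subst hu
    rw [Bbar_zl, Bbar_zl, show (0:ℝ) + v = v from by ring]; ring
  · rcases lt_trichotomy v 0 with hv | hv | hv
    · rcases lt_trichotomy w 0 with hw | hw | hw
      · -- (+,-,-)
        rw [hneg, hrev (-u) (-v) (-w)]
        have := key_ppn hsymB hcocB (by linarith : (0:ℝ) < -w) (by linarith : (0:ℝ) < -v)
          (by linarith : -u < 0)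
        linarith
      · subst hw
        rw [Bbar_zr, Bbar_zr, show v + 0 = v from by ring]; ring
      · -- (+,-,+)
        exact key_pnp hsymB hcocB hu hv hw
    · subst hv
      rw [Bbar_zr, Bbar_zl, show u + 0 = u from by ring, show (0:ℝ) + w = w from by ring]; ring
    · rcases lt_trichotomy w 0 with hw | hw | hw
      · -- (+,+,-)
        exact key_ppn hsymB hcocB hu hv hw
      · subst hw
        rw [Bbar_zr, Bbar_zr, show v + 0 = v from by ring]; ring
      · exact key_ppp hsymB hcocB hu hv hw
end BbarLemmas




structure E2 (Rb : ℝ → ℝ → ℝ) where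
  a : ℝ
  e : ℝ

namespace E2

variable {Rb : ℝ → ℝ → ℝ}

theorem ext' {p q : E2 Rb} (h1 : p.a = q.a) (h2 : p.e = q.e) : p = q := by
  cases p; cases q; cases h1; cases h2; rfl

instance : Add (E2 Rb) := ⟨fun p q => ⟨p.a + q.a, p.e + q.e⟩⟩
instance : Zero (E2 Rb) := ⟨⟨0, 0⟩⟩
instance : Neg (E2 Rb) := ⟨fun p => ⟨-p.a, -p.e⟩⟩
instance : One (E2 Rb) := ⟨⟨1, 0⟩⟩

@[simp] theorem add_a (p q : E2 Rb) : (p + q).a = p.a + q.a := rfl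
@[simp] theorem add_e (p q : E2 Rb) : (p + q).e = p.e + q.e := rfl
@[simp] theorem zero_a : (0 : E2 Rb).a = 0 := rfl
@[simp] theorem zero_e : (0 : E2 Rb).e = 0 := rfl
@[simp] theorem one_a : (1 : E2 Rb).a = 1 := rfl
@[simp] theorem one_e : (1 : E2 Rb).e = 0 := rfl
@[simp] theorem neg_a (p : E2 Rb) : (-p).a = -p.a := rfl
@[simp] theorem neg_e (p : E2 Rb) : (-p).e = -p.e := rfl

instance : AddCommGroup (E2 Rb) :=
  { add_assoc := fun p q r => ext' (by simp; ring) (by simp; ring)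
    zero_add := fun p => ext' (by simp) (by simp)
    add_zero := fun p => ext' (by simp) (by simp)
    add_comm := fun p q => ext' (by simp; ring) (by simp; ring)
    neg_add_cancel := fun p => ext' (by simp) (by simp)
    nsmul := nsmulRec
    zsmul := zsmulRec }

def mul (Rb : ℝ → ℝ → ℝ) (p q : E2 Rb) : E2 Rb :=
  ⟨p.a * q.a, p.a * q.e + q.a * p.e + Rb p.a q.a⟩

@[simp] theorem mul_a (p q : E2 Rb) : (mul Rb p q).a = p.a * q.a := rfl
@[simp] theorem mul_e (p q : E2 Rb) : (mul Rb p q).e = p.a * q.e + q.a * p.e + Rb p.a q.a := rfl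

variable (Rb)
variable (hsym : ∀ a b, Rb a b = Rb b a)
variable (haddR : ∀ a x y, Rb a (x + y) = Rb a x + Rb a y)
variable (hcoc : ∀ a b c, Rb (a * b) c + c * Rb a b = Rb a (b * c) + a * Rb b c)
variable (hone : ∀ x, Rb 1 x = 0)

def commRing : CommRing (E2 Rb) := by
  have hzeroR : ∀ a, Rb a 0 = 0 := by
    intro a; have h := haddR a 0 0
    rw [add_zero] at h; linarith
  have hzeroL : ∀ b, Rb 0 b = 0 := fun b => (hsym 0 b).trans (hzeroR b)
  have honeR : ∀ a, Rb a 1 = 0 := fun a => (hsym a 1).trans (hone a)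
  have haddL : ∀ x a b, Rb (a + b) x = Rb a x + Rb b x := fun x a b => by
    rw [hsym, haddR, hsym x a, hsym x b]
  exact
  { (inferInstance : AddCommGroup (E2 Rb)) with
    mul := mul Rb
    one := 1
    mul_assoc := fun p q r => by
      refine ext' ?_ ?_
      case refine_1 =>
        show (mul Rb (mul Rb p q) r).a = (mul Rb p (mul Rb q r)).a
        simp only [mul_a]; ring
      show (mul Rb (mul Rb p q) r).e = (mul Rb p (mul Rb q r)).e
      simp only [mul_a, mul_e]
      linear_combination hcoc p.a q.a r.a
    one_mul := fun p => by
      refine ext' ?_ ?_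
      case refine_1 => show (mul Rb 1 p).a = p.a; simp
      show (mul Rb 1 p).e = p.e
      simp only [mul_e, one_a, one_e]
      rw [hone]; ring
    mul_one := fun p => by
      refine ext' ?_ ?_
      case refine_1 => show (mul Rb p 1).a = p.a; simp
      show (mul Rb p 1).e = p.e
      simp only [mul_e, one_a, one_e]
      rw [honeR]; ring
    left_distrib := fun p q r => by
      refine ext' ?_ ?_
      case refine_1 =>
        show (mul Rb p (q + r)).a = (mul Rb p q + mul Rb p r).a
        simp only [mul_a, add_a]; ring
      show (mul Rb p (q + r)).e = (mul Rb p q + mul Rb p r).e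
      simp only [mul_e, add_e, add_a]
      rw [haddR]; ring
    right_distrib := fun p q r => by
      refine ext' ?_ ?_
      case refine_1 =>
        show (mul Rb (p + q) r).a = (mul Rb p r + mul Rb q r).a
        simp only [mul_a, add_a]; ring
      show (mul Rb (p + q) r).e = (mul Rb p r + mul Rb q r).e
      simp only [mul_e, add_e, add_a]
      rw [haddL]; ring
    zero_mul := fun p => by
      refine ext' ?_ ?_
      case refine_1 => show (mul Rb 0 p).a = (0 : E2 Rb).a; simp
      show (mul Rb 0 p).e = 0
      simp only [mul_e, zero_a, zero_e]
      rw [hzeroL]; ring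
    mul_zero := fun p => by
      refine ext' ?_ ?_
      case refine_1 => show (mul Rb p 0).a = (0 : E2 Rb).a; simp
      show (mul Rb p 0).e = 0
      simp only [mul_e, zero_a, zero_e]
      rw [hzeroR]; ring
    mul_comm := fun p q => by
      refine ext' ?_ ?_
      case refine_1 =>
        show (mul Rb p q).a = (mul Rb q p).a
        simp only [mul_a]; ring
      show (mul Rb p q).e = (mul Rb q p).e
      simp only [mul_e]
      rw [hsym p.a q.a]; ring }

end E2

theorem exists_deriv (Rb : ℝ → ℝ → ℝ)
    (hsym : ∀ a b, Rb a b = Rb b a)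
    (haddR : ∀ a x y, Rb a (x + y) = Rb a x + Rb a y)
    (hcoc : ∀ a b c, Rb (a * b) c + c * Rb a b = Rb a (b * c) + a * Rb b c)
    (hone : ∀ x, Rb 1 x = 0) :
    ∃ h : ℝ → ℝ, (∀ a b, h (a + b) = h a + h b) ∧
      (∀ a b, h (a * b) = a * h b + b * h a + Rb a b) := by
  have hzeroR : ∀ a, Rb a 0 = 0 := by
    intro a; have h := haddR a 0 0
    rw [add_zero] at h; linarith
  have hzeroL : ∀ b, Rb 0 b = 0 := fun b => (hsym 0 b).trans (hzeroR b)
  have haddL : ∀ x a b, Rb (a + b) x = Rb a x + Rb b x := fun x a b => by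
    rw [hsym, haddR, hsym x a, hsym x b]
  have hrat : ∀ (q : ℚ) (c : ℝ), Rb (q : ℝ) c = 0 := by
    intro q c
    let g : ℝ →+ ℝ := AddMonoidHom.mk' (fun a => Rb a c) (fun a b => haddL c a b)
    have h1 : g ((q : ℚ) • (1 : ℝ)) = (q : ℚ) • g (1 : ℝ) := map_rat_smul g q 1
    have h2 : (q : ℚ) • (1 : ℝ) = (q : ℝ) := by
      rw [Rat.smul_one_eq_cast]
    have h3 : g (1 : ℝ) = 0 := hone c
    rw [h2, h3, smul_zero] at h1
    exact h1
  letI cring : CommRing (E2 Rb) := E2.commRing Rb hsym haddR hcoc hone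
  have hmul : ∀ p q : E2 Rb, p * q = E2.mul Rb p q := fun _ _ => rfl
  let ρ : ℚ →+* E2 Rb :=
    { toFun := fun q => ⟨(q : ℝ), 0⟩
      map_one' := by refine E2.ext' ?_ ?_ <;> simp <;> rfl
      map_mul' := fun q q' => by
        rw [hmul]
        refine (E2.ext' ?_ ?_).symm
        · simp
        · show (q:ℝ) * 0 + (q':ℝ) * 0 + Rb q q' = 0
          rw [hrat]; ring
      map_zero' := by
        refine E2.ext' ?_ ?_ <;> simp <;> rfl
      map_add' := fun q q' => by
        refine (E2.ext' ?_ ?_).symm <;> simp <;> change (_ : ℝ) + _ = _ <;> simp }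
  letI : Algebra ℚ (E2 Rb) := ρ.toAlgebra
  let π : E2 Rb →ₐ[ℚ] ℝ :=
    { toFun := E2.a
      map_one' := rfl
      map_mul' := fun p q => rfl
      map_zero' := rfl
      map_add' := fun p q => rfl
      commutes' := fun q => rfl }
  have hker : ∀ x : E2 Rb, x ∈ RingHom.ker (π : E2 Rb →+* ℝ) ↔ x.a = 0 := by
    intro x; exact RingHom.mem_ker
  have hI : RingHom.ker (π : E2 Rb →+* ℝ) ^ 2 = ⊥ := by
    rw [pow_two]
    refine le_antisymm ?_ bot_le
    rw [Ideal.mul_le]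
    intro p hp q hq
    rw [hker] at hp hq
    rw [Ideal.mem_bot]
    rw [hmul]
    refine E2.ext' ?_ ?_
    · show p.a * q.a = 0; rw [hp, hq]; ring
    · show p.a * q.e + q.a * p.e + Rb p.a q.a = 0
      rw [hp, hq, hzeroL]; ring
  have hsurj : Function.Surjective π := fun x => ⟨⟨x, 0⟩, rfl⟩
  haveI := fs_rat_real
  let s : ℝ →ₐ[ℚ] E2 Rb :=
    Algebra.FormallySmooth.liftOfSurjective (AlgHom.id ℚ ℝ) π hsurj ⟨2, hI⟩
  have hs : ∀ x : ℝ, (s x).a = x := fun x =>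
    Algebra.FormallySmooth.liftOfSurjective_apply (AlgHom.id ℚ ℝ) π hsurj ⟨2, hI⟩ x
  refine ⟨fun x => (s x).e, ?_, ?_⟩
  · intro a b
    have : s (a + b) = s a + s b := map_add s a b
    have := congrArg E2.e this
    simpa using this
  · intro a b
    have h1 : s (a * b) = s a * s b := map_mul s a b
    have h2 := congrArg E2.e h1
    rw [hmul] at h2
    show (s (a*b)).e = _
    rw [h2]
    show (s a).a * (s b).e + (s b).a * (s a).e + Rb (s a).a (s b).a = _
    rw [hs a, hs b]

end Stmt11Aux
open Stmt11Aux in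
theorem stmt_11 (f : ℝ → ℝ → ℝ → ℝ)
    (hsym1 : ∀ x y z : ℝ, f x y z = f y x z)
    (hsym2 : ∀ x y z : ℝ, f x y z = f x z y)
    (heq : ∀ x y z : ℝ, 0 < x → 0 < y → 0 < z →
      f x y z = f x (y + z) 0 + (y + z) * f 0 (y / (y + z)) (z / (y + z))) :
    ∃ l ψ : ℝ → ℝ,
      (∀ a b : ℝ, 0 < a → 0 < b → l (a * b) = l a + l b) ∧
      (∀ x y z : ℝ, 0 < x → 0 < y → 0 < z →
        f x y z = x * l x + y * l y + z * l z + ψ (x + y + z)) := by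
  set F : ℝ → ℝ → ℝ := fun x s => f x s 0 with hFdef
  set B : ℝ → ℝ → ℝ := fun y z => (y + z) * f 0 (y / (y + z)) (z / (y + z)) with hBdef
  have hC : ∀ u v w : ℝ, 0 < u → 0 < v → 0 < w → f u v w = F u (v + w) + B v w := by
    intro u v w hu hv hw
    simp only [hFdef, hBdef]
    exact heq u v w hu hv hw
  have hFsym : ∀ p q : ℝ, F p q = F q p := by
    intro p q; simp only [hFdef]; exact hsym1 p q 0
  have hBsym : ∀ y z : ℝ, 0 < y → 0 < z → B y z = B z y := by
    intro y z hy hz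
    simp only [hBdef]
    rw [hsym2 0 (y / (y + z)) (z / (y + z)), show z + y = y + z from by ring]
  have hCrel : ∀ u v w : ℝ, 0 < u → 0 < v → 0 < w →
      F u (v + w) - F v (u + w) = B u w - B v w := by
    intro u v w hu hv hw
    have h1 := hC u v w hu hv hw
    have h2 := hC v u w hv hu hw
    have h3 := hsym1 u v w
    linarith
  have hBcoc : ∀ x y z : ℝ, 0 < x → 0 < y → 0 < z →
      B x y + B (x + y) z = B x (y + z) + B y z := by
    intro x y z hx hy hz
    have k1 := hCrel y (y + z) x hy (by linarith) hx
    have k2 := hCrel (x + y) y z (by linarith) hy hz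
    have m0 := hFsym (x + y) (y + z)
    have m1 := hBsym y x hy hx
    have m2 := hBsym (y + z) x (by linarith) hx
    ring_nf at k1 k2 m0 m2 ⊢
    linarith
  have hBhom : ∀ t y z : ℝ, 0 < t → 0 < y → 0 < z → B (t * y) (t * z) = t * B y z := by
    intro t y z ht hy hz
    have hyz : y + z ≠ 0 := by positivity
    have ht' : t ≠ 0 := by positivity
    have e1 : t * y / (t * y + t * z) = y / (y + z) := by
      rw [show t * y + t * z = t * (y + z) from by ring, mul_div_mul_left y (y + z) ht']
    have e2 : t * z / (t * y + t * z) = z / (y + z) := by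
      rw [show t * y + t * z = t * (y + z) from by ring, mul_div_mul_left z (y + z) ht']
    simp only [hBdef]
    rw [e1, e2]; ring
  -- potential for the extended cocycle
  obtain ⟨φ, hφ⟩ := exists_potential (Bbar B) (fun a b => Bbar_symm hBsym a b) (Bbar_zr B)
    (fun a b c => Bbar_cocycle hBsym hBcoc a b c)
  have hφpos : ∀ a b : ℝ, 0 < a → 0 < b → φ a + φ b - φ (a + b) = B a b := by
    intro a b ha hb
    rw [hφ a b, Bbar_pp B ha hb]
  -- the symmetric 2-cocycle R for the multiplicative structure
  set R : ℝ → ℝ → ℝ := fun a x => φ (a * x) - a * φ x - x * φ a + a * x * φ 1 with hRdef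
  have hRsym : ∀ a x, R a x = R x a := by
    intro a x; simp only [hRdef]; rw [mul_comm a x]; ring
  have hRcoc : ∀ a b c, R (a * b) c + c * R a b = R a (b * c) + a * R b c := by
    intro a b c; simp only [hRdef]; rw [mul_assoc a b c]; ring
  have hRone : ∀ x, R 1 x = 0 := by
    intro x; simp only [hRdef]; rw [one_mul]; ring
  have hRadd2 : ∀ a, 0 < a → ∀ x y, 0 < x → 0 < y → R a (x + y) = R a x + R a y := by
    intro a ha x y hx hy
    have h1 := hφpos (a * x) (a * y) (by positivity) (by positivity)
    have h2 := hφpos x y hx hy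
    have h3 := hBhom a x y ha hx hy
    simp only [hRdef]
    rw [show a * (x + y) = a * x + a * y from by ring]
    linear_combination (-1 : ℝ) * h1 - h3 + a * h2
  have hRadd1 : ∀ y, 0 < y → ∀ t u, 0 < t → 0 < u → R (t + u) y = R t y + R u y := by
    intro y hy t u ht hu
    rw [hRsym (t + u) y, hRadd2 y hy t u ht hu, hRsym y t, hRsym y u]
  -- biadditive extension of R to all of ℝ
  set Rb : ℝ → ℝ → ℝ := fun a x => pext (fun t => pext (R t) x) a with hRbdef
  have houteradd : ∀ x : ℝ, ∀ t u, 0 < t → 0 < u →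
      pext (R (t + u)) x = pext (R t) x + pext (R u) x := by
    intro x t u ht hu
    have hc : (0:ℝ) < |x| + 1 := by positivity
    have hxc : 0 < x + (|x| + 1) := by have := neg_le_abs x; linarith
    unfold pext
    rw [hRadd1 _ hxc t u ht hu, hRadd1 _ hc t u ht hu]
    ring
  have hRb_pos : ∀ a x, 0 < a → 0 < x → Rb a x = R a x := by
    intro a x ha hx
    simp only [hRbdef]
    rw [pext_pos (houteradd x) ha, pext_pos (hRadd2 a ha) hx]
  have hRb_addL : ∀ x a b : ℝ, Rb (a + b) x = Rb a x + Rb b x := by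
    intro x a b
    simp only [hRbdef]
    exact pext_add (houteradd x) a b
  have hRb_def2 : ∀ a x, Rb a x = pext (R (a + (|a| + 1))) x - pext (R (|a| + 1)) x :=
    fun a x => rfl
  have hRb_addR : ∀ a x y : ℝ, Rb a (x + y) = Rb a x + Rb a y := by
    intro a x y
    have h1 : (0:ℝ) < |a| + 1 := by positivity
    have h2 : 0 < a + (|a| + 1) := by have := neg_le_abs a; linarith
    rw [hRb_def2, hRb_def2, hRb_def2]
    rw [pext_add (hRadd2 _ h2) x y, pext_add (hRadd2 _ h1) x y]
    ring
  have hRb_symm : ∀ a x, Rb a x = Rb x a := by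
    have step1 : ∀ x, 0 < x → ∀ a, Rb a x - Rb x a = 0 := by
      intro x hx
      refine add_vanish (g := fun a => Rb a x - Rb x a) ?_ ?_
      · intro a b
        rw [hRb_addL, hRb_addR]; ring
      · intro a ha
        rw [hRb_pos a x ha hx, hRb_pos x a hx ha, hRsym a x]; ring
    have step2 : ∀ a x, Rb a x - Rb x a = 0 := by
      intro a
      refine add_vanish (g := fun x => Rb a x - Rb x a) ?_ ?_
      · intro x y
        rw [hRb_addR, hRb_addL]; ring
      · intro x hx
        have := step1 x hx a
        linarith
    intro a x
    have := step2 a x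
    linarith
  have hRb_one : ∀ x, Rb 1 x = 0 := by
    intro x
    simp only [hRbdef]
    rw [pext_pos (houteradd x) one_pos]
    unfold pext
    rw [hRone, hRone]; ring
  have hRb_coc : ∀ a b x, Rb (a * b) x + x * Rb a b = Rb a (b * x) + a * Rb b x := by
    have c1 : ∀ a b x, 0 < a → 0 < b → 0 < x →
        Rb (a * b) x + x * Rb a b - Rb a (b * x) - a * Rb b x = 0 := by
      intro a b x ha hb hx
      rw [hRb_pos _ _ (by positivity) hx, hRb_pos _ _ ha hb,
        hRb_pos _ _ ha (by positivity), hRb_pos _ _ hb hx]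
      have := hRcoc a b x
      linarith
    have c2 : ∀ a b, 0 < a → 0 < b → ∀ x,
        Rb (a * b) x + x * Rb a b - Rb a (b * x) - a * Rb b x = 0 := by
      intro a b ha hb
      refine add_vanish (g := fun x => Rb (a * b) x + x * Rb a b - Rb a (b * x) - a * Rb b x)
        ?_ ?_
      · intro x y
        rw [hRb_addR, show b * (x + y) = b * x + b * y from by ring, hRb_addR, hRb_addR]
        ring
      · intro x hx; exact c1 a b x ha hb hx
    have c3 : ∀ a, 0 < a → ∀ b x,
        Rb (a * b) x + x * Rb a b - Rb a (b * x) - a * Rb b x = 0 := by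
      intro a ha b x
      revert x
      suffices h : ∀ x, (fun b => Rb (a * b) x + x * Rb a b - Rb a (b * x) - a * Rb b x) b = 0 by
        intro x; exact h x
      intro x
      revert b
      refine add_vanish (g := fun b => Rb (a * b) x + x * Rb a b - Rb a (b * x) - a * Rb b x)
        ?_ ?_
      · intro b c
        rw [show a * (b + c) = a * b + a * c from by ring, hRb_addL, hRb_addR,
          show (b + c) * x = b * x + c * x from by ring, hRb_addR, hRb_addL]
        ring
      · intro b hb; exact c2 a b ha hb x
    have c4 : ∀ a b x, Rb (a * b) x + x * Rb a b - Rb a (b * x) - a * Rb b x = 0 := by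
      intro a b x
      revert b x
      suffices h : ∀ b x, (fun a => Rb (a * b) x + x * Rb a b - Rb a (b * x) - a * Rb b x) a = 0 by
        intro b x; exact h b x
      intro b x
      revert a
      refine add_vanish (g := fun a => Rb (a * b) x + x * Rb a b - Rb a (b * x) - a * Rb b x)
        ?_ ?_
      · intro a c
        rw [show (a + c) * b = a * b + c * b from by ring, hRb_addL, hRb_addL, hRb_addL]
        ring
      · intro a ha; exact c3 a ha b x
    intro a b x
    have := c4 a b x
    linarith
  -- the derivation h
  obtain ⟨hh, hhadd, hhmul⟩ := exists_deriv Rb hRb_symm hRb_addR hRb_coc hRb_one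
  -- Λ x = x * l x
  set Λ : ℝ → ℝ := fun x => φ x - x * φ 1 - hh x with hΛdef
  have hΛmul : ∀ a b : ℝ, 0 < a → 0 < b → Λ (a * b) = a * Λ b + b * Λ a := by
    intro a b ha hb
    have k := hhmul a b
    have r := hRb_pos a b ha hb
    rw [r, hRdef] at k
    simp only [hΛdef]
    rw [k]; ring
  have hΛdelta : ∀ x y : ℝ, 0 < x → 0 < y → Λ x + Λ y - Λ (x + y) = B x y := by
    intro x y hx hy
    simp only [hΛdef]
    rw [hhadd x y]
    linear_combination hφpos x y hx hy
  set ψv : ℝ → ℝ := fun T => F (T / 2) (T / 2) - Λ (T / 2) - Λ (T / 2) with hψdef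
  have hswap : ∀ u v w : ℝ, 0 < u → 0 < v → 0 < w →
      F u (v + w) - Λ u - Λ (v + w) = F v (u + w) - Λ v - Λ (u + w) := by
    intro u v w hu hv hw
    have k := hCrel u v w hu hv hw
    have b1 := hΛdelta u w hu hw
    have b2 := hΛdelta v w hv hw
    linarith
  have hconst : ∀ x s : ℝ, 0 < x → 0 < s →
      F x s - Λ x - Λ s = ψv (x + s) := by
    intro x s hx hs
    have hT2 : 0 < (x + s) / 2 := by linarith
    have hmin : 0 < min s ((x + s) / 2) := lt_min hs hT2
    set ε := min s ((x + s) / 2) / 2 with he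
    have hε : 0 < ε := by rw [he]; linarith
    have hεs : ε < s := by
      have h1 : min s ((x + s) / 2) ≤ s := min_le_left _ _
      rw [he]; linarith
    have hεT : ε < (x + s) / 2 := by
      have h1 : min s ((x + s) / 2) ≤ (x + s) / 2 := min_le_right _ _
      rw [he]; linarith
    have e1 : F x s - Λ x - Λ s = F ε (x + s - ε) - Λ ε - Λ (x + s - ε) := by
      have k := hswap x ε (s - ε) hx hε (by linarith)
      rw [show ε + (s - ε) = s from by ring, show x + (s - ε) = x + s - ε from by ring] at k
      exact k
    have e2 : F ((x+s)/2) ((x+s)/2) - Λ ((x+s)/2) - Λ ((x+s)/2)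
        = F ε (x + s - ε) - Λ ε - Λ (x + s - ε) := by
      have k := hswap ((x+s)/2) ε ((x+s)/2 - ε) hT2 hε (by linarith)
      rw [show ε + ((x+s)/2 - ε) = (x+s)/2 from by ring,
        show (x+s)/2 + ((x+s)/2 - ε) = x + s - ε from by ring] at k
      exact k
    simp only [hψdef]
    rw [e1, ← e2]
  refine ⟨fun x => Λ x / x, ψv, ?_, ?_⟩
  · intro a b ha hb
    simp only
    rw [hΛmul a b ha hb]
    field_simp
    ring
  · intro x y z hx hy hz
    simp only
    have h1 := hC x y z hx hy hz
    have h2 := hΛdelta y z hy hz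
    have h3 := hconst x (y + z) hx (by linarith)
    have hxl : x * (Λ x / x) = Λ x := by field_simp
    have hyl : y * (Λ y / y) = Λ y := by field_simp
    have hzl : z * (Λ z / z) = Λ z := by field_simp
    rw [hxl, hyl, hzl, show x + y + z = x + (y + z) from by ring, ← h3]
    linarith
end

section
/- Let μ ≡ 1 and let f : [0,∞)³ → ℝ be symmetric satisfying f(x,y,z) = f(x, y+z, 0) + f(0, y/(y+z), z/(y+z)) for all x, y, z > 0. Then there exists ψ : (0,∞) → ℝ such that f(x,y,z) = ψ(x+y+z) for all x, y, z > 0. -/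
theorem stmt_12 (f : ℝ → ℝ → ℝ → ℝ)
    (hsym1 : ∀ x y z : ℝ, f x y z = f y x z)
    (hsym2 : ∀ x y z : ℝ, f x y z = f x z y)
    (heq : ∀ x y z : ℝ, 0 < x → 0 < y → 0 < z →
      f x y z = f x (y + z) 0 + f 0 (y / (y + z)) (z / (y + z))) :
    ∃ ψ : ℝ → ℝ, ∀ x y z : ℝ, 0 < x → 0 < y → 0 < z →
      f x y z = ψ (x + y + z) := by
  set g : ℝ → ℝ := fun t => f 0 t (1 - t) with hgdef
  have hgx : ∀ t : ℝ, g t = f 0 t (1 - t) := fun t => rfl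
  -- decomposition
  have hdec : ∀ x y z : ℝ, 0 < x → 0 < y → 0 < z →
      f x y z = f 0 x (y + z) + g (y / (y + z)) := by
    intro x y z hx hy hz
    have hyz : (0:ℝ) < y + z := by linarith
    have h := heq x y z hx hy hz
    have h1 : f x (y + z) 0 = f 0 x (y + z) := by
      rw [hsym2 x (y+z) 0, hsym1 x 0 (y+z)]
    have h2 : z / (y + z) = 1 - y / (y + z) := by field_simp; ring
    rw [h1, h2] at h
    exact h
  -- symmetry of g
  have hsymg : ∀ t : ℝ, 0 < t → t < 1 → g t = g (1 - t) := by
    intro t ht ht1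
    have h1t : (0:ℝ) < 1 - t := by linarith
    have e1 := hdec 1 t (1 - t) one_pos ht h1t
    have e2 := hdec 1 (1 - t) t one_pos h1t ht
    rw [show t + (1 - t) = (1:ℝ) by ring] at e1
    rw [show (1 - t) + t = (1:ℝ) by ring] at e2
    rw [div_one] at e1 e2
    have hl : f 1 t (1 - t) = f 1 (1 - t) t := hsym2 1 t (1 - t)
    linarith
  -- key identity
  have hstar : ∀ x p : ℝ, 0 < x → x < p → p < 1 →
      g x + g ((p - x) / (1 - x)) = g (1 - p) + g (x / p) := by
    intro x p hx hxp hp1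
    have hy : 0 < p - x := by linarith
    have hz : 0 < 1 - p := by linarith
    have e1 := hdec x (p - x) (1 - p) hx hy hz
    have e2 := hdec (1 - p) x (p - x) hz hx hy
    have hlink : f (1 - p) x (p - x) = f x (p - x) (1 - p) :=
      (hsym1 (1 - p) x (p - x)).trans (hsym2 x (1 - p) (p - x))
    rw [show (p - x) + (1 - p) = 1 - x by ring] at e1
    rw [show x + (p - x) = p by ring, hlink] at e2
    rw [← hgx x] at e1
    have hfp : f 0 (1 - p) p = g (1 - p) := by
      rw [hgx (1 - p), show (1:ℝ) - (1 - p) = p by ring]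
    rw [hfp] at e2
    linarith
  -- squaring invariance
  have hsq : ∀ p : ℝ, 0 < p → p < 1 → g (p * p) = g p := by
    intro p hp hp1
    have h1p : (0:ℝ) < 1 + p := by linarith
    have h1p' : (1:ℝ) + p ≠ 0 := ne_of_gt h1p
    have hx : 0 < p / (1 + p) := by positivity
    have hxp : p / (1 + p) < p := by
      rw [div_lt_iff₀ h1p]; nlinarith
    have h := hstar (p / (1 + p)) p hx hxp hp1
    have ea : (p - p / (1 + p)) / (1 - p / (1 + p)) = p * p := by
      have hne : 1 - p / (1 + p) ≠ 0 := by
        rw [show (1:ℝ) - p / (1 + p) = 1 / (1 + p) by field_simp; ring]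
        positivity
      rw [div_eq_iff hne]
      field_simp
      ring
    have eb : p / (1 + p) / p = 1 / (1 + p) := by
      field_simp
    rw [ea, eb] at h
    have hs1 : g (p / (1 + p)) = g (1 / (1 + p)) := by
      have := hsymg (p / (1 + p)) hx (by rw [div_lt_one h1p]; linarith)
      rw [show (1:ℝ) - p / (1 + p) = 1 / (1 + p) by field_simp; ring] at this
      exact this
    have hs2 : g p = g (1 - p) := hsymg p hp hp1
    linarith
  -- g(p/(1+p)) = g p
  have hA : ∀ p : ℝ, 0 < p → p < 1 → g (p / (1 + p)) = g p := by
    intro p hp hp1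
    have h1p : (0:ℝ) < 1 + p := by linarith
    have h1p' : (1:ℝ) + p ≠ 0 := ne_of_gt h1p
    have hx : 0 < p * p := by positivity
    have hxp : p * p < p := by nlinarith
    have h := hstar (p * p) p hx hxp hp1
    have ea : (p - p * p) / (1 - p * p) = p / (1 + p) := by
      rw [show p - p * p = p * (1 - p) by ring, show 1 - p * p = (1 + p) * (1 - p) by ring]
      rw [mul_div_mul_right _ _ (by linarith : (1:ℝ) - p ≠ 0)]
    have eb : p * p / p = p := by field_simp
    rw [ea, eb] at h
    have hs2 : g p = g (1 - p) := hsymg p hp hp1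
    have hsqp := hsq p hp hp1
    linarith
  -- doubling identity
  have hH : ∀ x : ℝ, 0 < x → x < 1/2 → 2 * g x = g (2 * x) + g (1/2) := by
    intro x hx hx2
    have h := hstar x (2 * x) hx (by linarith) (by linarith)
    have ea : (2 * x - x) / (1 - x) = x / (1 - x) := by ring_nf
    have eb : x / (2 * x) = 1/2 := by
      rw [show 2 * x = x * 2 by ring, div_mul_eq_div_div]
      rw [div_self (ne_of_gt hx)]
    rw [ea, eb] at h
    -- g (x/(1-x)) = g x via hA at p = x/(1-x)
    have h1x : (0:ℝ) < 1 - x := by linarith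
    have hp : 0 < x / (1 - x) := by positivity
    have hp1 : x / (1 - x) < 1 := by rw [div_lt_one h1x]; linarith
    have hAx := hA (x / (1 - x)) hp hp1
    have ec : x / (1 - x) / (1 + x / (1 - x)) = x := by
      rw [show 1 + x / (1 - x) = 1 / (1 - x) by field_simp; ring]
      field_simp
    rw [ec] at hAx
    have hs : g (2 * x) = g (1 - 2 * x) := hsymg (2 * x) (by linarith) (by linarith)
    linarith
  -- g is constant on (0,1)
  have hconst : ∀ x : ℝ, 0 < x → x < 1 → g x = g (1/2) := by
    have key : ∀ x : ℝ, 0 < x → x < 1/2 → g x = g (1/2) := by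
      intro x hx hx2
      have h1 := hH x hx hx2
      have h2 := hH (x * x) (by positivity) (by nlinarith)
      have h3 := hH (2 * (x * x)) (by positivity) (by nlinarith)
      have e1 := hsq x hx (by linarith)
      have e2 := hsq (2 * x) (by linarith) (by linarith)
      rw [show 2 * x * (2 * x) = 2 * (2 * (x * x)) by ring] at e2
      linarith
    intro x hx hx1
    rcases lt_trichotomy x (1/2) with h | h | h
    · exact key x hx h
    · rw [h]
    · have hs := hsymg x hx hx1
      rw [hs]
      exact key (1 - x) (by linarith) (by linarith)
  -- swap lemma for the first slot
  have hswap : ∀ x y z : ℝ, 0 < x → 0 < y → 0 < z →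
      f 0 x (y + z) = f 0 y (x + z) := by
    intro x y z hx hy hz
    have e1 := hdec x y z hx hy hz
    have e2 := hdec y x z hy hx hz
    rw [← hsym1 x y z] at e2
    have hyz : (0:ℝ) < y + z := by linarith
    have hxz : (0:ℝ) < x + z := by linarith
    have c1 : g (y / (y + z)) = g (1/2) :=
      hconst _ (by positivity) (by rw [div_lt_one hyz]; linarith)
    have c2 : g (x / (x + z)) = g (1/2) :=
      hconst _ (by positivity) (by rw [div_lt_one hxz]; linarith)
    linarith
  -- conclusion
  refine ⟨fun s => f 0 (s/2) (s/2) + g (1/2), ?_⟩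
  intro x y z hx hy hz
  have hyz : (0:ℝ) < y + z := by linarith
  have e := hdec x y z hx hy hz
  have c1 : g (y / (y + z)) = g (1/2) :=
    hconst _ (by positivity) (by rw [div_lt_one hyz]; linarith)
  set s := x + y + z with hs
  set w := min (y + z) (s/2) / 2 with hw
  have hw0 : 0 < w := by
    have : 0 < s/2 := by simp only [hs]; linarith
    simp only [hw]
    have := lt_min hyz this
    positivity
  have hwyz : w < y + z := by
    have h1 : w ≤ (y + z) / 2 := by
      simp only [hw]; gcongr; exact min_le_left _ _
    linarith
  have hws2 : w < s / 2 := by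
    have h1 : w ≤ (s/2) / 2 := by
      simp only [hw]; gcongr; exact min_le_right _ _
    have : 0 < s/2 := by simp only [hs]; linarith
    linarith
  have step1 := hswap x w ((y + z) - w) hx hw0 (by linarith)
  rw [show w + ((y + z) - w) = y + z by ring, show x + ((y + z) - w) = s - w by
    simp only [hs]; ring] at step1
  have step2 := hswap w (s/2) (s/2 - w) hw0 (by simp only [hs]; linarith) (by linarith)
  rw [show s/2 + (s/2 - w) = s - w by ring, show w + (s/2 - w) = s/2 by ring] at step2
  rw [e, c1, step1, step2]
end

section
/- Let μ : (0,∞) → ℝ be multiplicative but neither identically 1 nor additive (i.e., not a projection), and let f : [0,∞)³ → ℝ be symmetric satisfying f(x,y,z) = f(x, y+z, 0) + μ(y+z)·f(0, y/(y+z), z/(y+z)) for all x, y, z > 0. Then there exist a constant b ∈ ℝ and a function ψ : (0,∞) → ℝ such that f(x,y,z) = b(μ(x) + μ(y) + μ(z)) + ψ(x+y+z) for all x, y, z > 0. -/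
theorem stmt_13 (μ : ℝ → ℝ) (f : ℝ → ℝ → ℝ → ℝ)
    (hmul : ∀ x y : ℝ, 0 < x → 0 < y → μ (x * y) = μ x * μ y)
    (hnot1 : ¬ (∀ x : ℝ, 0 < x → μ x = 1))
    (hnotadd : ¬ (∀ x y : ℝ, 0 < x → 0 < y → μ (x + y) = μ x + μ y))
    (hsym1 : ∀ x y z : ℝ, f x y z = f y x z)
    (hsym2 : ∀ x y z : ℝ, f x y z = f x z y)
    (heq : ∀ x y z : ℝ, 0 < x → 0 < y → 0 < z →
      f x y z = f x (y + z) 0 + μ (y + z) * f 0 (y / (y + z)) (z / (y + z))) :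
    ∃ (b : ℝ) (ψ : ℝ → ℝ), ∀ x y z : ℝ, 0 < x → 0 < y → 0 < z →
      f x y z = b * (μ x + μ y + μ z) + ψ (x + y + z) := by
  -- μ is nonnegative on positives
  have hnn : ∀ x : ℝ, 0 < x → 0 ≤ μ x := by
    intro x hx
    have hs : 0 < Real.sqrt x := Real.sqrt_pos.2 hx
    have h := hmul (Real.sqrt x) (Real.sqrt x) hs hs
    rw [Real.mul_self_sqrt hx.le] at h
    rw [h]
    exact mul_self_nonneg _
  -- μ never vanishes on positives
  have hne : ∀ x : ℝ, 0 < x → μ x ≠ 0 := by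
    intro x hx h0
    apply hnotadd
    have key : ∀ c : ℝ, 0 < c → μ c = 0 := by
      intro c hc
      have hx0 : x ≠ 0 := ne_of_gt hx
      have h := hmul x (c / x) hx (div_pos hc hx)
      rw [show x * (c / x) = c by field_simp] at h
      rw [h0, zero_mul] at h
      exact h
    intro a c ha hc
    rw [key a ha, key c hc, key (a + c) (by linarith)]
    norm_num
  have hpos : ∀ x : ℝ, 0 < x → 0 < μ x := fun x hx => (hnn x hx).lt_of_ne ((hne x hx).symm)
  have h1 : μ 1 = 1 := by
    have h := hmul 1 1 one_pos one_pos
    rw [mul_one] at h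
    exact (mul_left_cancel₀ (hne 1 one_pos) (by rw [← h, mul_one])).symm
  -- recursion for μ of quotients
  have hrec : ∀ c d : ℝ, 0 < c → 0 < d → μ c * μ (d / c) = μ d := by
    intro c d hc hd
    have hc0 : c ≠ 0 := ne_of_gt hc
    rw [← hmul c (d / c) hc (div_pos hd hc)]
    congr 1
    field_simp
  -- rewrite heq using the symmetric H-form
  have heq' : ∀ x y z : ℝ, 0 < x → 0 < y → 0 < z →
      f x y z = f x (y + z) 0 + μ (y + z) * f 0 (y / (y + z)) (1 - y / (y + z)) := by
    intro x y z hx hy hz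
    have hyz : y + z ≠ 0 := by positivity
    have h := heq x y z hx hy hz
    rw [show z / (y + z) = 1 - y / (y + z) by field_simp; ring] at h
    exact h
  have fsym3 : ∀ x y z : ℝ, f x y z = f z y x := by
    intro x y z
    rw [hsym1, hsym2, hsym1]
  -- basic relation
  have Rel0 : ∀ y u v : ℝ, 0 < y → y < u → y < v →
      f (v - y) u 0 + μ u * f 0 (y / u) (1 - y / u)
        = f (u - y) v 0 + μ v * f 0 (y / v) (1 - y / v) := by
    intro y u v hy hu hv
    have hx : 0 < v - y := by linarith
    have hz : 0 < u - y := by linarith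
    have e1 := heq' (v - y) y (u - y) hx hy hz
    have e2 := heq' (u - y) y (v - y) hz hy hx
    rw [show y + (u - y) = u by ring] at e1
    rw [show y + (v - y) = v by ring] at e2
    have e3 := fsym3 (v - y) y (u - y)
    linarith
  -- the parametric fundamental equation of information
  have FEI : ∀ x p : ℝ, 0 < x → 0 < p → x + p < 1 →
      f 0 x (1 - x) + μ (1 - x) * f 0 (p / (1 - x)) (1 - p / (1 - x))
        = f 0 p (1 - p) + μ (1 - p) * f 0 (x / (1 - p)) (1 - x / (1 - p)) := by
    intro x p hx hp hxp
    have hA := Rel0 p (1 - x) 1 hp (by linarith) (by linarith)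
    have hB := Rel0 x (1 - p) 1 hx (by linarith) (by linarith)
    simp only [div_one] at hA hB
    rw [h1, one_mul] at hA hB
    rw [show (1 : ℝ) - p - x = 1 - x - p by ring] at hB
    have hs := hsym1 (1 - p) (1 - x) 0
    linarith
  -- the key identity
  have KEY : ∀ a c : ℝ, 0 < a → a < 1 → 0 < c → c < 1 →
      f 0 a (1 - a) * (1 - μ c - μ (1 - c)) = f 0 c (1 - c) * (1 - μ a - μ (1 - a)) := by
    intro a c ha ha1 hc hc1
    have h1a : 0 < 1 - a := by linarith
    have h1c : 0 < 1 - c := by linarith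
    have hD : 0 < 1 - a * c := by nlinarith
    have hDne : (1 : ℝ) - a * c ≠ 0 := ne_of_gt hD
    have ha0 : a ≠ 0 := ne_of_gt ha
    have hc0 : c ≠ 0 := ne_of_gt hc
    have h1ane : (1 : ℝ) - a ≠ 0 := ne_of_gt h1a
    have h1cne : (1 : ℝ) - c ≠ 0 := ne_of_gt h1c
    have hF1 := FEI (1 - a) (a * c) h1a (mul_pos ha hc) (by nlinarith)
    rw [show (1 : ℝ) - (1 - a) = a by ring] at hF1
    rw [show a * c / a = c from mul_div_cancel_left₀ c ha0] at hF1
    have hF2 := FEI (1 - c) (c * a) h1c (mul_pos hc ha) (by nlinarith)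
    rw [show (1 : ℝ) - (1 - c) = c by ring] at hF2
    rw [show c * a / c = a from mul_div_cancel_left₀ a hc0] at hF2
    rw [show c * a = a * c by ring] at hF2
    have hX : 0 < a * (1 - c) / (1 - a * c) := div_pos (mul_pos ha h1c) hD
    have hY : 0 < c * (1 - a) / (1 - a * c) := div_pos (mul_pos hc h1a) hD
    have hXY : a * (1 - c) / (1 - a * c) + c * (1 - a) / (1 - a * c) < 1 := by
      rw [← add_div, div_lt_one hD]
      nlinarith [mul_pos h1a h1c]
    have hF3 := FEI (a * (1 - c) / (1 - a * c)) (c * (1 - a) / (1 - a * c)) hX hY hXY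
    rw [show (1 : ℝ) - a * (1 - c) / (1 - a * c) = (1 - a) / (1 - a * c) by
      field_simp; ring] at hF3
    rw [show (1 : ℝ) - c * (1 - a) / (1 - a * c) = (1 - c) / (1 - a * c) by
      rw [eq_div_iff hDne, sub_mul, div_mul_cancel₀ _ hDne]; ring] at hF3
    rw [show c * (1 - a) / (1 - a * c) / ((1 - a) / (1 - a * c)) = c by
      rw [div_div_div_cancel_right₀ hDne, mul_div_assoc, div_self h1ane, mul_one]] at hF3
    rw [show a * (1 - c) / (1 - a * c) / ((1 - c) / (1 - a * c)) = a by
      field_simp] at hF3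
    have e1 : f 0 (a * (1 - c) / (1 - a * c)) ((1 - a) / (1 - a * c))
        = f 0 ((1 - a) / (1 - a * c)) (1 - (1 - a) / (1 - a * c)) := by
      rw [hsym2]
      congr 1
      field_simp
      ring
    have e2 : f 0 (c * (1 - a) / (1 - a * c)) ((1 - c) / (1 - a * c))
        = f 0 ((1 - c) / (1 - a * c)) (1 - (1 - c) / (1 - a * c)) := by
      rw [hsym2]
      congr 1
      rw [eq_sub_iff_add_eq, ← add_div, div_eq_one_iff_eq hDne]; ring
    rw [e1, e2] at hF3
    have hrec1 : μ (1 - a * c) * μ ((1 - a) / (1 - a * c)) = μ (1 - a) :=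
      hrec (1 - a * c) (1 - a) hD h1a
    have hrec2 : μ (1 - a * c) * μ ((1 - c) / (1 - a * c)) = μ (1 - c) :=
      hrec (1 - a * c) (1 - c) hD h1c
    have hsA : f 0 (1 - a) a = f 0 a (1 - a) := by rw [hsym2]
    have hsC : f 0 (1 - c) c = f 0 c (1 - c) := by rw [hsym2]
    linear_combination hF1 - hF2 + μ (1 - a * c) * hF3
      - f 0 c (1 - c) * hrec1 + f 0 a (1 - a) * hrec2 - hsA + hsC
  -- a point where μ t + μ (1-t) ≠ 1 (from non-additivity)
  have hex : ∃ t : ℝ, 0 < t ∧ t < 1 ∧ μ t + μ (1 - t) ≠ 1 := by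
    by_contra hcon
    push_neg at hcon
    apply hnotadd
    intro a c ha hc
    have hs : 0 < a + c := by linarith
    have hsne : a + c ≠ 0 := ne_of_gt hs
    have ht1 : 0 < a / (a + c) := div_pos ha hs
    have ht2 : a / (a + c) < 1 := (div_lt_one hs).2 (by linarith)
    have h2 := hcon (a / (a + c)) ht1 ht2
    rw [show (1 : ℝ) - a / (a + c) = c / (a + c) by field_simp; ring] at h2
    have e1 := hrec (a + c) a hs ha
    have e2 := hrec (a + c) c hs hc
    calc μ (a + c) = μ (a + c) * (μ (a / (a + c)) + μ (c / (a + c))) := by rw [h2, mul_one]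
      _ = μ a + μ c := by rw [mul_add, e1, e2]
  obtain ⟨t₀, ht₀, ht₀1, htne⟩ := hex
  have hδ : μ t₀ + μ (1 - t₀) - 1 ≠ 0 := fun h => htne (by linarith)
  set b := f 0 t₀ (1 - t₀) / (μ t₀ + μ (1 - t₀) - 1) with hbdef
  -- the form of H
  have Hform : ∀ t : ℝ, 0 < t → t < 1 → f 0 t (1 - t) = b * (μ t + μ (1 - t) - 1) := by
    intro t h0t ht1
    have hk := KEY t t₀ h0t ht1 ht₀ ht₀1
    rw [hbdef, div_mul_eq_mul_div, eq_div_iff hδ]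
    linarith [hk]
  -- the weighted H term
  have muH : ∀ y u : ℝ, 0 < y → y < u →
      μ u * f 0 (y / u) (1 - y / u) = b * (μ y + μ (u - y) - μ u) := by
    intro y u hy hu
    have hu0 : 0 < u := hy.trans hu
    have hune : u ≠ 0 := ne_of_gt hu0
    have h0 : 0 < y / u := div_pos hy hu0
    have h1' : y / u < 1 := (div_lt_one hu0).2 hu
    rw [Hform (y / u) h0 h1']
    rw [show (1 : ℝ) - y / u = (u - y) / u by field_simp]
    have e1 : μ u * μ (y / u) = μ y := hrec u y hu0 hy
    have e3 : μ u * μ ((u - y) / u) = μ (u - y) := hrec u (u - y) hu0 (by linarith)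
    linear_combination b * e1 + b * e3
  -- difference relation for the boundary function
  have Gdiff : ∀ s u v : ℝ, 0 < u → 0 < v → u < s → v < s → s < u + v →
      f (s - u) u 0 - b * μ (s - u) - b * μ u
        = f (s - v) v 0 - b * μ (s - v) - b * μ v := by
    intro s u v hu hv hus hvs hsuv
    have hy : 0 < u + v - s := by linarith
    have h := Rel0 (u + v - s) u v hy (by linarith) (by linarith)
    have m1 := muH (u + v - s) u hy (by linarith)
    have m2 := muH (u + v - s) v hy (by linarith)
    rw [m1, m2] at h
    rw [show v - (u + v - s) = s - u by ring, show u - (u + v - s) = s - v by ring] at h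
    linear_combination h
  -- boundary value formula
  have Gclaim : ∀ x u : ℝ, 0 < x → 0 < u →
      f x u 0 = b * μ x + b * μ u
        + (f ((x + u) / 2) ((x + u) / 2) 0 - 2 * b * μ ((x + u) / 2)) := by
    intro x u hx hu
    rcases lt_trichotomy u ((x + u) / 2) with hc | hc | hc
    · have h := Gdiff (x + u) x ((x + u) / 2) hx (by linarith) (by linarith)
        (by linarith) (by linarith)
      rw [show (x + u) - x = u by ring, show (x + u) - (x + u) / 2 = (x + u) / 2 by ring] at h
      have hs := hsym1 u x 0
      linarith
    · have hxu : x = u := by linarith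
      subst hxu
      rw [show (x + x) / 2 = x by ring]
      ring
    · have h := Gdiff (x + u) u ((x + u) / 2) hu (by linarith) (by linarith)
        (by linarith) (by linarith)
      rw [show (x + u) - u = x by ring, show (x + u) - (x + u) / 2 = (x + u) / 2 by ring] at h
      linarith
  -- conclusion
  refine ⟨b, fun s => f (s / 2) (s / 2) 0 - 2 * b * μ (s / 2), fun x y z hx hy hz => ?_⟩
  have hyz : 0 < y + z := by linarith
  have h := heq' x y z hx hy hz
  have hm := muH y (y + z) hy (by linarith)
  rw [hm] at h
  have hG := Gclaim x (y + z) hx hyz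
  rw [hG] at h
  rw [show y + z - y = z by ring] at h
  rw [show x + (y + z) = x + y + z by ring] at h
  show f x y z = b * (μ x + μ y + μ z)
    + (f ((x + y + z) / 2) ((x + y + z) / 2) 0 - 2 * b * μ ((x + y + z) / 2))
  linarith
end

section
/- Let f : [0,∞)³ → ℝ be symmetric, satisfy f(x,y,z) = f(x, y+z, 0) + (y+z)·f(0, y/(y+z), z/(y+z)) for all x, y, z > 0, and suppose the map (x,y) ↦ f(0,x,y) is continuous on (0,∞)². Then there exist a constant c ∈ ℝ and a continuous function Ψ : (0,∞) → ℝ such that f(x,y,z) = c(x·ln x + y·ln y + z·ln z) + Ψ(x+y+z) for all x, y, z > 0. -/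
set_option maxHeartbeats 1000000
open Set MeasureTheory intervalIntegral Topology Filter


noncomputable def entK (p : ℝ) : ℝ := p * Real.log p + (1 - p) * Real.log (1 - p)

lemma entK_scale {p q : ℝ} (hp : 0 < p) (hpq : p < q) :
    q * entK (p / q) = p * Real.log p + (q - p) * Real.log (q - p) - q * Real.log q := by
  have hq : 0 < q := hp.trans hpq
  have h1 : 1 - p / q = (q - p) / q := by field_simp
  unfold entK
  rw [h1, Real.log_div hp.ne' hq.ne', Real.log_div (ne_of_gt (show (0:ℝ) < q - p by linarith)) hq.ne']
  field_simp
  ring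

lemma entK_fei {x y : ℝ} (hx : 0 < x) (hy : 0 < y) (hxy : x + y < 1) :
    entK x + (1 - x) * entK (y / (1 - x))
      = x * Real.log x + y * Real.log y + (1 - x - y) * Real.log (1 - x - y) := by
  have h := entK_scale (p := y) (q := 1 - x) hy (by linarith)
  rw [h]
  have h2 : (1:ℝ) - x - y = (1 - x) - y := by ring
  rw [h2]; unfold entK; ring

lemma entK_sym {p : ℝ} : entK (1 - p) = entK p := by
  unfold entK
  have : (1:ℝ) - (1 - p) = p := by ring
  rw [this]; ring

lemma additive_linear (B : ℝ → ℝ)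
    (hadd : ∀ d₁ d₂ : ℝ, 0 < d₁ → 0 < d₂ → B (d₁ + d₂) = B d₁ + B d₂)
    (hcont : ∀ d : ℝ, 0 < d → ContinuousAt B d) :
    ∀ d : ℝ, 0 < d → B d = d * B 1 := by
  have key : ∀ x a a' : ℝ, 0 < a → 0 < a' → 0 < x + a → 0 < x + a' →
      B (x + a) - B a = B (x + a') - B a' := by
    intro x a a' ha ha' hxa hxa'
    have h1 : B (x + a + a') = B (x + a) + B a' := hadd _ _ hxa ha'
    have h2 : B (x + a' + a) = B (x + a') + B a := hadd _ _ hxa' ha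
    have h3 : x + a + a' = x + a' + a := by ring
    rw [h3, h2] at h1; linarith
  set Bh : ℝ → ℝ := fun x => B (x + (|x| + 1)) - B (|x| + 1) with hBh
  have habs : ∀ x : ℝ, 0 < x + (|x| + 1) := fun x => by
    have h1 := neg_abs_le x; linarith
  have habs' : ∀ x : ℝ, (0:ℝ) < |x| + 1 := fun x => by positivity
  have hBa : ∀ x a : ℝ, 0 < a → 0 < x + a → Bh x = B (x + a) - B a := fun x a ha hxa =>
    key x _ a (habs' x) ha (habs x) hxa
  have haddh : ∀ x y : ℝ, Bh (x + y) = Bh x + Bh y := by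
    intro x y
    set a := |x| + |y| + 1 with ha
    have ha0 : 0 < a := by positivity
    have hxa : 0 < x + a := by have := neg_abs_le x; have := abs_nonneg y; simp only [ha]; linarith
    have hya : 0 < y + a := by have := neg_abs_le y; have := abs_nonneg x; simp only [ha]; linarith
    have hxya : 0 < (x + y) + (a + a) := by linarith
    rw [hBa (x+y) (a+a) (by linarith) hxya, hBa x a ha0 hxa, hBa y a ha0 hya]
    have e1 : B ((x+y)+(a+a)) = B (x+a) + B (y+a) := by
      rw [show (x+y)+(a+a) = (x+a)+(y+a) by ring]; exact hadd _ _ hxa hya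
    have e2 : B (a+a) = B a + B a := hadd _ _ ha0 ha0
    rw [e1, e2]; ring
  have hconth : Continuous Bh := by
    rw [continuous_iff_continuousAt]; intro x
    have h1 : ContinuousAt (fun x : ℝ => x + (|x| + 1)) x := by fun_prop
    have h2 : ContinuousAt (fun x : ℝ => |x| + 1) x := by fun_prop
    have c1 : ContinuousAt (fun x : ℝ => B (x + (|x| + 1))) x :=
      ContinuousAt.comp' (hcont _ (habs x)) h1
    have c2 : ContinuousAt (fun x : ℝ => B (|x| + 1)) x :=
      ContinuousAt.comp' (hcont _ (habs' x)) h2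
    exact c1.sub c2
  have hzero : Bh 0 = 0 := by
    have := haddh 0 0; simp at this; linarith
  let F : ℝ →+ ℝ := AddMonoidHom.mk' Bh haddh
  have hcoe : ∀ x, (F.toRealLinearMap hconth) x = Bh x := fun x => rfl
  have hlin : ∀ x : ℝ, Bh x = x * Bh 1 := by
    intro x
    have := (F.toRealLinearMap hconth).map_smul x 1
    simp only [smul_eq_mul, mul_one] at this
    rw [hcoe, hcoe] at this
    exact this
  intro d hd
  have h1 : Bh d = B d := by
    rw [hBa d 1 one_pos (by linarith)]
    have := hadd d 1 hd one_pos; linarith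
  have h2 : Bh 1 = B 1 := by
    rw [hBa 1 1 one_pos (by linarith)]
    have := hadd 1 1 one_pos one_pos; linarith
  rw [← h1, ← h2, hlin d]

lemma fei_reg (φ : ℝ → ℝ) (hc : ContinuousOn φ (Ioo 0 1))
    (hfei : ∀ x y : ℝ, 0 < x → 0 < y → x + y < 1 →
      φ x + (1-x) * φ (y/(1-x)) = φ y + (1-y) * φ (x/(1-y))) :
    ∀ x ∈ Ioo (0:ℝ) 1, HasDerivAt φ (deriv φ x) x ∧ ContinuousAt (deriv φ) x := by
  have loc : ∀ x₀ ∈ Ioo (0:ℝ) 1, ∃ (l u : ℝ) (E' : ℝ → ℝ), l < x₀ ∧ x₀ < u ∧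
      Ioo l u ⊆ Ioo 0 1 ∧ (∀ x ∈ Ioo l u, HasDerivAt φ (E' x) x) ∧
      ContinuousOn E' (Ioo l u) := by
    rintro x₀ ⟨hx₀0, hx₀1⟩
    set r : ℝ := 1 - x₀ with hr
    have hr0 : 0 < r := by rw [hr]; linarith
    set a : ℝ := r/4 with ha
    set b : ℝ := r/2 with hb
    set δ : ℝ := min (x₀/2) (r/4) with hδdef
    have hδ0 : 0 < δ := lt_min (by linarith) (by linarith)
    have hδ1 : δ ≤ x₀/2 := min_le_left _ _
    have hδ2 : δ ≤ r/4 := min_le_right _ _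
    set k₁ : ℝ := min (x₀/2) (r/4) with hk₁
    set k₂ : ℝ := max ((x₀ + r/4)/(1 - r/2)) (2/3) with hk₂
    have hden : (0:ℝ) < 1 - r/2 := by linarith
    have hk₁0 : 0 < k₁ := hδ0
    have hk₂1 : k₂ < 1 := by
      apply max_lt
      · rw [div_lt_one hden]; linarith
      · norm_num
    have hk₁2 : k₁ ≤ k₂ := by
      have h1 : k₁ ≤ r/4 := min_le_right _ _
      have h2 : (2:ℝ)/3 ≤ k₂ := le_max_right _ _
      linarith
    -- clamp
    set cl : ℝ → ℝ := fun t => max k₁ (min k₂ t) with hcl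
    have hclmem : ∀ t, cl t ∈ Ioo (0:ℝ) 1 := by
      intro t
      constructor
      · exact lt_of_lt_of_le hk₁0 (le_max_left _ _)
      · calc max k₁ (min k₂ t) ≤ max k₁ k₂ := max_le_max le_rfl (min_le_left _ _)
          _ = k₂ := max_eq_right hk₁2
          _ < 1 := hk₂1
    set φt : ℝ → ℝ := fun t => φ (cl t) with hφt
    have hφtc : Continuous φt := by
      apply hc.comp_continuous
      · exact (continuous_const.max (continuous_const.min continuous_id))
      · exact hclmem
    have hφteq : ∀ t, k₁ ≤ t → t ≤ k₂ → φt t = φ t := by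
      intro t h1 h2
      have : cl t = t := by
        simp only [hcl]; rw [min_eq_right h2, max_eq_right h1]
      simp only [hφt, this]
    set gt' : ℝ → ℝ := fun u => φt u / (max u k₁)^3 with hgt
    have hmaxpos : ∀ u : ℝ, (0:ℝ) < max u k₁ := fun u => lt_of_lt_of_le hk₁0 (le_max_right _ _)
    have hgtc : Continuous gt' := by
      apply hφtc.div (by fun_prop)
      intro u
      exact pow_ne_zero _ (ne_of_gt (hmaxpos u))
    set Φ : ℝ → ℝ := fun v => ∫ t in (0:ℝ)..v, φt t with hΦ
    set Θ : ℝ → ℝ := fun v => ∫ t in (0:ℝ)..v, gt' t with hΘ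
    have hΦd : ∀ v : ℝ, HasDerivAt Φ (φt v) v := fun v =>
      (hφtc.integral_hasStrictDerivAt 0 v).hasDerivAt
    have hΘd : ∀ v : ℝ, HasDerivAt Θ (gt' v) v := fun v =>
      (hgtc.integral_hasStrictDerivAt 0 v).hasDerivAt
    have hΦc : Continuous Φ := by
      rw [continuous_iff_continuousAt]; exact fun v => (hΦd v).continuousAt
    have hΘc : Continuous Θ := by
      rw [continuous_iff_continuousAt]; exact fun v => (hΘd v).continuousAt
    set C₁ : ℝ := ∫ y in a..b, φt y with hC₁
    have hab : a < b := by rw [ha, hb]; linarith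
    have hba : b - a = r/4 := by rw [ha, hb]; ring
    -- bounds for x in the ball
    have hbnd : ∀ x : ℝ, x₀ - δ < x → x < x₀ + δ →
        0 < x ∧ x < 1 ∧ x + b < 1 ∧ k₁ ≤ x ∧ x ≤ k₂ ∧
        (∀ y : ℝ, a ≤ y → y ≤ b → k₁ ≤ x/(1-y) ∧ x/(1-y) ≤ k₂ ∧ k₁ ≤ y/(1-x) ∧ y/(1-x) ≤ k₂) := by
      intro x h1 h2
      have hx0 : 0 < x := by linarith
      have hxx : x ≤ x₀ + r/4 := by linarith
      have hxk₂ : x ≤ k₂ := by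
        have h3 : x*(1-r/2) ≤ x := mul_le_of_le_one_right hx0.le (by linarith)
        have h4 : x ≤ (x₀ + r/4)/(1 - r/2) := by rw [le_div_iff₀ hden]; linarith
        exact h4.trans (le_max_left _ _)
      have hx1 : x < 1 := lt_of_le_of_lt hxk₂ hk₂1
      have hxb1 : x + b < 1 := by linarith
      have hk₁x : k₁ ≤ x := (min_le_left _ _).trans (by linarith)
      refine ⟨hx0, hx1, hxb1, hk₁x, hxk₂, ?_⟩
      intro y hy1 hy2
      have hy0 : 0 < y := by linarith
      have h1y : 0 < 1 - y := by linarith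
      have h1x : 0 < 1 - x := by linarith
      have c1 : k₁ ≤ x/(1-y) := by
        have h5 : x*(1-y) ≤ x := mul_le_of_le_one_right hx0.le (by linarith)
        have h6 : x ≤ x/(1-y) := by rw [le_div_iff₀ h1y]; exact h5
        linarith
      have c2 : x/(1-y) ≤ k₂ := by
        have h7 : x/(1-y) ≤ (x₀ + r/4)/(1 - r/2) := div_le_div₀ (by linarith) hxx hden (by linarith)
        exact h7.trans (le_max_left _ _)
      have c3 : k₁ ≤ y/(1-x) := by
        have h8 : y*(1-x) ≤ y := mul_le_of_le_one_right hy0.le (by linarith)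
        have h9 : y ≤ y/(1-x) := by rw [le_div_iff₀ h1x]; exact h8
        have h10 : k₁ ≤ a := min_le_right _ _
        linarith
      have c4 : y/(1-x) ≤ k₂ := by
        have h11 : y/(1-x) ≤ (r/2)/(r - r/4) :=
          div_le_div₀ (by linarith) (by linarith) (by linarith) (by linarith)
        have h12 : (r/2)/(r - r/4) = 2/3 := by
          rw [div_eq_div_iff (by linarith) (by norm_num)]; ring
        rw [h12] at h11
        exact h11.trans (le_max_right _ _)
      exact ⟨c1, c2, c3, c4⟩
    -- the main integral identity
    have hmain : ∀ x : ℝ, x₀ - δ < x → x < x₀ + δ →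
        (b - a) * φ x = C₁ + x^2 * (Θ (x/(1-b)) - Θ (x/(1-a)))
          - (1-x)^2 * (Φ (b/(1-x)) - Φ (a/(1-x))) := by
      intro x hxl hxu
      obtain ⟨hx0, hx1, hxb1, hxk₁, hxk₂, hyb⟩ := hbnd x hxl hxu
      have h1x : 0 < 1 - x := by linarith
      have huIcc : uIcc a b = Icc a b := uIcc_of_le (le_of_lt hab)
      have step1 : (b - a) * φ x = ∫ y in a..b, φ x := by
        rw [intervalIntegral.integral_const, smul_eq_mul]
      have step2 : (∫ y in a..b, φ x)
          = ∫ y in a..b, (φt y + ((1-y) * φt (x/(1-y)) - (1-x) * φt (y/(1-x)))) := by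
        apply integral_congr
        intro y hy
        rw [huIcc] at hy
        obtain ⟨hy1, hy2⟩ := hy
        have hy0 : 0 < y := by simp only [ha] at hy1; linarith
        have hxy1 : x + y < 1 := by linarith
        obtain ⟨c1, c2, c3, c4⟩ := hyb y hy1 hy2
        have hfei' := hfei x y hx0 hy0 hxy1
        have e1 : φt y = φ y := hφteq y (le_trans (min_le_right _ _) hy1) (by
          have h23 : (2:ℝ)/3 ≤ k₂ := le_max_right _ _
          linarith)
        have e2 : φt (x/(1-y)) = φ (x/(1-y)) := hφteq _ c1 c2
        have e3 : φt (y/(1-x)) = φ (y/(1-x)) := hφteq _ c3 c4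
        dsimp only
        rw [e1, e2, e3]
        linarith
      -- integrability
      have i1 : IntervalIntegrable φt volume a b := hφtc.intervalIntegrable a b
      have i2 : IntervalIntegrable (fun y => (1-y) * φt (x/(1-y))) volume a b := by
        apply ContinuousOn.intervalIntegrable
        apply ContinuousOn.mul (by fun_prop)
        apply hφtc.comp_continuousOn
        apply ContinuousOn.div continuousOn_const (by fun_prop)
        intro y hy
        rw [huIcc] at hy
        have h1y : y ≤ b := hy.2
        have h2y : a ≤ y := hy.1
        intro hcon
        nlinarith [hr0]
      have i3 : IntervalIntegrable (fun y => (1-x) * φt (y/(1-x))) volume a b := by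
        apply Continuous.intervalIntegrable
        fun_prop
      have step3 : (∫ y in a..b, (φt y + ((1-y) * φt (x/(1-y)) - (1-x) * φt (y/(1-x)))))
          = C₁ + ((∫ y in a..b, (1-y) * φt (x/(1-y))) - ∫ y in a..b, (1-x) * φt (y/(1-x))) := by
        rw [integral_add i1 (i2.sub i3), integral_sub i2 i3]
      -- T3
      have hT3 : (∫ y in a..b, (1-x) * φt (y/(1-x)))
          = (1-x)^2 * (Φ (b/(1-x)) - Φ (a/(1-x))) := by
        rw [intervalIntegral.integral_const_mul]
        rw [integral_comp_div (f := φt) (ne_of_gt h1x)]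
        have : (∫ u in a/(1-x)..b/(1-x), φt u) = Φ (b/(1-x)) - Φ (a/(1-x)) := by
          rw [hΦ]
          exact (integral_interval_sub_left (hφtc.intervalIntegrable _ _)
            (hφtc.intervalIntegrable _ _)).symm
        rw [this, smul_eq_mul]; ring
      -- T2
      have hT2 : (∫ y in a..b, (1-y) * φt (x/(1-y)))
          = x^2 * (Θ (x/(1-b)) - Θ (x/(1-a))) := by
        have hsub : (∫ y in a..b, (1-y) * φt (x/(1-y)))
            = ∫ y in a..b, (x/(1-y)^2) • ((fun u => x^2 * gt' u) ∘ (fun y => x/(1-y))) y := by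
          apply integral_congr
          intro y hy
          rw [huIcc] at hy
          obtain ⟨c1, c2, c3, c4⟩ := hyb y hy.1 hy.2
          have h1y : 0 < 1 - y := by
            have h1 : y ≤ b := hy.2
            linarith
          have hmax : max (x/(1-y)) k₁ = x/(1-y) := max_eq_left c1
          simp only [Function.comp, hgt, hmax, smul_eq_mul]
          field_simp
        rw [hsub]
        have hder : ∀ y ∈ uIcc a b, HasDerivAt (fun y => x/(1-y)) (x/(1-y)^2) y := by
          intro y hy
          rw [huIcc] at hy
          have h1y : (1:ℝ) - y ≠ 0 := by
            have h1 : y ≤ b := hy.2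
            have h2 : (0:ℝ) < 1 - y := by linarith
            linarith
          have h0 : HasDerivAt (fun y : ℝ => 1 - y) (-1) y := (hasDerivAt_id y).const_sub 1
          have h1 : HasDerivAt (fun y : ℝ => (1-y)⁻¹) (-(-1)/(1-y)^2) y := h0.inv h1y
          have h2 := h1.const_mul x
          have e : (fun y : ℝ => x/(1-y)) = fun y : ℝ => x * (1-y)⁻¹ := by
            funext t; rw [div_eq_mul_inv]
          rw [e]
          exact h2.congr_deriv (by ring)
        have hdc : ContinuousOn (fun y : ℝ => x/(1-y)^2) (uIcc a b) := by
          apply ContinuousOn.div continuousOn_const (by fun_prop)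
          intro y hy
          rw [huIcc] at hy
          have h1 : y ≤ b := hy.2
          have h1y : (0:ℝ) < 1 - y := by linarith
          exact pow_ne_zero _ (by linarith)
        rw [integral_comp_smul_deriv (g := fun u => x^2 * gt' u) hder hdc (continuous_const.mul hgtc)]
        rw [intervalIntegral.integral_const_mul]
        have : (∫ u in x/(1-a)..x/(1-b), gt' u) = Θ (x/(1-b)) - Θ (x/(1-a)) := by
          rw [hΘ]
          exact (integral_interval_sub_left (hgtc.intervalIntegrable _ _)
            (hgtc.intervalIntegrable _ _)).symm
        rw [this]
      rw [step1, step2, step3, hT2, hT3]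
      ring
    -- E' : explicit continuous derivative
    set E' : ℝ → ℝ := fun z => (b-a)⁻¹ * (2*z*(Θ (z/(1-b)) - Θ (z/(1-a)))
        + z^2*(gt' (z/(1-b)) * (1/(1-b)) - gt' (z/(1-a)) * (1/(1-a)))
        + (2*(1-z)*(Φ (b/(1-z)) - Φ (a/(1-z))) - (b * φt (b/(1-z)) - a * φt (a/(1-z))))) with hE'
    have h1b : (0:ℝ) < 1 - b := by linarith
    have h1a : (0:ℝ) < 1 - a := by linarith
    set E : ℝ → ℝ := fun z => (b-a)⁻¹ * (C₁ + z^2 * (Θ (z/(1-b)) - Θ (z/(1-a)))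
        - (1-z)^2 * (Φ (b/(1-z)) - Φ (a/(1-z)))) with hE
    have hφE : ∀ z, x₀ - δ < z → z < x₀ + δ → φ z = E z := by
      intro z h1 h2
      have hmz := hmain z h1 h2
      rw [hE]; dsimp only
      rw [← hmz]
      rw [hba]
      field_simp
    refine ⟨x₀ - δ, x₀ + δ, E', by linarith, by linarith, ?_, ?_, ?_⟩
    · rintro x ⟨h1, h2⟩
      obtain ⟨hx0, hx1, _⟩ := hbnd x h1 h2
      exact ⟨hx0, hx1⟩
    · intro x hx
      obtain ⟨hxl, hxu⟩ := hx
      obtain ⟨hx0, hx1, _⟩ := hbnd x hxl hxu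
      have h1x : (0:ℝ) < 1 - x := by linarith
      have hd1 : HasDerivAt (fun z : ℝ => z/(1-b)) (1/(1-b)) x := (hasDerivAt_id x).div_const (1-b)
      have hd2 : HasDerivAt (fun z : ℝ => z/(1-a)) (1/(1-a)) x := (hasDerivAt_id x).div_const (1-a)
      have hΘ1 : HasDerivAt (fun z : ℝ => Θ (z/(1-b))) (gt' (x/(1-b)) * (1/(1-b))) x :=
        (by have := (hΘd (x/(1-b))).comp x hd1; exact this)
      have hΘ2 : HasDerivAt (fun z : ℝ => Θ (z/(1-a))) (gt' (x/(1-a)) * (1/(1-a))) x :=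
        (by have := (hΘd (x/(1-a))).comp x hd2; exact this)
      have hsq : HasDerivAt (fun z : ℝ => z^2) (2*x) x := by
        simpa using hasDerivAt_pow 2 x
      have hP1 := hsq.mul (hΘ1.sub hΘ2)
      have hinv : HasDerivAt (fun z : ℝ => (1-z)⁻¹) (-(-1)/(1-x)^2) x :=
        ((hasDerivAt_id x).const_sub 1).inv h1x.ne'
      have hb1 : HasDerivAt (fun z : ℝ => b/(1-z)) (b * (-(-1)/(1-x)^2)) x := by
        have h2 := hinv.const_mul b
        have e : (fun z : ℝ => b/(1-z)) = fun z : ℝ => b * (1-z)⁻¹ := by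
          funext t; rw [div_eq_mul_inv]
        rw [e]; exact h2
      have ha1 : HasDerivAt (fun z : ℝ => a/(1-z)) (a * (-(-1)/(1-x)^2)) x := by
        have h2 := hinv.const_mul a
        have e : (fun z : ℝ => a/(1-z)) = fun z : ℝ => a * (1-z)⁻¹ := by
          funext t; rw [div_eq_mul_inv]
        rw [e]; exact h2
      have hΦ1 : HasDerivAt (fun z : ℝ => Φ (b/(1-z))) (φt (b/(1-x)) * (b * (-(-1)/(1-x)^2))) x :=
        (by have := (hΦd (b/(1-x))).comp x hb1; exact this)
      have hΦ2 : HasDerivAt (fun z : ℝ => Φ (a/(1-z))) (φt (a/(1-x)) * (a * (-(-1)/(1-x)^2))) x :=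
        (by have := (hΦd (a/(1-x))).comp x ha1; exact this)
      have hsq2 : HasDerivAt (fun z : ℝ => (1-z)^2) (2*(1-x)*(-1)) x := by
        have h3 := ((hasDerivAt_id x).const_sub 1).pow 2
        norm_num at h3
        exact h3.congr_deriv (by ring)
      have hP2 := hsq2.mul (hΦ1.sub hΦ2)
      have hED := ((hP1.const_add C₁).sub hP2).const_mul (b-a)⁻¹
      have heq : φ =ᶠ[𝓝 x] E :=
        Filter.eventuallyEq_of_mem (Ioo_mem_nhds hxl hxu) (fun z hz => hφE z (mem_Ioo.mp hz).1 (mem_Ioo.mp hz).2)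
      have hφd := hED.congr_of_eventuallyEq heq
      refine hφd.congr_deriv ?_
      rw [hE']; simp only [Pi.sub_apply]
      have hba0 : b - a ≠ 0 := ne_of_gt (by linarith)
      field_simp
      ring
    · intro x hx
      obtain ⟨hx0, hx1, _⟩ := hbnd x hx.1 hx.2
      have h1x : (1:ℝ) - x ≠ 0 := by linarith
      apply ContinuousAt.continuousWithinAt
      rw [hE']
      have c1x : ContinuousAt (fun z : ℝ => 1 - z) x := by fun_prop
      have cb : ContinuousAt (fun z : ℝ => b/(1-z)) x := continuousAt_const.div c1x h1x
      have ca : ContinuousAt (fun z : ℝ => a/(1-z)) x := continuousAt_const.div c1x h1x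
      have p1 : ContinuousAt (fun z : ℝ => 2*z*(Θ (z/(1-b)) - Θ (z/(1-a)))) x := by fun_prop
      have p2 : ContinuousAt
          (fun z : ℝ => z^2*(gt' (z/(1-b)) * (1/(1-b)) - gt' (z/(1-a)) * (1/(1-a)))) x := by
        fun_prop
      have p3 : ContinuousAt (fun z : ℝ => 2*(1-z)*(Φ (b/(1-z)) - Φ (a/(1-z)))) x := by
        apply ContinuousAt.mul (by fun_prop)
        exact ((hΦc.continuousAt).comp' cb).sub ((hΦc.continuousAt).comp' ca)
      have p4 : ContinuousAt (fun z : ℝ => b * φt (b/(1-z)) - a * φt (a/(1-z))) x := by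
        exact (continuousAt_const.mul ((hφtc.continuousAt).comp' cb)).sub
          (continuousAt_const.mul ((hφtc.continuousAt).comp' ca))
      exact continuousAt_const.mul ((p1.add p2).add (p3.sub p4))
  -- conclude from loc
  intro x hx
  obtain ⟨l, u, E', hl, hu, hsub, hD, hEc⟩ := loc x hx
  have hmem : Ioo l u ∈ 𝓝 x := Ioo_mem_nhds hl hu
  have hdφ : ∀ z ∈ Ioo l u, deriv φ z = E' z := fun z hz => (hD z hz).deriv
  constructor
  · have h1 : HasDerivAt φ (E' x) x := hD x ⟨hl, hu⟩
    rw [hdφ x ⟨hl, hu⟩]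
    exact h1
  · have hEcx : ContinuousAt E' x := hEc.continuousAt hmem
    exact hEcx.congr (Filter.eventuallyEq_of_mem hmem (fun z hz => (hdφ z hz).symm))


lemma fei_solution (φ : ℝ → ℝ) (hc : ContinuousOn φ (Ioo 0 1))
    (hsym : ∀ p : ℝ, 0 < p → p < 1 → φ p = φ (1-p))
    (hfei : ∀ x y : ℝ, 0 < x → 0 < y → x + y < 1 →
      φ x + (1-x) * φ (y/(1-x)) = φ y + (1-y) * φ (x/(1-y))) :
    ∃ c : ℝ, ∀ p : ℝ, 0 < p → p < 1 → φ p = c * entK p := by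
  have hreg := fei_reg φ hc hfei
  set g : ℝ → ℝ := deriv φ with hg
  have hgd : ∀ x ∈ Ioo (0:ℝ) 1, HasDerivAt φ (g x) x := fun x hx => (hreg x hx).1
  have hgc : ∀ x ∈ Ioo (0:ℝ) 1, ContinuousAt g x := fun x hx => (hreg x hx).2
  -- differentiate FEI in x
  have star : ∀ x y : ℝ, 0 < x → 0 < y → x + y < 1 →
      g x - φ (y/(1-x)) + (y/(1-x)) * g (y/(1-x)) = g (x/(1-y)) := by
    intro x y hx hy hxy
    have h1x : (0:ℝ) < 1 - x := by linarith
    have h1y : (0:ℝ) < 1 - y := by linarith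
    have hu : y/(1-x) ∈ Ioo (0:ℝ) 1 := ⟨by positivity, by rw [div_lt_one h1x]; linarith⟩
    have hv : x/(1-y) ∈ Ioo (0:ℝ) 1 := ⟨by positivity, by rw [div_lt_one h1y]; linarith⟩
    have hxI : x ∈ Ioo (0:ℝ) 1 := ⟨hx, by linarith⟩
    have hinner : HasDerivAt (fun z : ℝ => y/(1-z)) (y * (-(-1)/(1-x)^2)) x := by
      have h2 := (((hasDerivAt_id x).const_sub 1).inv h1x.ne').const_mul y
      have e : (fun z : ℝ => y/(1-z)) = fun z : ℝ => y * (1-z)⁻¹ := by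
        funext t; rw [div_eq_mul_inv]
      rw [e]; exact h2
    have hcomp : HasDerivAt (fun z : ℝ => φ (y/(1-z))) (g (y/(1-x)) * (y * (-(-1)/(1-x)^2))) x :=
      (hgd _ hu).comp x hinner
    have hL : HasDerivAt (fun z : ℝ => φ z + (1-z) * φ (y/(1-z)))
        (g x + ((-1) * φ (y/(1-x)) + (1-x) * (g (y/(1-x)) * (y * (-(-1)/(1-x)^2))))) x :=
      (hgd x hxI).add (((hasDerivAt_id x).const_sub 1).mul hcomp)
    have hcomp2 : HasDerivAt (fun z : ℝ => φ (z/(1-y))) (g (x/(1-y)) * (1/(1-y))) x :=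
      (hgd _ hv).comp x ((hasDerivAt_id x).div_const (1-y))
    have hR : HasDerivAt (fun z : ℝ => φ y + (1-y) * φ (z/(1-y)))
        ((1-y) * (g (x/(1-y)) * (1/(1-y)))) x :=
      (hcomp2.const_mul (1-y)).const_add (φ y)
    have heq : (fun z : ℝ => φ z + (1-z) * φ (y/(1-z)))
        =ᶠ[𝓝 x] (fun z : ℝ => φ y + (1-y) * φ (z/(1-y))) := by
      have hmem : Ioo (0:ℝ) (1-y) ∈ 𝓝 x := Ioo_mem_nhds hx (by linarith)
      exact Filter.eventuallyEq_of_mem hmem (fun z hz => by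
        have hz1 := (mem_Ioo.mp hz).1
        have hz2 := (mem_Ioo.mp hz).2
        exact hfei z y hz1 hy (by linarith))
    have hL' := hR.congr_of_eventuallyEq heq
    have huniq := hL.unique hL'
    have hval : (1-y) * (g (x/(1-y)) * (1/(1-y))) = g (x/(1-y)) := by field_simp
    rw [hval] at huniq
    have e2 : (1-x) * (g (y/(1-x)) * (y * (-(-1)/(1-x)^2))) = (y/(1-x)) * g (y/(1-x)) := by
      field_simp
    rw [e2] at huniq
    linarith [huniq]
  set A : ℝ → ℝ := fun u => u * g u - φ u with hA
  have hR2 : ∀ x v : ℝ, 0 < x → x < v → v < 1 → g v - g x = A ((v-x)/(v*(1-x))) := by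
    intro x v hx hxv hv1
    have hv0 : (0:ℝ) < v := by linarith
    set y := (v - x)/v with hy
    have hy0 : 0 < y := by rw [hy]; apply div_pos (by linarith) hv0
    have hy1 : x + y < 1 := by
      have h2 : (v-x)/v < 1 - x := by
        rw [div_lt_iff₀ hv0]; nlinarith
      rw [hy]; linarith
    have hs := star x y hx hy0 hy1
    have e1 : x/(1-y) = v := by
      rw [hy]; rw [show 1 - (v-x)/v = x/v by field_simp; ring]
      rw [div_div_eq_mul_div, mul_comm, mul_div_assoc, div_self hx.ne', mul_one]
    have e2 : y/(1-x) = (v-x)/(v*(1-x)) := by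
      rw [hy, div_div]
    rw [e1, e2] at hs
    rw [hA]; dsimp only
    linarith [hs]
  -- logistic map
  set σ : ℝ → ℝ := fun s => Real.exp s / (1 + Real.exp s) with hσ
  have hσ01 : ∀ s : ℝ, σ s ∈ Ioo (0:ℝ) 1 := by
    intro s
    have h1 := Real.exp_pos s
    constructor
    · rw [hσ]; positivity
    · rw [hσ]; dsimp only; rw [div_lt_one (by positivity)]; linarith
  have hσmono : ∀ s d : ℝ, 0 < d → σ s < σ (s+d) := by
    intro s d hd
    have h1 : Real.exp s < Real.exp (s+d) := Real.exp_lt_exp.mpr (by linarith)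
    have h2 := Real.exp_pos s
    have h3 := Real.exp_pos (s+d)
    rw [hσ]; dsimp only
    rw [div_lt_div_iff₀ (by positivity) (by positivity)]
    nlinarith
  have hkey : ∀ s d : ℝ, 0 < d → g (σ (s+d)) - g (σ s) = A (1 - Real.exp (-d)) := by
    intro s d hd
    have h1 := hR2 (σ s) (σ (s+d)) (hσ01 s).1 (hσmono s d hd) (hσ01 (s+d)).2
    have e : (σ (s+d) - σ s)/(σ (s+d) * (1 - σ s)) = 1 - Real.exp (-d) := by
      rw [hσ]; dsimp only
      rw [Real.exp_neg, Real.exp_add]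
      have h2 := Real.exp_pos s
      have h3 := Real.exp_pos d
      have h4 : 1 + Real.exp s > 0 := by linarith
      have h5 : 1 + Real.exp s * Real.exp d > 0 := by positivity
      rw [show (1:ℝ) - Real.exp s / (1 + Real.exp s) = 1/(1+Real.exp s) by field_simp; ring]
      field_simp
      ring
    rw [e] at h1; exact h1
  set B : ℝ → ℝ := fun d => A (1 - Real.exp (-d)) with hB
  have hBadd : ∀ d₁ d₂ : ℝ, 0 < d₁ → 0 < d₂ → B (d₁+d₂) = B d₁ + B d₂ := by
    intro d₁ d₂ h1 h2
    have k1 := hkey 0 (d₁+d₂) (by linarith)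
    have k2 := hkey 0 d₁ h1
    have k3 := hkey d₁ d₂ h2
    rw [zero_add] at k1 k2
    rw [hB]; dsimp only
    rw [← k1, ← k2, ← k3]; ring
  have hBcont : ∀ d : ℝ, 0 < d → ContinuousAt B d := by
    intro d hd
    have he1 : Real.exp (-d) < 1 := Real.exp_lt_one_iff.mpr (by linarith)
    have he0 := Real.exp_pos (-d)
    have hu : 1 - Real.exp (-d) ∈ Ioo (0:ℝ) 1 := ⟨by linarith, by linarith⟩
    have hAc : ContinuousAt A (1 - Real.exp (-d)) := by
      rw [hA]
      apply ContinuousAt.sub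
      · exact continuousAt_id.mul (hgc _ hu)
      · exact hc.continuousAt (Ioo_mem_nhds hu.1 hu.2)
    have hic : ContinuousAt (fun d : ℝ => 1 - Real.exp (-d)) d := by fun_prop
    have hfin : ContinuousAt (fun x : ℝ => A (1 - Real.exp (-x))) d := ContinuousAt.comp' hAc hic
    exact hfin
  have hBlin := additive_linear B hBadd hBcont
  set κ := B 1 with hκ
  set m := g (1/2) with hm
  have hσ0 : σ 0 = 1/2 := by rw [hσ]; norm_num [Real.exp_zero]
  have hgs : ∀ t : ℝ, g (σ t) - g (σ 0) = t * κ := by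
    intro t
    rcases lt_trichotomy t 0 with h|h|h
    · have hk := hkey t (-t) (by linarith)
      rw [add_neg_cancel, neg_neg] at hk
      have hb : B (-t) = A (1 - Real.exp t) := by rw [hB]; dsimp only; rw [neg_neg]
      have hb3 : A (1 - Real.exp t) = -t * κ := by
        rw [← hb]; exact hBlin (-t) (by linarith)
      rw [hb3] at hk
      linarith
    · simp [h]
    · have hk := hkey 0 t h
      rw [zero_add] at hk
      have hb : B t = A (1 - Real.exp (-t)) := by rw [hB]
      have hb3 : A (1 - Real.exp (-t)) = t * κ := by
        rw [← hb]; exact hBlin t h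
      rw [hb3] at hk
      linarith
  have hgform : ∀ p : ℝ, 0 < p → p < 1 → g p = κ * (Real.log p - Real.log (1-p)) + m := by
    intro p hp hp1
    have h1p : (0:ℝ) < 1 - p := by linarith
    set s := Real.log (p/(1-p)) with hs
    have hσs : σ s = p := by
      rw [hσ, hs]; dsimp only
      rw [Real.exp_log (by positivity)]
      field_simp; ring
    have h2 := hgs s
    rw [hσs, hσ0] at h2
    rw [hs, Real.log_div hp.ne' h1p.ne'] at h2
    rw [hm]
    linarith
  -- entK derivative
  have hkd : ∀ p : ℝ, 0 < p → p < 1 → HasDerivAt entK (Real.log p - Real.log (1-p)) p := by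
    intro p hp hp1
    have h1 : HasDerivAt (fun w : ℝ => w * Real.log w) (Real.log p + 1) p :=
      Real.hasDerivAt_mul_log hp.ne'
    have hin : HasDerivAt (fun z : ℝ => 1 - z) (-1) p := (hasDerivAt_id p).const_sub 1
    have h2 : HasDerivAt (fun z : ℝ => (1-z) * Real.log (1-z))
        ((Real.log (1-p) + 1) * (-1)) p :=
      (Real.hasDerivAt_mul_log (by linarith : (1:ℝ) - p ≠ 0)).comp p hin
    have h3 := h1.add h2
    have : Real.log p + 1 + (Real.log (1-p) + 1) * (-1) = Real.log p - Real.log (1-p) := by ring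
    rw [this] at h3
    exact h3
  have hhd : ∀ p ∈ Ioo (0:ℝ) 1,
      HasDerivAt (fun p : ℝ => φ p - κ * entK p - m * p) 0 p := by
    intro p hp
    have h1 := hgd p hp
    have h2 := (hkd p hp.1 hp.2).const_mul κ
    have h3 : HasDerivAt (fun p : ℝ => m * p) m p := by
      simpa using (hasDerivAt_id p).const_mul m
    have h4 := (h1.sub h2).sub h3
    refine h4.congr_deriv ?_
    rw [hgform p hp.1 hp.2]; ring
  -- constancy via MVT
  have hconst : ∀ p q : ℝ, p ∈ Ioo (0:ℝ) 1 → q ∈ Ioo (0:ℝ) 1 → p < q →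
      (φ p - κ * entK p - m * p) = (φ q - κ * entK q - m * q) := by
    intro p q hp hq hpq
    have hcont' : ContinuousOn (fun p : ℝ => φ p - κ * entK p - m * p) (Icc p q) := by
      intro z hz
      have hzI : z ∈ Ioo (0:ℝ) 1 := ⟨lt_of_lt_of_le hp.1 hz.1, lt_of_le_of_lt hz.2 hq.2⟩
      exact ((hhd z hzI).continuousAt).continuousWithinAt
    have hderiv : ∀ z ∈ Ioo p q, HasDerivAt (fun p : ℝ => φ p - κ * entK p - m * p) ((fun _ : ℝ => (0:ℝ)) z) z := by
      intro z hz
      exact hhd z ⟨lt_trans hp.1 hz.1, lt_trans hz.2 hq.2⟩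
    obtain ⟨c, _, hc2⟩ := exists_hasDerivAt_eq_slope _ _ hpq hcont' hderiv
    have hqp : q - p ≠ 0 := ne_of_gt (by linarith)
    have h5 : ((φ q - κ * entK q - m * q) - (φ p - κ * entK p - m * p)) / (q - p) = 0 := by
      simpa using hc2.symm
    rcases div_eq_zero_iff.mp h5 with h|h
    · linarith
    · exact absurd h hqp
  have hφform : ∀ p : ℝ, 0 < p → p < 1 →
      φ p = κ * entK p + m * p + (φ (1/2) - κ * entK (1/2) - m * (1/2)) := by
    intro p hp hp1
    have hhalf : (1/2 : ℝ) ∈ Ioo (0:ℝ) 1 := by norm_num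
    rcases lt_trichotomy p (1/2) with h|h|h
    · have := hconst p (1/2) ⟨hp, hp1⟩ hhalf h
      linarith
    · rw [h]; ring
    · have := hconst (1/2) p hhalf ⟨hp, hp1⟩ h
      linarith
  set C := φ (1/2) - κ * entK (1/2) - m * (1/2) with hC
  -- symmetry kills m
  have hm0 : m = 0 := by
    have hs1 := hsym (1/3) (by norm_num) (by norm_num)
    rw [show (1:ℝ) - 1/3 = 2/3 by norm_num] at hs1
    rw [hφform (1/3) (by norm_num) (by norm_num), hφform (2/3) (by norm_num) (by norm_num)] at hs1
    have he : entK (2/3) = entK (1/3) := by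
      rw [show (2:ℝ)/3 = 1 - 1/3 by norm_num]; exact entK_sym
    rw [he] at hs1
    linarith
  -- FEI kills C
  have hC0 : C = 0 := by
    have hf := hfei (1/4) (1/2) (by norm_num) (by norm_num) (by norm_num)
    rw [show (1:ℝ) - 1/4 = 3/4 by norm_num, show (1:ℝ) - 1/2 = 1/2 by norm_num] at hf
    rw [show (1/2 : ℝ)/(3/4) = 2/3 by norm_num, show (1/4 : ℝ)/(1/2) = 1/2 by norm_num] at hf
    rw [hφform (1/4) (by norm_num) (by norm_num), hφform (2/3) (by norm_num) (by norm_num),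
      hφform (1/2) (by norm_num) (by norm_num)] at hf
    rw [hm0] at hf
    have hk1 := entK_fei (x := 1/4) (y := 1/2) (by norm_num) (by norm_num) (by norm_num)
    have hk2 := entK_fei (x := 1/2) (y := 1/4) (by norm_num) (by norm_num) (by norm_num)
    rw [show (1:ℝ) - 1/4 = 3/4 by norm_num, show (1/2 : ℝ)/(3/4) = 2/3 by norm_num] at hk1
    rw [show (1:ℝ) - 1/2 = 1/2 by norm_num, show (1/4 : ℝ)/(1/2) = 1/2 by norm_num] at hk2
    have hk3 : entK (1/4) + 3/4 * entK (2/3) = entK (1/2) + 1/2 * entK (1/2) := by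
      rw [hk1, hk2]; ring_nf
    have hk4 : κ * (entK (1/4) + 3/4 * entK (2/3)) = κ * (entK (1/2) + 1/2 * entK (1/2)) := by
      rw [hk3]
    linear_combination 4*hf - 4*hk4
  refine ⟨κ, fun p hp hp1 => ?_⟩
  rw [hφform p hp hp1, hm0, hC0]; ring

theorem stmt_16 (f : ℝ → ℝ → ℝ → ℝ)
    (hsym1 : ∀ x y z : ℝ, f x y z = f y x z)
    (hsym2 : ∀ x y z : ℝ, f x y z = f x z y)
    (heq : ∀ x y z : ℝ, 0 < x → 0 < y → 0 < z →
      f x y z = f x (y + z) 0 + (y + z) * f 0 (y / (y + z)) (z / (y + z)))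
    (hcont : ContinuousOn (fun p : ℝ × ℝ => f 0 p.1 p.2) (Ioi (0:ℝ) ×ˢ Ioi (0:ℝ))) :
    ∃ (c : ℝ) (Ψ : ℝ → ℝ), ContinuousOn Ψ (Ioi (0:ℝ)) ∧
      ∀ x y z : ℝ, 0 < x → 0 < y → 0 < z →
        f x y z = c * (x * Real.log x + y * Real.log y + z * Real.log z) +
          Ψ (x + y + z) := by
  set φ : ℝ → ℝ := fun p => f 0 p (1-p) with hφ
  have hφc : ContinuousOn φ (Ioo 0 1) := by
    have hmap : MapsTo (fun p : ℝ => (p, 1-p)) (Ioo 0 1) (Ioi (0:ℝ) ×ˢ Ioi (0:ℝ)) := by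
      intro p hp
      constructor
      · exact hp.1
      · simp only [mem_Ioi]; linarith [hp.2]
    exact hcont.comp ((continuous_id.prodMk (continuous_const.sub continuous_id)).continuousOn) hmap
  have hG : ∀ x s : ℝ, f x s 0 = f 0 x s := by
    intro x s
    rw [hsym2 x s 0, hsym1 x 0 s]
  have hkey : ∀ x y z : ℝ, 0 < x → 0 < y → 0 < z →
      f x y z = f 0 x (y+z) + (y+z) * φ (y/(y+z)) := by
    intro x y z hx hy hz
    have hs : (0:ℝ) < y + z := by linarith
    have h1 := heq x y z hx hy hz
    rw [hG x (y+z)] at h1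
    have h2 : z/(y+z) = 1 - y/(y+z) := by field_simp; ring
    rw [h2] at h1
    exact h1
  have hsymφ : ∀ p : ℝ, 0 < p → p < 1 → φ p = φ (1-p) := by
    intro p hp hp1
    have h1 := hkey (1/2) (p/2) ((1-p)/2) (by norm_num) (by linarith) (by linarith)
    have h2 := hkey (1/2) ((1-p)/2) (p/2) (by norm_num) (by linarith) (by linarith)
    have hsp : p/2 + (1-p)/2 = 1/2 := by ring
    have hsp2 : (1-p)/2 + p/2 = 1/2 := by ring
    rw [hsp] at h1
    rw [hsp2] at h2
    have e1 : p/2/(1/2) = p := by ring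
    have e2 : (1-p)/2/(1/2) = 1-p := by ring
    rw [e1] at h1
    rw [e2] at h2
    have h3 : f (1/2) (p/2) ((1-p)/2) = f (1/2) ((1-p)/2) (p/2) := hsym2 _ _ _
    rw [h1, h2] at h3
    linarith
  have hfei : ∀ x y : ℝ, 0 < x → 0 < y → x + y < 1 →
      φ x + (1-x) * φ (y/(1-x)) = φ y + (1-y) * φ (x/(1-y)) := by
    intro x y hx hy hxy
    set z := 1 - x - y with hz
    have hz0 : 0 < z := by rw [hz]; linarith
    have h1 := hkey x y z hx hy hz0
    have h2 := hkey y x z hy hx hz0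
    rw [show y + z = 1 - x by rw [hz]; ring] at h1
    rw [show x + z = 1 - y by rw [hz]; ring] at h2
    have h3 : f x y z = f y x z := hsym1 _ _ _
    rw [h1, h2] at h3
    have e1 : f 0 x (1-x) = φ x := rfl
    have e2 : f 0 y (1-y) = φ y := rfl
    rw [e1, e2] at h3
    exact h3
  obtain ⟨c, hcform⟩ := fei_solution φ hφc hsymφ hfei
  set Ψ : ℝ → ℝ := fun t => f 0 (t/2) (t/2) - c * (t * Real.log (t/2)) with hΨ
  have hΨc : ContinuousOn Ψ (Ioi (0:ℝ)) := by
    apply ContinuousOn.sub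
    · have hmap : MapsTo (fun t : ℝ => (t/2, t/2)) (Ioi (0:ℝ)) (Ioi (0:ℝ) ×ˢ Ioi (0:ℝ)) := by
        intro t ht
        simp only [mem_Ioi] at ht
        constructor <;> (simp only [mem_Ioi]; linarith)
      exact hcont.comp (by fun_prop) hmap
    · intro t ht
      simp only [mem_Ioi] at ht
      apply ContinuousAt.continuousWithinAt
      have hlog : ContinuousAt (fun t : ℝ => Real.log (t/2)) t := by
        have h1 : ContinuousAt Real.log (t/2) := Real.continuousAt_log (by positivity)
        have h2 : ContinuousAt (fun t : ℝ => t/2) t := by fun_prop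
        have h3 : ContinuousAt (Real.log ∘ (fun t : ℝ => t/2)) t :=
          ContinuousAt.comp (f := fun t : ℝ => t/2) (x := t) h1 h2
        exact h3
      exact continuousAt_const.mul (continuousAt_id.mul hlog)
  have hpair : ∀ t x y : ℝ, 0 < x → 0 < y → x + y < t →
      f 0 x (t-x) - c * (x*Real.log x + (t-x)*Real.log (t-x))
        = f 0 y (t-y) - c * (y*Real.log y + (t-y)*Real.log (t-y)) := by
    intro t x y hx hy hxyt
    have hz0 : 0 < t - x - y := by linarith
    have h1 := hkey x y (t-x-y) hx hy hz0
    have h2 := hkey y x (t-x-y) hy hx hz0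
    rw [show y + (t-x-y) = t - x by ring] at h1
    rw [show x + (t-x-y) = t - y by ring] at h2
    have h3 : f x y (t-x-y) = f y x (t-x-y) := hsym1 _ _ _
    rw [h1, h2] at h3
    have htx : 0 < t - x := by linarith
    have hty : 0 < t - y := by linarith
    have hu1 : 0 < y/(t-x) := by positivity
    have hu2 : y/(t-x) < 1 := by rw [div_lt_one htx]; linarith
    have hv1 : 0 < x/(t-y) := by positivity
    have hv2 : x/(t-y) < 1 := by rw [div_lt_one hty]; linarith
    rw [hcform _ hu1 hu2, hcform _ hv1 hv2] at h3
    have hs1 := entK_scale (p := y) (q := t-x) hy (by linarith)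
    have hs2 := entK_scale (p := x) (q := t-y) hx (by linarith)
    rw [show t-y-x = t-x-y by ring] at hs2
    linear_combination h3 - c*hs1 + c*hs2
  have hlevel : ∀ t x : ℝ, 0 < x → x < t →
      f 0 x (t-x) = c * (x*Real.log x + (t-x)*Real.log (t-x)) + Ψ t := by
    intro t x hx hxt
    have ht0 : 0 < t := by linarith
    have hmin1 : min (t-x) (t/2) ≤ t-x := min_le_left _ _
    have hmin2 : min (t-x) (t/2) ≤ t/2 := min_le_right _ _
    have hminpos : 0 < min (t-x) (t/2) := lt_min (by linarith) (by linarith)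
    set w := min (t-x) (t/2) / 2 with hw
    have hw0 : 0 < w := by rw [hw]; linarith
    have hw1 : x + w < t := by rw [hw]; linarith
    have hw2 : t/2 + w < t := by rw [hw]; linarith
    have e1 := hpair t x w hx hw0 hw1
    have e2 := hpair t (t/2) w (by linarith) hw0 hw2
    rw [show t - t/2 = t/2 by ring] at e2
    rw [hΨ]; dsimp only
    linear_combination e1 - e2
  refine ⟨c, Ψ, hΨc, ?_⟩
  intro x y z hx hy hz
  have hs : (0:ℝ) < y + z := by linarith
  have h1 := hkey x y z hx hy hz
  have hu1 : 0 < y/(y+z) := by positivity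
  have hu2 : y/(y+z) < 1 := by rw [div_lt_one hs]; linarith
  rw [hcform _ hu1 hu2] at h1
  have h2 := hlevel (x+y+z) x hx (by linarith)
  rw [show x+y+z-x = y+z by ring] at h2
  have h3 := entK_scale (p := y) (q := y+z) hy (by linarith)
  rw [show y+z-y = z by ring] at h3
  rw [h1, h2]
  linear_combination c * h3
end

section
/- Let f be defined on D = {(x,y,z) ∈ ℝ³ : x,y,z ≥ 0, x+y+z > 0}, symmetric, positively homogeneous of degree 1 (f(λx,λy,λz) = λf(x,y,z) for λ > 0), satisfying f(x,y,z) = f(x+y, z, 0) + f(x,y,0) whenever xy+yz+zx > 0, and suppose x ↦ f(1−x, x, 0) is continuous at a point of (0,1). Then f(x,y,z) = x·log x + y·log y + z·log z − (x+y+z)·log(x+y+z) on D (with some fixed logarithm base and the convention 0·log 0 = 0). -/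
open Set Filter Topology

namespace Ent18

/-- local boundedness of `g` near `b` -/
def LB (g : ℝ → ℝ) (b : ℝ) : Prop := ∃ δ > 0, ∃ M, ∀ y, |y - b| < δ → |g y| ≤ M

/-- the fundamental equation of information -/
def FE (g : ℝ → ℝ) : Prop := ∀ x y : ℝ, 0 < x → 0 < y → x + y ≤ 1 →
  g x + (1 - x) * g (y / (1 - x)) = g y + (1 - y) * g (x / (1 - y))

lemma lb_T {g : ℝ → ℝ} (hFE : FE g) {p r : ℝ} (hp : p ∈ Ioo (0:ℝ) 1)
    (hr : r ∈ Ioo (0:ℝ) 1) (hLp : LB g p) (hLr : LB g r) :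
    LB g (p / (1 - r * (1 - p))) := by
  obtain ⟨hp0, hp1⟩ := hp
  obtain ⟨hr0, hr1⟩ := hr
  obtain ⟨δp, hδp, Mp, hMp⟩ := hLp
  obtain ⟨δr, hδr, Mr, hMr⟩ := hLr
  have hMr0 : 0 ≤ Mr := (abs_nonneg _).trans (hMr r (by simpa using hδr))
  set x : ℝ := r * (1 - p) with hxdef
  have hx0 : 0 < x := mul_pos hr0 (by linarith)
  have hx1 : x + p < 1 := by nlinarith
  have h1x : 0 < 1 - x := by linarith
  have hφp : x / (1 - p) = r := by
    rw [hxdef, mul_div_assoc, div_self (by linarith : (1:ℝ) - p ≠ 0), mul_one]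
  have hφc : ContinuousAt (fun y => x / (1 - y)) p := by
    apply ContinuousAt.div continuousAt_const (by fun_prop)
    intro h; linarith
  have hN : (Metric.ball p δp ∩ (fun y => x / (1 - y)) ⁻¹' Metric.ball r δr
      ∩ Ioo 0 (1 - x)) ∈ 𝓝 p := by
    refine Filter.inter_mem (Filter.inter_mem ?_ ?_) ?_
    · exact Metric.ball_mem_nhds _ hδp
    · refine hφc.preimage_mem_nhds ?_
      show Metric.ball r δr ∈ 𝓝 (x / (1 - p))
      rw [hφp]
      exact Metric.ball_mem_nhds r hδr
    · exact (isOpen_Ioo).mem_nhds ⟨hp0, by linarith⟩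
  obtain ⟨δ, hδ0, hball⟩ := Metric.mem_nhds_iff.1 hN
  have hq : p / (1 - r * (1 - p)) = p / (1 - x) := by rw [hxdef]
  rw [hq]
  refine ⟨δ / (1 - x), by positivity, (Mp + Mr + |g x|) / (1 - x), ?_⟩
  intro z hz
  set y : ℝ := z * (1 - x) with hydef
  have hyp : |y - p| < δ := by
    have : y - p = (z - p / (1 - x)) * (1 - x) := by field_simp [hydef]; rw [hydef]
    rw [this, abs_mul, abs_of_pos h1x]
    calc |z - p / (1 - x)| * (1 - x) < δ / (1 - x) * (1 - x) := by
          apply mul_lt_mul_of_pos_right hz h1x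
      _ = δ := by field_simp
  have hyN := hball (by simpa [Metric.mem_ball, Real.dist_eq] using hyp)
  obtain ⟨⟨hy1, hy2⟩, hy3⟩ := hyN
  have hy0 : 0 < y := hy3.1
  have hyx : y < 1 - x := hy3.2
  have hFExy := hFE x y hx0 hy0 (by linarith)
  have hzy : y / (1 - x) = z := by field_simp [hydef]; rw [hydef]; ring
  rw [hzy] at hFExy
  have hgy : |g y| ≤ Mp := hMp y (by simpa [Metric.mem_ball, Real.dist_eq] using hy1)
  have hgr : |g (x / (1 - y))| ≤ Mr := hMr _ (by simpa [Metric.mem_ball, Real.dist_eq] using hy2)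
  have h1y : 0 < 1 - y := by linarith
  have hgz : (1 - x) * g z = g y + (1 - y) * g (x / (1 - y)) - g x := by linarith
  have : |(1 - x) * g z| ≤ Mp + Mr + |g x| := by
    rw [hgz]
    calc |g y + (1 - y) * g (x / (1 - y)) - g x|
        ≤ |g y| + |(1 - y) * g (x / (1 - y))| + |g x| := by
          have := abs_add_le (g y + (1 - y) * g (x / (1 - y))) (-(g x))
          have h2 := abs_add_le (g y) ((1 - y) * g (x / (1 - y)))
          simp only [abs_neg] at this
          calc |g y + (1 - y) * g (x / (1 - y)) - g x|
              = |g y + (1 - y) * g (x / (1 - y)) + -(g x)| := by ring_nf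
            _ ≤ |g y + (1 - y) * g (x / (1 - y))| + |g x| := by
                simpa using this
            _ ≤ |g y| + |(1 - y) * g (x / (1 - y))| + |g x| := by linarith
      _ ≤ Mp + Mr + |g x| := by
          rw [abs_mul, abs_of_pos h1y]
          have h1y1 : 1 - y ≤ 1 := by linarith
          nlinarith [abs_nonneg (g (x / (1 - y)))]
  rw [abs_mul, abs_of_pos h1x] at this
  rw [le_div_iff₀ h1x]
  nlinarith [abs_nonneg (g z)]

lemma lb_S {g : ℝ → ℝ} (hFE : FE g) {q r : ℝ} (hq : q ∈ Ioo (0:ℝ) 1)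
    (hr : r ∈ Ioo (0:ℝ) 1) (hLq : LB g q) (hLr : LB g r) :
    LB g (q * (1 - r) / (1 - q * r)) := by
  obtain ⟨hq0, hq1⟩ := hq
  obtain ⟨hr0, hr1⟩ := hr
  obtain ⟨δq, hδq, Mq, hMq⟩ := hLq
  obtain ⟨δr, hδr, Mr, hMr⟩ := hLr
  have hMr0 : 0 ≤ Mr := (abs_nonneg _).trans (hMr r (by simpa using hδr))
  have hMq0 : 0 ≤ Mq := (abs_nonneg _).trans (hMq q (by simpa using hδq))
  have hqr1 : 0 < 1 - q * r := by nlinarith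
  set b : ℝ := q * (1 - r) / (1 - q * r) with hbdef
  have hb0 : 0 < b := div_pos (by nlinarith) hqr1
  have hb1 : b < 1 := by
    rw [hbdef, div_lt_one hqr1]; nlinarith
  set x : ℝ := r * (1 - b) with hxdef
  have hx0 : 0 < x := mul_pos hr0 (by linarith)
  have hxb : x + b < 1 := by nlinarith
  have h1x : 0 < 1 - x := by linarith
  have hbq : b * (1 - q * r) = q * (1 - r) := by
    rw [hbdef]; field_simp
  have hkey : b = q * (1 - x) := by
    rw [hxdef]; linear_combination hbq
  have hφb : x / (1 - b) = r := by
    rw [hxdef, mul_div_assoc, div_self (by linarith : (1:ℝ) - b ≠ 0), mul_one]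
  have hφc : ContinuousAt (fun y => x / (1 - y)) b := by
    apply ContinuousAt.div continuousAt_const (by fun_prop)
    intro h; linarith
  have hN : (((fun y => y / (1 - x)) ⁻¹' Metric.ball q δq)
      ∩ (fun y => x / (1 - y)) ⁻¹' Metric.ball r δr ∩ Ioo 0 (1 - x)) ∈ 𝓝 b := by
    refine Filter.inter_mem (Filter.inter_mem ?_ ?_) ?_
    · refine (ContinuousAt.preimage_mem_nhds (by fun_prop) ?_)
      show Metric.ball q δq ∈ 𝓝 (b / (1 - x))
      rw [hkey, mul_div_assoc, div_self (by linarith : (1:ℝ) - x ≠ 0), mul_one]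
      exact Metric.ball_mem_nhds q hδq
    · refine hφc.preimage_mem_nhds ?_
      show Metric.ball r δr ∈ 𝓝 (x / (1 - b))
      rw [hφb]
      exact Metric.ball_mem_nhds r hδr
    · exact (isOpen_Ioo).mem_nhds ⟨hb0, by linarith⟩
  obtain ⟨δ, hδ0, hball⟩ := Metric.mem_nhds_iff.1 hN
  refine ⟨δ, hδ0, |g x| + Mq + Mr, ?_⟩
  intro y hy
  have hyN := hball (by simpa [Metric.mem_ball, Real.dist_eq] using hy)
  obtain ⟨⟨hy1, hy2⟩, hy3⟩ := hyN
  have hy0 : 0 < y := hy3.1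
  have hyx : y < 1 - x := hy3.2
  have h1y : 0 < 1 - y := by linarith
  have hFExy := hFE x y hx0 hy0 (by linarith)
  have hgq : |g (y / (1 - x))| ≤ Mq := hMq _ (by simpa [Metric.mem_ball, Real.dist_eq] using hy1)
  have hgr : |g (x / (1 - y))| ≤ Mr := hMr _ (by simpa [Metric.mem_ball, Real.dist_eq] using hy2)
  have hgy : g y = g x + (1 - x) * g (y / (1 - x)) - (1 - y) * g (x / (1 - y)) := by
    linarith
  rw [hgy]
  have e1 : |(1 - x) * g (y / (1 - x))| ≤ Mq := by
    rw [abs_mul, abs_of_pos h1x]; nlinarith [abs_nonneg (g (y / (1 - x)))]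
  have e2 : |(1 - y) * g (x / (1 - y))| ≤ Mr := by
    rw [abs_mul, abs_of_pos h1y]; nlinarith [abs_nonneg (g (x / (1 - y)))]
  calc |g x + (1 - x) * g (y / (1 - x)) - (1 - y) * g (x / (1 - y))|
      ≤ |g x + (1 - x) * g (y / (1 - x))| + |(1 - y) * g (x / (1 - y))| := abs_sub _ _
    _ ≤ |g x| + |(1 - x) * g (y / (1 - x))| + |(1 - y) * g (x / (1 - y))| := by
        linarith [abs_add_le (g x) ((1 - x) * g (y / (1 - x)))]
    _ ≤ |g x| + Mq + Mr := by linarith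

lemma lb_all {g : ℝ → ℝ} (hFE : FE g) {x₀ : ℝ} (hx₀ : x₀ ∈ Ioo (0:ℝ) 1)
    (hc : ContinuousAt g x₀) : ∀ b ∈ Ioo (0:ℝ) 1, LB g b := by
  obtain ⟨hx₀0, hx₀1⟩ := hx₀
  set U : Set ℝ := {b : ℝ | LB g b} with hUdef
  have hUopen : IsOpen U := by
    rw [Metric.isOpen_iff]
    rintro b ⟨δ, hδ, M, hM⟩
    refine ⟨δ / 2, by positivity, ?_⟩
    intro b' hb'
    rw [Metric.mem_ball, Real.dist_eq] at hb'
    exact ⟨δ / 2, by positivity, M, fun y hy => hM y (by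
      have := abs_sub_le y b' b
      linarith)⟩
  have hx₀U : x₀ ∈ U := by
    obtain ⟨δ, hδ, hb⟩ := Metric.continuousAt_iff.1 hc 1 one_pos
    refine ⟨δ, hδ, |g x₀| + 1, fun y hy => ?_⟩
    have := hb (show dist y x₀ < δ by rwa [Real.dist_eq])
    rw [Real.dist_eq] at this
    have h2 := abs_sub_abs_le_abs_sub (g y) (g x₀)
    linarith
  -- an open ball around x₀ inside U ∩ Ioo 0 1
  obtain ⟨ε, hε0, hεball⟩ := Metric.isOpen_iff.1 (hUopen.inter isOpen_Ioo) x₀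
    ⟨hx₀U, hx₀0, hx₀1⟩
  have hclosed : ∀ b ∈ Ioo (0:ℝ) 1, b ∈ closure U → b ∈ U := by
    rintro b ⟨hb0, hb1⟩ hcl
    -- T b' = b' / (1 - x₀ * (1 - b')) ; ρ b' = (T b' - b) / (T b' * (1 - b))
    set T : ℝ → ℝ := fun b' => b' / (1 - x₀ * (1 - b')) with hTdef
    set ρ : ℝ → ℝ := fun b' => (T b' - b) / (T b' * (1 - b)) with hρdef
    have hDb : 0 < 1 - x₀ * (1 - b) := by nlinarith
    have hTb0 : 0 < T b := div_pos hb0 hDb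
    have hρb : ρ b = x₀ := by
      show (T b - b) / (T b * (1 - b)) = x₀
      have h1 : T b - b = T b * (x₀ * (1 - b)) := by
        show b / (1 - x₀ * (1 - b)) - b = b / (1 - x₀ * (1 - b)) * (x₀ * (1 - b))
        field_simp
        ring
      have hA : T b * (1 - b) ≠ 0 := ne_of_gt (mul_pos hTb0 (by linarith))
      have h2 : T b * (x₀ * (1 - b)) = x₀ * (T b * (1 - b)) := by ring
      rw [h1, h2, mul_div_assoc, div_self hA, mul_one]
    have hρc : ContinuousAt ρ b := by
      have hTc : ContinuousAt T b :=
        ContinuousAt.div (by fun_prop) (by fun_prop) (ne_of_gt hDb)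
      exact ContinuousAt.div (hTc.sub continuousAt_const)
        ((hTc.mul continuousAt_const))
        (ne_of_gt (mul_pos hTb0 (by linarith)))
    obtain ⟨δs, hδs0, hδsb⟩ := Metric.continuousAt_iff.1 hρc ε hε0
    set δ2 := min δs (min b (1 - b)) with hδ2def
    have hδ20 : 0 < δ2 := lt_min hδs0 (lt_min hb0 (by linarith))
    obtain ⟨b', hb'U, hb'd⟩ := Metric.mem_closure_iff.1 hcl δ2 hδ20
    rw [Real.dist_eq] at hb'd
    have hd : |b' - b| < δ2 := by rw [abs_sub_comm]; exact hb'd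
    have hdb : |b' - b| < b := lt_of_lt_of_le hd ((min_le_right _ _).trans (min_le_left _ _))
    have hd1b : |b' - b| < 1 - b := lt_of_lt_of_le hd ((min_le_right _ _).trans (min_le_right _ _))
    have hds : |b' - b| < δs := lt_of_lt_of_le hd (min_le_left _ _)
    obtain ⟨hdbl, hdbr⟩ := abs_lt.1 hdb
    obtain ⟨hd1l, hd1r⟩ := abs_lt.1 hd1b
    have hb'0 : 0 < b' := by linarith
    have hb'1 : b' < 1 := by linarith
    have hρball : ρ b' ∈ Metric.ball x₀ ε := by
      have := hδsb (show dist b' b < δs by rwa [Real.dist_eq])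
      rwa [hρb] at this
    obtain ⟨hρU, hρ0, hρ1⟩ := hεball hρball
    set r' : ℝ := ρ b' with hr'def2
    set q : ℝ := T b' with hqdef2
    have hDb' : 0 < 1 - x₀ * (1 - b') := by nlinarith
    have hq0 : 0 < q := div_pos hb'0 hDb'
    have hq1 : q < 1 := by
      show b' / (1 - x₀ * (1 - b')) < 1
      rw [div_lt_one hDb']; nlinarith
    have hqU : q ∈ U := lb_T hFE ⟨hb'0, hb'1⟩ ⟨hx₀0, hx₀1⟩ hb'U hx₀U
    have hr'eq : r' = (q - b) / (q * (1 - b)) := rfl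
    have hqb : q * (1 - b) ≠ 0 := ne_of_gt (mul_pos hq0 (by linarith))
    have e0 : r' * (q * (1 - b)) = q - b := by
      rw [hr'eq, div_mul_cancel₀ _ hqb]
    have hne : (0:ℝ) < 1 - q * r' := by nlinarith
    have e1 : q * (1 - r') = b * (1 - q * r') := by linear_combination (-1 : ℝ) * e0
    have hS : q * (1 - r') / (1 - q * r') = b := by
      rw [div_eq_iff (ne_of_gt hne)]; exact e1
    have := lb_S hFE ⟨hq0, hq1⟩ ⟨hρ0, hρ1⟩ hqU hρU
    rw [hS] at this
    exact this
  intro b hb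
  by_contra hbU
  have hVopen : IsOpen (closure U)ᶜ := isClosed_closure.isOpen_compl
  have hcover : Ioo (0:ℝ) 1 ⊆ U ∪ (closure U)ᶜ := fun t ht => by
    by_cases h : t ∈ closure U
    · exact Or.inl (hclosed t ht h)
    · exact Or.inr h
  have h1 : (Ioo (0:ℝ) 1 ∩ U).Nonempty := ⟨x₀, ⟨hx₀0, hx₀1⟩, hx₀U⟩
  have h2 : (Ioo (0:ℝ) 1 ∩ (closure U)ᶜ).Nonempty :=
    ⟨b, hb, fun h => hbU (hclosed b hb h)⟩
  obtain ⟨t, _, htU, htV⟩ := isPreconnected_Ioo U (closure U)ᶜ hUopen hVopen hcover h1 h2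
  exact htV (subset_closure htU)

lemma bound_Icc {g : ℝ → ℝ} (hlb : ∀ b ∈ Ioo (0:ℝ) 1, LB g b) :
    ∃ M₀, ∀ t ∈ Icc (1/4:ℝ) (3/4), |g t| ≤ M₀ := by
  have hsub : Icc (1/4:ℝ) (3/4) ⊆ Ioo 0 1 := fun t ht => ⟨by linarith [ht.1], by linarith [ht.2]⟩
  choose δ hδ0 M hM using hlb
  classical
  set u : ℝ → Set ℝ := fun b => if hb : b ∈ Ioo (0:ℝ) 1 then Metric.ball b (δ b hb) else univ
    with hudef
  have hu : ∀ b ∈ Icc (1/4:ℝ) (3/4), u b ∈ 𝓝 b := by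
    intro b hb
    have hbI := hsub hb
    simp only [hudef, dif_pos hbI]
    exact Metric.ball_mem_nhds _ (hδ0 b hbI)
  obtain ⟨t, htmem, hcover⟩ := (isCompact_Icc).elim_nhds_subcover u hu
  set Mv : ℝ → ℝ := fun b => if hb : b ∈ Ioo (0:ℝ) 1 then M b hb else 0 with hMvdef
  refine ⟨∑ b ∈ t, |Mv b|, ?_⟩
  intro y hy
  obtain ⟨b, hbt, hyb⟩ := Set.mem_iUnion₂.1 (hcover hy)
  have hbI : b ∈ Ioo (0:ℝ) 1 := hsub (htmem b hbt)
  rw [hudef] at hyb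
  simp only [dif_pos hbI] at hyb
  have h1 : |g y| ≤ Mv b := by
    rw [hMvdef]; simp only [dif_pos hbI]
    exact hM b hbI y (by simpa [Metric.mem_ball, Real.dist_eq] using hyb)
  calc |g y| ≤ Mv b := h1
    _ ≤ |Mv b| := le_abs_self _
    _ ≤ ∑ b ∈ t, |Mv b| := Finset.single_le_sum (f := fun b => |Mv b|) (fun i _ => abs_nonneg _) hbt

lemma bound_global {g : ℝ → ℝ} (hFE : FE g)
    (hsym : ∀ t ∈ Icc (0:ℝ) 1, g (1 - t) = g t)
    (hlb : ∀ b ∈ Ioo (0:ℝ) 1, LB g b) :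
    ∃ Mg, 0 ≤ Mg ∧ ∀ y, 0 < y → y < 1 → |g y| ≤ Mg := by
  obtain ⟨M₀, hM₀⟩ := bound_Icc hlb
  have hM₀0 : 0 ≤ M₀ := le_trans (abs_nonneg _) (hM₀ (1/2) (by norm_num))
  obtain ⟨K, hKdef⟩ : ∃ K:ℝ, K = |g (1/2)| + M₀ := ⟨_, rfl⟩
  have hK0 : 0 ≤ K := by rw [hKdef]; positivity
  have hrec : ∀ y, 0 < y → y ≤ 1/4 → |g y| ≤ K + |g (2*y)| / 2 := by
    intro y hy0 hy4
    have hFEh := hFE (1/2) y (by norm_num) hy0 (by linarith)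
    have h2y : y / (1 - (1/2) : ℝ) = 2*y := by ring
    rw [h2y] at hFEh
    have harg : (1/2 : ℝ)/(1-y) ∈ Icc (1/4:ℝ) (3/4) := by
      constructor
      · rw [le_div_iff₀ (by linarith)]; linarith
      · rw [div_le_iff₀ (by linarith)]; linarith
    have hb := hM₀ _ harg
    have hgy : g y = g (1/2) + (1 - 1/2) * g (2*y) - (1-y) * g ((1/2)/(1-y)) := by
      linarith
    rw [hgy]
    have e2 : |(1 - 1/2) * g (2*y)| = |g (2*y)| / 2 := by
      rw [abs_mul, abs_of_pos (by norm_num : (0:ℝ) < 1 - 1/2)]; ring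
    have e3 : |(1-y) * g ((1/2)/(1-y))| ≤ M₀ := by
      rw [abs_mul, abs_of_pos (by linarith : (0:ℝ) < 1 - y)]
      nlinarith [abs_nonneg (g ((1/2)/(1-y)))]
    calc |g (1/2) + (1 - 1/2) * g (2*y) - (1-y) * g ((1/2)/(1-y))|
        ≤ |g (1/2) + (1 - 1/2) * g (2*y)| + |(1-y) * g ((1/2)/(1-y))| := abs_sub _ _
      _ ≤ |g (1/2)| + |(1 - 1/2) * g (2*y)| + |(1-y) * g ((1/2)/(1-y))| := by
          linarith [abs_add_le (g (1/2)) ((1 - 1/2) * g (2*y))]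
      _ ≤ K + |g (2*y)| / 2 := by rw [e2] at *; rw [hKdef]; linarith
  have hind : ∀ n : ℕ, ∀ y, 0 < y → 1/4 * (1/2)^n ≤ y → y ≤ 1/2 → |g y| ≤ 2*K + M₀ := by
    intro n
    induction n with
    | zero =>
      intro y hy0 hylb hyub
      have := hM₀ y ⟨by linarith [hylb], by linarith⟩
      linarith
    | succ n ih =>
      intro y hy0 hylb hyub
      by_cases hcase : 1/4 ≤ y
      · have := hM₀ y ⟨hcase, by linarith⟩
        linarith
      · push_neg at hcase
        have h2y := ih (2*y) (by linarith) (by rw [pow_succ] at hylb; ring_nf at hylb ⊢; linarith) (by linarith)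
        have := hrec y hy0 (by linarith)
        linarith
  refine ⟨2*K + M₀, by linarith, ?_⟩
  have half : ∀ y, 0 < y → y ≤ 1/2 → |g y| ≤ 2*K + M₀ := by
    intro y hy0 h
    obtain ⟨n, hn⟩ := exists_pow_lt_of_lt_one (show (0:ℝ) < 4*y by linarith)
      (show (1/2:ℝ) < 1 by norm_num)
    exact hind n y hy0 (by linarith) h
  intro y hy0 hy1
  rcases le_or_gt y (1/2) with h | h
  · exact half y hy0 h
  · have hs := hsym y ⟨le_of_lt hy0, le_of_lt hy1⟩
    rw [← hs]
    exact half (1-y) (by linarith) (by linarith)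

/-- oscillation of `g` near `b` is at most `V` -/
def OscLe (g : ℝ → ℝ) (b V : ℝ) : Prop :=
  ∀ ε > 0, ∃ δ > 0, ∀ s t, |s - b| < δ → |t - b| < δ → |g s - g t| ≤ V + ε

lemma osc_step_half {g : ℝ → ℝ} (hFE : FE g) {x₀ : ℝ} (hx₀0 : 0 < x₀) (hx₀1 : x₀ < 1)
    (hc : ContinuousAt g x₀) {V : ℝ} (hV : 0 ≤ V)
    (hall : ∀ b ∈ Ioo (0:ℝ) 1, OscLe g b V) :
    ∀ b ∈ Ioo (0:ℝ) 1, b ≤ 1/2 → OscLe g b ((1 - x₀/2) * V) := by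
  rintro b ⟨hb0, hb1⟩ hbh ε hε
  obtain ⟨x, hxdef⟩ : ∃ x:ℝ, x = x₀*(1-b) := ⟨_, rfl⟩
  have hx0 : 0 < x := by rw [hxdef]; exact mul_pos hx₀0 (by linarith)
  have hxb : x + b < 1 := by rw [hxdef]; nlinarith
  have h1x : 0 < 1 - x := by linarith
  have hxhalf : x₀/2 ≤ x := by rw [hxdef]; nlinarith
  obtain ⟨q, hqdef⟩ : ∃ q:ℝ, q = b/(1-x) := ⟨_, rfl⟩
  have hq0 : 0 < q := by rw [hqdef]; positivity
  have hq1 : q < 1 := by rw [hqdef, div_lt_one h1x]; linarith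
  obtain ⟨δq, hδq0, hδq⟩ := hall q ⟨hq0, hq1⟩ (ε/2) (by linarith)
  have hφb : x/(1-b) = x₀ := by
    rw [hxdef, mul_div_assoc, div_self (by linarith : (1:ℝ) - b ≠ 0), mul_one]
  have hgc : ContinuousAt (fun y => g (x/(1-y))) b := by
    refine ContinuousAt.comp ?_ ?_
    · show ContinuousAt g (x/(1-b)); rwa [hφb]
    · exact ContinuousAt.div continuousAt_const (by fun_prop) (by intro h; linarith)
  have hψc : ContinuousAt (fun y => (1-y) * g (x/(1-y))) b :=
    (continuousAt_const.sub continuousAt_id).mul hgc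
  obtain ⟨δψ, hδψ0, hδψ⟩ := Metric.continuousAt_iff.1 hψc (ε/4) (by linarith)
  obtain ⟨δ, hδdef⟩ : ∃ δ:ℝ, δ = min (min δψ (δq * (1-x))) (min b ((1-x) - b)) := ⟨_, rfl⟩
  have hδ0 : 0 < δ := by
    rw [hδdef]
    exact lt_min (lt_min hδψ0 (by positivity)) (lt_min hb0 (by linarith))
  refine ⟨δ, hδ0, ?_⟩
  intro s t hs ht
  have hδ1 : δ ≤ δψ := by rw [hδdef]; exact (min_le_left _ _).trans (min_le_left _ _)
  have hδ2 : δ ≤ δq * (1-x) := by rw [hδdef]; exact (min_le_left _ _).trans (min_le_right _ _)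
  have hδ3 : δ ≤ b := by rw [hδdef]; exact (min_le_right _ _).trans (min_le_left _ _)
  have hδ4 : δ ≤ (1-x) - b := by rw [hδdef]; exact (min_le_right _ _).trans (min_le_right _ _)
  have key : ∀ y, |y - b| < δ →
      g y = g x + (1-x) * g (y/(1-x)) - (1-y) * g (x/(1-y)) := by
    intro y hy
    obtain ⟨hyl, hyr⟩ := abs_lt.1 hy
    have hy0 : 0 < y := by linarith
    have hyx : y < 1 - x := by linarith
    have := hFE x y hx0 hy0 (by linarith)
    linarith
  have hqb : ∀ y, |y - b| < δ → |y/(1-x) - q| < δq := by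
    intro y hy
    rw [hqdef, div_sub_div_same, abs_div, abs_of_pos h1x, div_lt_iff₀ h1x]
    calc |y - b| < δ := hy
      _ ≤ δq * (1-x) := hδ2
  have hψb : ∀ y, |y - b| < δ →
      |(1-y) * g (x/(1-y)) - (1-b) * g (x/(1-b))| < ε/4 := by
    intro y hy
    have := hδψ (show dist y b < δψ by rw [Real.dist_eq]; linarith [hδ1, hy])
    rwa [Real.dist_eq] at this
  rw [key s hs, key t ht]
  have e1 := hδq _ _ (hqb s hs) (hqb t ht)
  have e2 := hψb s hs
  have e3 := hψb t ht
  have habs : |(1-x) * (g (s/(1-x)) - g (t/(1-x)))| ≤ (1-x) * (V + ε/2) := by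
    rw [abs_mul, abs_of_pos h1x]
    exact mul_le_mul_of_nonneg_left e1 (le_of_lt h1x)
  have hsplit : g x + (1-x) * g (s/(1-x)) - (1-s) * g (x/(1-s))
      - (g x + (1-x) * g (t/(1-x)) - (1-t) * g (x/(1-t)))
      = (1-x) * (g (s/(1-x)) - g (t/(1-x)))
        - ((1-s) * g (x/(1-s)) - (1-b) * g (x/(1-b)))
        + ((1-t) * g (x/(1-t)) - (1-b) * g (x/(1-b))) := by ring
  rw [hsplit]
  have hfin : (1-x) * (V + ε/2) + ε/4 + ε/4 ≤ (1 - x₀/2) * V + ε := by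
    have h1 : (1-x) * V ≤ (1 - x₀/2) * V := by
      apply mul_le_mul_of_nonneg_right _ hV; linarith
    nlinarith [hε]
  calc |(1-x) * (g (s/(1-x)) - g (t/(1-x)))
        - ((1-s) * g (x/(1-s)) - (1-b) * g (x/(1-b)))
        + ((1-t) * g (x/(1-t)) - (1-b) * g (x/(1-b)))|
      ≤ |(1-x) * (g (s/(1-x)) - g (t/(1-x)))
        - ((1-s) * g (x/(1-s)) - (1-b) * g (x/(1-b)))|
        + |(1-t) * g (x/(1-t)) - (1-b) * g (x/(1-b))| := abs_add_le _ _
    _ ≤ |(1-x) * (g (s/(1-x)) - g (t/(1-x)))|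
        + |(1-s) * g (x/(1-s)) - (1-b) * g (x/(1-b))|
        + |(1-t) * g (x/(1-t)) - (1-b) * g (x/(1-b))| := by
        linarith [abs_sub ((1-x) * (g (s/(1-x)) - g (t/(1-x))))
          ((1-s) * g (x/(1-s)) - (1-b) * g (x/(1-b)))]
    _ ≤ (1-x) * (V + ε/2) + ε/4 + ε/4 := by linarith
    _ ≤ (1 - x₀/2) * V + ε := hfin

lemma osc_step {g : ℝ → ℝ} (hFE : FE g)
    (hsym : ∀ t ∈ Icc (0:ℝ) 1, g (1 - t) = g t)
    {x₀ : ℝ} (hx₀0 : 0 < x₀) (hx₀1 : x₀ < 1)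
    (hc : ContinuousAt g x₀) {V : ℝ} (hV : 0 ≤ V)
    (hall : ∀ b ∈ Ioo (0:ℝ) 1, OscLe g b V) :
    ∀ b ∈ Ioo (0:ℝ) 1, OscLe g b ((1 - x₀/2) * V) := by
  rintro b ⟨hb0, hb1⟩
  rcases le_or_gt b (1/2) with hbh | hbh
  · exact osc_step_half hFE hx₀0 hx₀1 hc hV hall b ⟨hb0, hb1⟩ hbh
  · intro ε hε
    obtain ⟨δ', hδ'0, hδ'⟩ := osc_step_half hFE hx₀0 hx₀1 hc hV hall (1-b)
      ⟨by linarith, by linarith⟩ (by linarith) ε hε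
    refine ⟨min δ' (min b (1-b)), lt_min hδ'0 (lt_min hb0 (by linarith)), ?_⟩
    intro s t hs ht
    have hs' : |s - b| < δ' := lt_of_lt_of_le hs (min_le_left _ _)
    have ht' : |t - b| < δ' := lt_of_lt_of_le ht (min_le_left _ _)
    have hsb : |s - b| < b := lt_of_lt_of_le hs ((min_le_right _ _).trans (min_le_left _ _))
    have hs1b : |s - b| < 1-b := lt_of_lt_of_le hs ((min_le_right _ _).trans (min_le_right _ _))
    have htb : |t - b| < b := lt_of_lt_of_le ht ((min_le_right _ _).trans (min_le_left _ _))
    have ht1b : |t - b| < 1-b := lt_of_lt_of_le ht ((min_le_right _ _).trans (min_le_right _ _))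
    obtain ⟨hsl, hsr⟩ := abs_lt.1 hsb
    obtain ⟨hsl1, hsr1⟩ := abs_lt.1 hs1b
    obtain ⟨htl, htr⟩ := abs_lt.1 htb
    obtain ⟨htl1, htr1⟩ := abs_lt.1 ht1b
    have hgs : g (1 - s) = g s := hsym s ⟨by linarith, by linarith⟩
    have hgt : g (1 - t) = g t := hsym t ⟨by linarith, by linarith⟩
    rw [← hgs, ← hgt]
    apply hδ' (1-s) (1-t)
    · rw [show (1:ℝ) - s - (1-b) = -(s-b) by ring, abs_neg]; exact hs'
    · rw [show (1:ℝ) - t - (1-b) = -(t-b) by ring, abs_neg]; exact ht'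

lemma cont_all {g : ℝ → ℝ} (hFE : FE g)
    (hsym : ∀ t ∈ Icc (0:ℝ) 1, g (1 - t) = g t)
    {x₀ : ℝ} (hx₀0 : 0 < x₀) (hx₀1 : x₀ < 1) (hc : ContinuousAt g x₀) :
    ∀ b ∈ Ioo (0:ℝ) 1, ContinuousAt g b := by
  obtain ⟨Mg, hMg0, hMg⟩ := bound_global hFE hsym (lb_all hFE ⟨hx₀0, hx₀1⟩ hc)
  have hbase : ∀ b ∈ Ioo (0:ℝ) 1, OscLe g b (2*Mg) := by
    rintro b ⟨hb0, hb1⟩ ε hε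
    refine ⟨min b (1-b), lt_min hb0 (by linarith), ?_⟩
    intro s t hs ht
    have hsb : |s - b| < b := lt_of_lt_of_le hs (min_le_left _ _)
    have hs1b : |s - b| < 1-b := lt_of_lt_of_le hs (min_le_right _ _)
    have htb : |t - b| < b := lt_of_lt_of_le ht (min_le_left _ _)
    have ht1b : |t - b| < 1-b := lt_of_lt_of_le ht (min_le_right _ _)
    obtain ⟨hsl, hsr⟩ := abs_lt.1 hsb
    obtain ⟨hsl1, hsr1⟩ := abs_lt.1 hs1b
    obtain ⟨htl, htr⟩ := abs_lt.1 htb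
    obtain ⟨htl1, htr1⟩ := abs_lt.1 ht1b
    have h1 := hMg s (by linarith) (by linarith)
    have h2 := hMg t (by linarith) (by linarith)
    calc |g s - g t| ≤ |g s| + |g t| := abs_sub _ _
      _ ≤ 2*Mg + ε := by linarith
  have hθ0 : (0:ℝ) < 1 - x₀/2 := by linarith
  have hθ1 : 1 - x₀/2 < 1 := by linarith
  have hiter : ∀ n : ℕ, ∀ b ∈ Ioo (0:ℝ) 1, OscLe g b ((1 - x₀/2)^n * (2*Mg)) := by
    intro n
    induction n with
    | zero => simpa using hbase
    | succ n ih =>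
      have hV : 0 ≤ (1 - x₀/2)^n * (2*Mg) := by positivity
      have := osc_step hFE hsym hx₀0 hx₀1 hc hV ih
      intro b hb
      have h2 := this b hb
      rw [show (1 - x₀/2) * ((1 - x₀/2)^n * (2*Mg)) = (1 - x₀/2)^(n+1) * (2*Mg) by ring]
        at h2
      exact h2
  rintro b ⟨hb0, hb1⟩
  rw [Metric.continuousAt_iff]
  intro ε hε
  obtain ⟨n, hn⟩ := exists_pow_lt_of_lt_one
    (show (0:ℝ) < ε/(2*(2*Mg+1)) by positivity) hθ1
  have hpow : (1 - x₀/2)^n * (2*Mg) < ε/2 := by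
    have h1 : (1 - x₀/2)^n * (2*Mg) ≤ (1 - x₀/2)^n * (2*Mg+1) := by
      apply mul_le_mul_of_nonneg_left (by linarith) (by positivity)
    have h2 : (1 - x₀/2)^n * (2*Mg+1) < ε/(2*(2*Mg+1)) * (2*Mg+1) :=
      mul_lt_mul_of_pos_right hn (by linarith)
    have h3 : ε/(2*(2*Mg+1)) * (2*Mg+1) = ε/2 := by field_simp
    linarith
  obtain ⟨δ, hδ0, hδ⟩ := hiter n b ⟨hb0, hb1⟩ (ε/4) (by linarith)
  refine ⟨δ, hδ0, ?_⟩
  intro y hy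
  rw [Real.dist_eq] at hy ⊢
  have := hδ y b hy (by simpa using hδ0)
  linarith

lemma tendsto_zero {g : ℝ → ℝ} (hFE : FE g)
    (hcont : ∀ b ∈ Ioo (0:ℝ) 1, ContinuousAt g b)
    {Mg : ℝ} (hMg0 : 0 ≤ Mg) (hMg : ∀ y, 0 < y → y < 1 → |g y| ≤ Mg) :
    Filter.Tendsto g (nhdsWithin 0 (Ioi 0)) (nhds 0) := by
  rw [Metric.tendsto_nhdsWithin_nhds]
  intro ε' hε'
  obtain ⟨ε, hεdef⟩ : ∃ ε:ℝ, ε = ε'/4 := ⟨_, rfl⟩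
  have hε : 0 < ε := by rw [hεdef]; linarith
  have hψc : ContinuousAt (fun y => (1-y) * g ((1/2)/(1-y))) 0 := by
    refine (continuousAt_const.sub continuousAt_id).mul (ContinuousAt.comp ?_ ?_)
    · show ContinuousAt g ((1/2)/(1-(0:ℝ)))
      norm_num
      exact hcont (1/2) (by norm_num)
    · exact ContinuousAt.div continuousAt_const (by fun_prop) (by norm_num)
  obtain ⟨δψ, hδψ0, hδψ⟩ := Metric.continuousAt_iff.1 hψc ε hε
  obtain ⟨δ₀, hδ₀def⟩ : ∃ d:ℝ, d = (min δψ (1/4))/2 := ⟨_, rfl⟩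
  have hδ₀0 : 0 < δ₀ := by rw [hδ₀def]; positivity
  have hδ₀ψ : δ₀ < δψ := by
    rw [hδ₀def]
    have : min δψ (1/4) ≤ δψ := min_le_left _ _
    linarith [lt_min hδψ0 (show (0:ℝ) < 1/4 by norm_num)]
  have hδ₀4 : δ₀ ≤ 1/8 := by
    rw [hδ₀def]
    have : min δψ (1/4) ≤ 1/4 := min_le_right _ _
    linarith
  have hrecε : ∀ y, 0 < y → y ≤ δ₀ → |g y| ≤ ε + |g (2*y)|/2 := by
    intro y hy0 hy
    have hFEh := hFE (1/2) y (by norm_num) hy0 (by linarith)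
    have h2y : y / (1 - (1/2) : ℝ) = 2*y := by ring
    rw [h2y] at hFEh
    have hψ : |(1-y) * g ((1/2)/(1-y)) - g (1/2)| < ε := by
      have h0 : (fun y => (1-y) * g ((1/2)/(1-y))) 0 = g (1/2) := by norm_num
      have := hδψ (show dist y 0 < δψ by
        rw [Real.dist_eq, sub_zero, abs_of_pos hy0]; linarith)
      rw [Real.dist_eq] at this
      simpa using this
    have hgy : g y = (g (1/2) - (1-y) * g ((1/2)/(1-y))) + (1 - 1/2) * g (2*y) := by
      linarith
    rw [hgy]
    calc |(g (1/2) - (1-y) * g ((1/2)/(1-y))) + (1 - 1/2) * g (2*y)|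
        ≤ |g (1/2) - (1-y) * g ((1/2)/(1-y))| + |(1 - 1/2) * g (2*y)| := abs_add_le _ _
      _ ≤ ε + |g (2*y)|/2 := by
          rw [abs_sub_comm, abs_mul, abs_of_pos (by norm_num : (0:ℝ) < 1 - 1/2)]
          linarith [hψ]
  have hband : ∀ n : ℕ, ∀ y, 0 < y → δ₀*(1/2)^(n+1) < y → y ≤ δ₀*(1/2)^n →
      |g y| ≤ 2*ε + (1/2)^(n+1)*Mg := by
    intro n
    induction n with
    | zero =>
      intro y hy0 hyl hyu
      simp only [pow_zero, mul_one] at hyu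
      have h1 := hrecε y hy0 hyu
      have h2 : |g (2*y)| ≤ Mg := hMg (2*y) (by linarith) (by linarith)
      have : ((1:ℝ)/2)^(0+1) = 1/2 := by norm_num
      rw [this]
      linarith
    | succ n ih =>
      intro y hy0 hyl hyu
      have hyδ : y ≤ δ₀ := by
        calc y ≤ δ₀*(1/2)^(n+1) := hyu
          _ ≤ δ₀*1 := by
              apply mul_le_mul_of_nonneg_left _ (le_of_lt hδ₀0)
              exact pow_le_one₀ (by norm_num) (by norm_num)
          _ = δ₀ := mul_one _
      have h1 := hrecε y hy0 hyδ
      have hyl' : δ₀*(1/2)^(n+1) < 2*y := by rw [pow_succ] at hyl; nlinarith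
      have hyu' : 2*y ≤ δ₀*(1/2)^n := by rw [pow_succ] at hyu; nlinarith
      have h2 := ih (2*y) (by linarith) hyl' hyu'
      rw [pow_succ ((1:ℝ)/2) (n+1)]
      linarith
  have hbandex : ∀ y, 0 < y → y ≤ δ₀ → ∃ n : ℕ, δ₀*(1/2)^(n+1) < y ∧ y ≤ δ₀*(1/2)^n := by
    intro y hy0 hyδ
    have hex : ∃ n : ℕ, δ₀*(1/2)^(n+1) < y := by
      obtain ⟨m, hm⟩ := exists_pow_lt_of_lt_one (show (0:ℝ) < y/δ₀ by positivity)
        (show (1/2:ℝ) < 1 by norm_num)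
      refine ⟨m, ?_⟩
      have h1 : ((1:ℝ)/2)^(m+1) ≤ (1/2)^m := by
        apply pow_le_pow_of_le_one (by norm_num) (by norm_num) (by omega)
      have h2 : δ₀*(1/2)^m < δ₀*(y/δ₀) := mul_lt_mul_of_pos_left hm hδ₀0
      have h3 : δ₀*(y/δ₀) = y := by field_simp
      nlinarith [pow_nonneg (show (0:ℝ) ≤ 1/2 by norm_num) (m+1)]
    classical
    obtain ⟨n, hprop⟩ : ∃ n, δ₀*(1/2)^(n+1) < y ∧ ∀ m, m < n → ¬(δ₀*(1/2)^(m+1) < y) :=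
      ⟨Nat.find hex, Nat.find_spec hex, fun m hm => Nat.find_min hex hm⟩
    refine ⟨n, hprop.1, ?_⟩
    rcases n with _ | m
    · simpa using hyδ
    · exact not_lt.1 (hprop.2 m (by omega))
  have hex2 : ∃ n₀ : ℕ, (1/2:ℝ)^n₀ * Mg < ε := by
    obtain ⟨m, hm⟩ := exists_pow_lt_of_lt_one (show (0:ℝ) < ε/(Mg+1) by positivity)
      (show (1/2:ℝ) < 1 by norm_num)
    refine ⟨m, ?_⟩
    have h1 : (1/2:ℝ)^m * Mg ≤ (1/2)^m * (Mg+1) := by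
      apply mul_le_mul_of_nonneg_left (by linarith) (by positivity)
    have h2 : (1/2:ℝ)^m * (Mg+1) < ε/(Mg+1) * (Mg+1) :=
      mul_lt_mul_of_pos_right hm (by linarith)
    have h3 : ε/(Mg+1) * (Mg+1) = ε := by field_simp
    linarith
  obtain ⟨n₀, hn₀⟩ := hex2
  refine ⟨δ₀*(1/2)^n₀, by positivity, ?_⟩
  intro y hyIoi hyd
  rw [Real.dist_eq, sub_zero] at hyd
  have hy0 : (0:ℝ) < y := hyIoi
  rw [abs_of_pos hy0] at hyd
  have hpow1 : ((1:ℝ)/2)^n₀ ≤ 1 := pow_le_one₀ (by norm_num) (by norm_num)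
  have hyδ₀ : y ≤ δ₀ := by nlinarith
  obtain ⟨n, hn1, hn2⟩ := hbandex y hy0 hyδ₀
  have hnn₀ : n₀ ≤ n := by
    by_contra hlt
    push_neg at hlt
    have hle : ((1:ℝ)/2)^(n₀) ≤ (1/2)^(n+1) :=
      pow_le_pow_of_le_one (by norm_num) (by norm_num) (by omega)
    nlinarith
  have hb := hband n y hy0 hn1 hn2
  have hle : ((1:ℝ)/2)^(n+1) ≤ (1/2)^(n₀) :=
    pow_le_pow_of_le_one (by norm_num) (by norm_num) (by omega)
  rw [Real.dist_eq, sub_zero]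
  have h4 : ((1:ℝ)/2)^(n+1)*Mg ≤ (1/2)^(n₀)*Mg := mul_le_mul_of_nonneg_right hle hMg0
  rw [hεdef] at hn₀ hb
  calc |g y| ≤ 2*(ε'/4) + (1/2:ℝ)^(n+1)*Mg := hb
    _ < ε' := by linarith

lemma tendsto_one {g : ℝ → ℝ} (hsym : ∀ t ∈ Icc (0:ℝ) 1, g (1 - t) = g t)
    (h0 : Filter.Tendsto g (nhdsWithin 0 (Ioi 0)) (nhds 0)) :
    Filter.Tendsto g (nhdsWithin 1 (Iio 1)) (nhds 0) := by
  rw [Metric.tendsto_nhdsWithin_nhds] at h0 ⊢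
  intro ε hε
  obtain ⟨δ, hδ0, hδ⟩ := h0 ε hε
  refine ⟨min δ 1, lt_min hδ0 one_pos, ?_⟩
  intro y hy hyd
  rw [Real.dist_eq] at hyd
  have hy1 : y < 1 := hy
  have habs : 1 - y < min δ 1 := by
    rw [abs_of_neg (by linarith : y - 1 < 0)] at hyd; linarith
  have hy0 : 0 < y := by
    have := lt_of_lt_of_le habs (min_le_right _ _); linarith
  have hgy : g (1 - y) = g y := hsym y ⟨le_of_lt hy0, le_of_lt hy1⟩
  have := hδ (show 1 - y ∈ Ioi (0:ℝ) by simp; linarith)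
    (show dist (1-y) 0 < δ by
      rw [Real.dist_eq, sub_zero, abs_of_pos (by linarith : (0:ℝ) < 1 - y)]
      exact lt_of_lt_of_le habs (min_le_left _ _))
  rwa [hgy] at this

lemma contOn_Icc {g : ℝ → ℝ} (hg0 : g 0 = 0) (hg1 : g 1 = 0)
    (hcont : ∀ b ∈ Ioo (0:ℝ) 1, ContinuousAt g b)
    (h0 : Filter.Tendsto g (nhdsWithin 0 (Ioi 0)) (nhds 0))
    (h1 : Filter.Tendsto g (nhdsWithin 1 (Iio 1)) (nhds 0)) :
    ContinuousOn g (Icc 0 1) := by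
  rw [Metric.tendsto_nhdsWithin_nhds] at h0 h1
  intro t ht
  rcases eq_or_lt_of_le ht.1 with h | hlt0
  · rw [Metric.continuousWithinAt_iff]
    intro ε hε
    obtain ⟨δ, hδ0, hδ⟩ := h0 ε hε
    refine ⟨δ, hδ0, ?_⟩
    intro y hy hyd
    rcases eq_or_lt_of_le hy.1 with h2 | h2
    · rw [← h2, ← h]; simpa using hε
    · rw [← h] at hyd ⊢
      rw [hg0]
      exact hδ h2 hyd
  rcases eq_or_lt_of_le ht.2 with h | hlt1
  · rw [Metric.continuousWithinAt_iff]
    intro ε hε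
    obtain ⟨δ, hδ0, hδ⟩ := h1 ε hε
    refine ⟨δ, hδ0, ?_⟩
    intro y hy hyd
    rcases eq_or_lt_of_le hy.2 with h2 | h2
    · rw [h2, h]; simpa using hε
    · rw [h] at hyd ⊢
      rw [hg1]
      exact hδ h2 hyd
  · exact (hcont t ⟨hlt0, hlt1⟩).continuousWithinAt

lemma integral_ident {g : ℝ → ℝ} (hFE : FE g) (hg0 : g 0 = 0) (hg1 : g 1 = 0)
    (hsym : ∀ t ∈ Icc (0:ℝ) 1, g (1 - t) = g t)
    (hcont : ContinuousOn g (Icc 0 1)) :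
    ∀ x ∈ Ioo (0:ℝ) 1,
      (1-x) * g x + ((1-x) * ((1-x) * (∫ t in (0:ℝ)..1, g t)))
      = (∫ y in (0:ℝ)..(1-x), g y) + x^2 * ∫ t in x..(1:ℝ), g t / t^3 := by
  rintro x ⟨hx0, hx1⟩
  have h1x : (0:ℝ) < 1 - x := by linarith
  have huIcc : uIcc (0:ℝ) (1-x) = Icc 0 (1-x) := uIcc_of_le (le_of_lt h1x)
  have hsubI : Icc (0:ℝ) (1-x) ⊆ Icc 0 1 := Icc_subset_Icc le_rfl (by linarith)
  -- the FE on the closed interval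
  have FEext : ∀ y ∈ Icc (0:ℝ) (1-x),
      g x + (1-x) * g (y/(1-x)) = g y + (1-y) * g (x/(1-y)) := by
    rintro y ⟨hy0, hy1⟩
    rcases eq_or_lt_of_le hy0 with h | h
    · rw [← h]
      norm_num [hg0]
    rcases eq_or_lt_of_le hy1 with h2 | h2
    · rw [h2]
      rw [div_self (ne_of_gt h1x), hg1]
      have e1 : (1:ℝ) - (1-x) = x := by ring
      rw [e1, div_self (ne_of_gt hx0), hg1]
      rw [hsym x ⟨le_of_lt hx0, le_of_lt hx1⟩]
      ring
    · exact hFE x y hx0 h (by linarith)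
  -- continuity facts
  have hc2 : ContinuousOn (fun y => g (y/(1-x))) (Icc 0 (1-x)) := by
    apply hcont.comp (by fun_prop)
    intro y hy
    constructor
    · exact div_nonneg hy.1 (le_of_lt h1x)
    · rw [div_le_one h1x]; exact hy.2
  have hc3 : ContinuousOn (fun y => g (x/(1-y))) (Icc 0 (1-x)) := by
    apply hcont.comp
    · apply ContinuousOn.div continuousOn_const (by fun_prop)
      rintro y ⟨hy0, hy1⟩ h
      have : (0:ℝ) < 1 - y := by linarith
      linarith
    · rintro y ⟨hy0, hy1⟩
      have h1y : (0:ℝ) < 1 - y := by linarith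
      constructor
      · positivity
      · rw [div_le_one h1y]; linarith
  have hi1 : IntervalIntegrable (fun y => g x + (1-x) * g (y/(1-x))) MeasureTheory.volume
      0 (1-x) := by
    apply ContinuousOn.intervalIntegrable
    rw [huIcc]
    exact continuousOn_const.add (continuousOn_const.mul hc2)
  have hi2 : IntervalIntegrable (fun y => g y) MeasureTheory.volume 0 (1-x) :=
    ContinuousOn.intervalIntegrable (by rw [huIcc]; exact hcont.mono hsubI)
  have hi3 : IntervalIntegrable (fun y => (1-y) * g (x/(1-y))) MeasureTheory.volume 0 (1-x) := by
    apply ContinuousOn.intervalIntegrable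
    rw [huIcc]
    exact (continuousOn_const.sub (by fun_prop)).mul hc3
  -- the two sides agree
  have heq : (∫ y in (0:ℝ)..(1-x), (g x + (1-x) * g (y/(1-x))))
      = ∫ y in (0:ℝ)..(1-x), (g y + (1-y) * g (x/(1-y))) := by
    apply intervalIntegral.integral_congr
    rw [huIcc]
    intro y hy
    exact FEext y hy
  -- LHS computation
  have hL1 : (∫ y in (0:ℝ)..(1-x), (g x + (1-x) * g (y/(1-x))))
      = (1-x) * g x + (1-x) * ∫ y in (0:ℝ)..(1-x), g (y/(1-x)) := by
    rw [intervalIntegral.integral_add (intervalIntegrable_const)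
      (by
        apply ContinuousOn.intervalIntegrable
        rw [huIcc]
        exact continuousOn_const.mul hc2)]
    rw [intervalIntegral.integral_const, intervalIntegral.integral_const_mul]
    simp [smul_eq_mul]
  have hL2 : (∫ y in (0:ℝ)..(1-x), g (y/(1-x))) = (1-x) * ∫ t in (0:ℝ)..1, g t := by
    rw [intervalIntegral.integral_comp_div (fun t => g t) (ne_of_gt h1x)]
    rw [zero_div, div_self (ne_of_gt h1x), smul_eq_mul]
  -- RHS computation
  have hR1 : (∫ y in (0:ℝ)..(1-x), (g y + (1-y) * g (x/(1-y))))
      = (∫ y in (0:ℝ)..(1-x), g y) + ∫ y in (0:ℝ)..(1-x), (1-y) * g (x/(1-y)) := by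
    rw [intervalIntegral.integral_add hi2 hi3]
  -- substitution for the last integral
  have hone : x / (1 - (1-x)) = 1 := by
    rw [show (1:ℝ) - (1-x) = x by ring, div_self (ne_of_gt hx0)]
  have hzero : x / (1 - (0:ℝ)) = x := by norm_num
  have hd : ∀ y ∈ uIcc (0:ℝ) (1-x), HasDerivAt (fun y => x/(1-y)) (x/(1-y)^2) y := by
    intro y hy
    rw [huIcc] at hy
    have h1y : (0:ℝ) < 1 - y := by
      rcases hy with ⟨hy0, hy1⟩; linarith
    have base : HasDerivAt (fun y:ℝ => 1 - y) (-1) y := (hasDerivAt_id y).const_sub 1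
    have hinv := base.inv (ne_of_gt h1y)
    have hmul := hinv.const_mul x
    have heqf : (fun y:ℝ => x/(1-y)) = fun y:ℝ => x * (1-y)⁻¹ := by
      funext z; rw [div_eq_mul_inv]
    rw [heqf]
    refine hmul.congr_deriv ?_
    ring
  have hd' : ContinuousOn (fun y => x/(1-y)^2) (uIcc (0:ℝ) (1-x)) := by
    rw [huIcc]
    apply ContinuousOn.div continuousOn_const (by fun_prop)
    rintro y ⟨hy0, hy1⟩
    have : (0:ℝ) < 1 - y := by linarith
    positivity
  have himg : ((fun y => x/(1-y)) '' (uIcc (0:ℝ) (1-x))) ⊆ Icc x 1 := by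
    rw [huIcc]
    rintro s ⟨y, ⟨hy0, hy1⟩, rfl⟩
    have h1y : (0:ℝ) < 1 - y := by linarith
    constructor
    · rw [le_div_iff₀ h1y]; nlinarith
    · rw [div_le_one h1y]; linarith
  have hG2 : ContinuousOn (fun t => x^2/t^3 * g t) (Icc x 1) := by
    apply ContinuousOn.mul
    · apply ContinuousOn.div continuousOn_const (by fun_prop)
      rintro t ⟨ht0, ht1⟩
      have : (0:ℝ) < t := lt_of_lt_of_le hx0 ht0
      positivity
    · exact hcont.mono (Icc_subset_Icc (le_of_lt hx0) le_rfl)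
  have hsubst := intervalIntegral.integral_comp_smul_deriv' hd hd' (hG2.mono himg)
  rw [hone, hzero] at hsubst
  have hintgr : (∫ y in (0:ℝ)..(1-x), (1-y) * g (x/(1-y)))
      = ∫ y in (0:ℝ)..(1-x), (x/(1-y)^2) • (((fun t => x^2/t^3 * g t) ∘ (fun y => x/(1-y))) y) := by
    apply intervalIntegral.integral_congr
    rw [huIcc]
    rintro y ⟨hy0, hy1⟩
    have h1y : (0:ℝ) < 1 - y := by linarith
    show (1-y) * g (x/(1-y)) = (x/(1-y)^2) * (x^2/(x/(1-y))^3 * g (x/(1-y)))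
    have hxy : x/(1-y) ≠ 0 := by positivity
    field_simp
  have hR2 : (∫ y in (0:ℝ)..(1-x), (1-y) * g (x/(1-y))) = ∫ t in x..(1:ℝ), x^2/t^3 * g t := by
    rw [hintgr, hsubst]
  have hR3 : (∫ t in x..(1:ℝ), x^2/t^3 * g t) = x^2 * ∫ t in x..(1:ℝ), g t / t^3 := by
    rw [← intervalIntegral.integral_const_mul]
    apply intervalIntegral.integral_congr
    intro t _
    show x^2/t^3 * g t = x^2 * (g t / t^3)
    ring
  rw [hL1, hL2] at heq
  rw [hR1, hR2, hR3] at heq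
  linarith [heq]

lemma const_of_deriv_zero {F : ℝ → ℝ} (hF : ∀ x ∈ Ioo (0:ℝ) 1, HasDerivAt F 0 x) :
    ∀ s ∈ Ioo (0:ℝ) 1, ∀ t ∈ Ioo (0:ℝ) 1, F s = F t := by
  suffices h : ∀ s t, s ∈ Ioo (0:ℝ) 1 → t ∈ Ioo (0:ℝ) 1 → s ≤ t → F s = F t by
    intro s hs t ht
    rcases le_total s t with h' | h'
    · exact h s t hs ht h'
    · exact (h t s ht hs h').symm
  intro s t hs ht hst
  have hsub : Icc s t ⊆ Ioo (0:ℝ) 1 := fun u hu =>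
    ⟨lt_of_lt_of_le hs.1 hu.1, lt_of_le_of_lt hu.2 ht.2⟩
  have hcont : ContinuousOn F (Icc s t) := fun u hu =>
    ((hF u (hsub hu)).continuousAt).continuousWithinAt
  have := constant_of_has_deriv_right_zero hcont
    (fun u hu => ((hF u (hsub (Ico_subset_Icc_self hu))).hasDerivWithinAt))
  exact (this t (right_mem_Icc.2 hst)).symm

lemma hasDerivAt_g {g : ℝ → ℝ} (hFE : FE g) (hg0 : g 0 = 0) (hg1 : g 1 = 0)
    (hsym : ∀ t ∈ Icc (0:ℝ) 1, g (1 - t) = g t)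
    (hcontAt : ∀ b ∈ Ioo (0:ℝ) 1, ContinuousAt g b)
    (hcont : ContinuousOn g (Icc 0 1)) :
    ∀ x ∈ Ioo (0:ℝ) 1, HasDerivAt g
      ((2*x*(-(∫ s in (1:ℝ)..x, g s/s^3)) - g x/x + 2*(1-x)*(∫ s in (0:ℝ)..1, g s))/(1-x)) x := by
  have hIoo : ContinuousOn g (Ioo 0 1) := fun b hb => (hcontAt b hb).continuousWithinAt
  have hG : ∀ w ∈ Ioo (0:ℝ) 1, HasDerivAt (fun u => ∫ s in (0:ℝ)..u, g s) (g w) w := by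
    intro w hw
    apply intervalIntegral.integral_hasDerivAt_right
    · apply ContinuousOn.intervalIntegrable
      apply hcont.mono
      rw [uIcc_of_le (le_of_lt hw.1)]
      exact Icc_subset_Icc le_rfl (le_of_lt hw.2)
    · exact (ContinuousOn.stronglyMeasurableAtFilter isOpen_Ioo hIoo) w hw
    · exact hcontAt w hw
  have hWd : ∀ w ∈ Ioo (0:ℝ) 1, HasDerivAt (fun u => ∫ s in (1:ℝ)..u, g s/s^3) (g w/w^3) w := by
    intro w hw
    apply intervalIntegral.integral_hasDerivAt_right
    · apply ContinuousOn.intervalIntegrable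
      rw [uIcc_of_ge (le_of_lt hw.2)]
      apply ContinuousOn.div
      · exact hcont.mono (Icc_subset_Icc (le_of_lt hw.1) le_rfl)
      · fun_prop
      · rintro s ⟨hs0, hs1⟩ h
        have hsp : (0:ℝ) < s := lt_of_lt_of_le hw.1 hs0
        have : (0:ℝ) < s^3 := pow_pos hsp 3
        linarith
    · refine (ContinuousOn.stronglyMeasurableAtFilter isOpen_Ioo ?_) w hw
      apply ContinuousOn.div hIoo (by fun_prop)
      rintro s ⟨hs0, hs1⟩ h
      have : (0:ℝ) < s^3 := pow_pos hs0 3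
      linarith
    · apply ContinuousAt.div (hcontAt w hw) (by fun_prop)
      have : (0:ℝ) < w^3 := pow_pos hw.1 3
      linarith
  intro x hx
  obtain ⟨hx0, hx1⟩ := hx
  have h1x : (0:ℝ) < 1 - x := by linarith
  -- the function P agreeing with (1-w) * g w on Ioo
  have hP : ∀ w ∈ Ioo (0:ℝ) 1, (1-w) * g w
      = (∫ y in (0:ℝ)..(1-w), g y) + (w*w) * (-(∫ s in (1:ℝ)..w, g s/s^3))
        - (1-w)*((1-w)*(∫ s in (0:ℝ)..1, g s)) := by
    intro w hw
    have := integral_ident hFE hg0 hg1 hsym hcont w hw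
    have hsymm : (∫ t in w..(1:ℝ), g t / t^3) = -(∫ s in (1:ℝ)..w, g s/s^3) :=
      intervalIntegral.integral_symm 1 w
    rw [hsymm] at this
    nlinarith [this]
  -- derivative of P at x
  have d1 : HasDerivAt (fun w => ∫ y in (0:ℝ)..(1-w), g y) (g (1-x) * (-1)) x := by
    exact (hG (1-x) ⟨by linarith, by linarith⟩).comp x ((hasDerivAt_id x).const_sub 1)
  have d2 : HasDerivAt (fun w => (w*w) * (-(∫ s in (1:ℝ)..w, g s/s^3)))
      ((1*x + x*1) * (-(∫ s in (1:ℝ)..x, g s/s^3)) + (x*x) * (-(g x/x^3))) x := by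
    exact ((hasDerivAt_id x).mul (hasDerivAt_id x)).mul ((hWd x ⟨hx0, hx1⟩).neg)
  have d3 : HasDerivAt (fun w => (1-w)*((1-w)*(∫ s in (0:ℝ)..1, g s)))
      ((-1) * ((1-x)*(∫ s in (0:ℝ)..1, g s)) + (1-x)*((-1)*(∫ s in (0:ℝ)..1, g s))) x := by
    exact ((hasDerivAt_id x).const_sub 1).mul
      (((hasDerivAt_id x).const_sub 1).mul_const _)
  have dP : HasDerivAt (fun w => (∫ y in (0:ℝ)..(1-w), g y)
      + (w*w) * (-(∫ s in (1:ℝ)..w, g s/s^3))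
      - (1-w)*((1-w)*(∫ s in (0:ℝ)..1, g s)))
      (g (1-x) * (-1) + ((1*x + x*1) * (-(∫ s in (1:ℝ)..x, g s/s^3)) + (x*x) * (-(g x/x^3)))
        - ((-1) * ((1-x)*(∫ s in (0:ℝ)..1, g s)) + (1-x)*((-1)*(∫ s in (0:ℝ)..1, g s)))) x :=
    (d1.add d2).sub d3
  -- transfer to (1-w) * g w
  have hEv : (fun w => (1-w) * g w) =ᶠ[nhds x] (fun w => (∫ y in (0:ℝ)..(1-w), g y)
      + (w*w) * (-(∫ s in (1:ℝ)..w, g s/s^3))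
      - (1-w)*((1-w)*(∫ s in (0:ℝ)..1, g s))) := by
    filter_upwards [isOpen_Ioo.mem_nhds (show x ∈ Ioo (0:ℝ) 1 from ⟨hx0, hx1⟩)] with w hw
    exact hP w hw
  have dPg : HasDerivAt (fun w => (1-w) * g w)
      (g (1-x) * (-1) + ((1*x + x*1) * (-(∫ s in (1:ℝ)..x, g s/s^3)) + (x*x) * (-(g x/x^3)))
        - ((-1) * ((1-x)*(∫ s in (0:ℝ)..1, g s)) + (1-x)*((-1)*(∫ s in (0:ℝ)..1, g s)))) x :=
    dP.congr_of_eventuallyEq hEv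
  -- multiply by (1-w)⁻¹
  have hinv : HasDerivAt (fun w : ℝ => (1-w)⁻¹) (-(-1)/(1-x)^2) x :=
    ((hasDerivAt_id x).const_sub 1).inv (ne_of_gt h1x)
  have dfull := dPg.mul hinv
  have hEv2 : g =ᶠ[nhds x] (fun w => ((1-w) * g w) * (1-w)⁻¹) := by
    filter_upwards [isOpen_Ioo.mem_nhds (show x ∈ Ioo (0:ℝ) 1 from ⟨hx0, hx1⟩)] with w hw
    have h1w : (1:ℝ) - w ≠ 0 := by
      have := hw.2; intro hcon; simp only [sub_eq_zero] at hcon; linarith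
    field_simp
  have dg := dfull.congr_of_eventuallyEq hEv2
  refine dg.congr_deriv ?_
  have hgsx : g (1-x) = g x := hsym x ⟨le_of_lt hx0, le_of_lt hx1⟩
  rw [hgsx]
  have hxne : x ≠ 0 := ne_of_gt hx0
  have h1xne : (1:ℝ) - x ≠ 0 := ne_of_gt h1x
  field_simp
  ring

lemma hasDerivAt_gd {g : ℝ → ℝ} (hFE : FE g) (hg0 : g 0 = 0) (hg1 : g 1 = 0)
    (hsym : ∀ t ∈ Icc (0:ℝ) 1, g (1 - t) = g t)
    (hcontAt : ∀ b ∈ Ioo (0:ℝ) 1, ContinuousAt g b)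
    (hcont : ContinuousOn g (Icc 0 1)) :
    ∀ x ∈ Ioo (0:ℝ) 1, HasDerivAt
      (fun w => (2*w*(-(∫ s in (1:ℝ)..w, g s/s^3)) - g w/w
        + 2*(1-w)*(∫ s in (0:ℝ)..1, g s))/(1-w))
      (-2*(∫ s in (0:ℝ)..1, g s)/(x*(1-x))) x := by
  have hIoo : ContinuousOn g (Ioo 0 1) := fun b hb => (hcontAt b hb).continuousWithinAt
  have hWd : ∀ w ∈ Ioo (0:ℝ) 1, HasDerivAt (fun u => ∫ s in (1:ℝ)..u, g s/s^3) (g w/w^3) w := by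
    intro w hw
    apply intervalIntegral.integral_hasDerivAt_right
    · apply ContinuousOn.intervalIntegrable
      rw [uIcc_of_ge (le_of_lt hw.2)]
      apply ContinuousOn.div
      · exact hcont.mono (Icc_subset_Icc (le_of_lt hw.1) le_rfl)
      · fun_prop
      · rintro s ⟨hs0, hs1⟩ h
        have hsp : (0:ℝ) < s := lt_of_lt_of_le hw.1 hs0
        have : (0:ℝ) < s^3 := pow_pos hsp 3
        linarith
    · refine (ContinuousOn.stronglyMeasurableAtFilter isOpen_Ioo ?_) w hw
      apply ContinuousOn.div hIoo (by fun_prop)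
      rintro s ⟨hs0, hs1⟩ h
      have : (0:ℝ) < s^3 := pow_pos hs0 3
      linarith
    · apply ContinuousAt.div (hcontAt w hw) (by fun_prop)
      have : (0:ℝ) < w^3 := pow_pos hw.1 3
      linarith
  intro x hx
  obtain ⟨hx0, hx1⟩ := hx
  have h1x : (0:ℝ) < 1 - x := by linarith
  have hxne : x ≠ 0 := ne_of_gt hx0
  have h1xne : (1:ℝ) - x ≠ 0 := ne_of_gt h1x
  have hgdx := hasDerivAt_g hFE hg0 hg1 hsym hcontAt hcont x ⟨hx0, hx1⟩
  have n1 : HasDerivAt (fun w => 2*w*(-(∫ s in (1:ℝ)..w, g s/s^3)))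
      ((2*1) * (-(∫ s in (1:ℝ)..x, g s/s^3)) + (2*x) * (-(g x/x^3))) x :=
    ((hasDerivAt_id x).const_mul 2).mul ((hWd x ⟨hx0, hx1⟩).neg)
  have n2 : HasDerivAt (fun w => g w/w)
      ((((2*x*(-(∫ s in (1:ℝ)..x, g s/s^3)) - g x/x
          + 2*(1-x)*(∫ s in (0:ℝ)..1, g s))/(1-x)) * x - g x * 1) / x^2) x :=
    hgdx.div (hasDerivAt_id x) hxne
  have n3 : HasDerivAt (fun w => 2*(1-w)*(∫ s in (0:ℝ)..1, g s))
      ((2 * -1) * (∫ s in (0:ℝ)..1, g s)) x :=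
    (((hasDerivAt_id x).const_sub 1).const_mul 2).mul_const _
  have nN := (n1.sub n2).add n3
  have hdenom : HasDerivAt (fun w : ℝ => 1 - w) (-1) x := (hasDerivAt_id x).const_sub 1
  have hdiv := nN.div hdenom h1xne
  refine hdiv.congr_deriv ?_
  simp only [Pi.add_apply, Pi.sub_apply]
  field_simp
  ring

lemma g_eq_form {g : ℝ → ℝ} (hFE : FE g) (hg0 : g 0 = 0) (hg1 : g 1 = 0)
    (hsym : ∀ t ∈ Icc (0:ℝ) 1, g (1 - t) = g t)
    (hcontAt : ∀ b ∈ Ioo (0:ℝ) 1, ContinuousAt g b)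
    (hcont : ContinuousOn g (Icc 0 1))
    (ht0 : Filter.Tendsto g (nhdsWithin 0 (Ioi 0)) (nhds 0))
    (ht1 : Filter.Tendsto g (nhdsWithin 1 (Iio 1)) (nhds 0)) :
    ∃ c : ℝ, ∀ t ∈ Icc (0:ℝ) 1, g t = c * (t * Real.log t + (1-t) * Real.log (1-t)) := by
  have hk : ∀ x ∈ Ioo (0:ℝ) 1, HasDerivAt (fun w => (w * Real.log w + (1-w) * Real.log (1-w)))
      (Real.log x - Real.log (1-x)) x := by
    rintro x ⟨hx0, hx1⟩
    have h1 := Real.hasDerivAt_mul_log (ne_of_gt hx0)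
    have h2 : HasDerivAt (fun w : ℝ => (1-w) * Real.log (1-w)) ((Real.log (1-x) + 1) * (-1)) x :=
      (Real.hasDerivAt_mul_log (by intro h; rw [sub_eq_zero] at h; linarith : (1:ℝ) - x ≠ 0)).comp
        x ((hasDerivAt_id x).const_sub 1)
    have := h1.add h2
    refine this.congr_deriv ?_
    ring
  have hk2 : ∀ x ∈ Ioo (0:ℝ) 1, HasDerivAt (fun w => (Real.log w - Real.log (1-w))) (x⁻¹ + (1-x)⁻¹) x := by
    rintro x ⟨hx0, hx1⟩
    have h1 := Real.hasDerivAt_log (ne_of_gt hx0)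
    have h2 : HasDerivAt (fun w : ℝ => Real.log (1-w)) ((1-x)⁻¹ * (-1)) x :=
      (Real.hasDerivAt_log (ne_of_gt (by linarith : (0:ℝ) < 1-x))).comp
        x ((hasDerivAt_id x).const_sub 1)
    have := h1.sub h2
    refine this.congr_deriv ?_
    ring
  have hm : ∀ x ∈ Ioo (0:ℝ) 1,
      HasDerivAt (fun w => (2*w*(-(∫ s in (1:ℝ)..w, g s/s^3)) - g w/w + 2*(1-w)*(∫ s in (0:ℝ)..1, g s))/(1-w) - (-(2*(∫ s in (0:ℝ)..1, g s))) * (Real.log w - Real.log (1-w))) 0 x := by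
    intro x hx
    obtain ⟨hx0, hx1⟩ := hx
    have h1 := hasDerivAt_gd hFE hg0 hg1 hsym hcontAt hcont x ⟨hx0, hx1⟩
    have h2 := (hk2 x ⟨hx0, hx1⟩).const_mul (-(2*(∫ s in (0:ℝ)..1, g s)))
    have := h1.sub h2
    refine this.congr_deriv ?_
    have hxne : x ≠ 0 := ne_of_gt hx0
    have h1xne : (1:ℝ) - x ≠ 0 := by intro h; rw [sub_eq_zero] at h; linarith
    field_simp
    ring
  have hmc := const_of_deriv_zero hm
  obtain ⟨b0, hb0⟩ : ∃ b0, ∀ x ∈ Ioo (0:ℝ) 1, (2*x*(-(∫ s in (1:ℝ)..x, g s/s^3)) - g x/x + 2*(1-x)*(∫ s in (0:ℝ)..1, g s))/(1-x) - (-(2*(∫ s in (0:ℝ)..1, g s))) * (Real.log x - Real.log (1-x)) = b0 :=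
    ⟨_, fun x hx => hmc x hx (1/2) (by norm_num)⟩
  have hp : ∀ x ∈ Ioo (0:ℝ) 1,
      HasDerivAt (fun w => g w - (-(2*(∫ s in (0:ℝ)..1, g s))) * (w * Real.log w + (1-w) * Real.log (1-w)) - b0 * w) 0 x := by
    intro x hx
    have h1 := hasDerivAt_g hFE hg0 hg1 hsym hcontAt hcont x hx
    have h2 := (hk x hx).const_mul (-(2*(∫ s in (0:ℝ)..1, g s)))
    have h3 : HasDerivAt (fun w : ℝ => b0 * w) (b0 * 1) x := (hasDerivAt_id x).const_mul b0
    have := (h1.sub h2).sub h3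
    refine this.congr_deriv ?_
    rw [← hb0 x hx]
    ring
  have hpc := const_of_deriv_zero hp
  obtain ⟨a0, ha0⟩ : ∃ a0, ∀ x ∈ Ioo (0:ℝ) 1, g x - (-(2*(∫ s in (0:ℝ)..1, g s))) * (x * Real.log x + (1-x) * Real.log (1-x)) - b0 * x = a0 :=
    ⟨_, fun x hx => hpc x hx (1/2) (by norm_num)⟩
  have hKcont : Continuous (fun w : ℝ => (w * Real.log w + (1-w) * Real.log (1-w))) := by
    apply Continuous.add Real.continuous_mul_log
    exact Real.continuous_mul_log.comp (continuous_const.sub continuous_id)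
  have hle0 : nhdsWithin (0:ℝ) (Ioi 0) ≤ nhds 0 := nhdsWithin_le_nhds
  have hle1 : nhdsWithin (1:ℝ) (Iio 1) ≤ nhds 1 := nhdsWithin_le_nhds
  have hIoo0 : Ioo (0:ℝ) 1 ∈ nhdsWithin (0:ℝ) (Ioi 0) :=
    Ioo_mem_nhdsGT_of_mem ⟨le_refl 0, zero_lt_one⟩
  have hIoo1 : Ioo (0:ℝ) 1 ∈ nhdsWithin (1:ℝ) (Iio 1) :=
    Ioo_mem_nhdsLT_of_mem ⟨zero_lt_one, le_refl 1⟩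
  have hQcont : Continuous (fun w : ℝ => (-(2*(∫ s in (0:ℝ)..1, g s))) * (w * Real.log w + (1-w) * Real.log (1-w)) + b0 * w) :=
    (continuous_const.mul hKcont).add (continuous_const.mul continuous_id)
  have hptend0 : Filter.Tendsto (fun w => g w - (-(2*(∫ s in (0:ℝ)..1, g s))) * (w * Real.log w + (1-w) * Real.log (1-w)) - b0 * w)
      (nhdsWithin 0 (Ioi 0)) (nhds 0) := by
    have h2 := (hQcont.tendsto 0).mono_left hle0
    have h4 : (-(2*(∫ s in (0:ℝ)..1, g s))) * ((0:ℝ) * Real.log (0:ℝ) + (1-(0:ℝ)) * Real.log (1-(0:ℝ))) + b0 * (0:ℝ) = 0 := by norm_num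
    rw [h4] at h2
    have h5 := ht0.sub h2
    rw [sub_zero] at h5
    apply h5.congr
    intro w
    ring
  have hptendc0 : Filter.Tendsto (fun w => g w - (-(2*(∫ s in (0:ℝ)..1, g s))) * (w * Real.log w + (1-w) * Real.log (1-w)) - b0 * w)
      (nhdsWithin 0 (Ioi 0)) (nhds a0) := by
    apply Filter.Tendsto.congr' _ (tendsto_const_nhds (α := ℝ))
    filter_upwards [hIoo0] with w hw
    exact (ha0 w hw).symm
  have ha00 : a0 = 0 := tendsto_nhds_unique hptendc0 hptend0
  have hptend1 : Filter.Tendsto (fun w => g w - (-(2*(∫ s in (0:ℝ)..1, g s))) * (w * Real.log w + (1-w) * Real.log (1-w)) - b0 * w)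
      (nhdsWithin 1 (Iio 1)) (nhds (-b0)) := by
    have h2 := (hQcont.tendsto 1).mono_left hle1
    have h4 : (-(2*(∫ s in (0:ℝ)..1, g s))) * ((1:ℝ) * Real.log (1:ℝ) + (1-(1:ℝ)) * Real.log (1-(1:ℝ))) + b0 * (1:ℝ) = b0 := by
      norm_num [Real.log_one]
    rw [h4] at h2
    have h5 := ht1.sub h2
    rw [zero_sub] at h5
    apply h5.congr
    intro w
    ring
  have hptendc1 : Filter.Tendsto (fun w => g w - (-(2*(∫ s in (0:ℝ)..1, g s))) * (w * Real.log w + (1-w) * Real.log (1-w)) - b0 * w)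
      (nhdsWithin 1 (Iio 1)) (nhds a0) := by
    apply Filter.Tendsto.congr' _ (tendsto_const_nhds (α := ℝ))
    filter_upwards [hIoo1] with w hw
    exact (ha0 w hw).symm
  have hb00 : b0 = 0 := by
    have := tendsto_nhds_unique hptendc1 hptend1
    rw [ha00] at this
    linarith [this]
  refine ⟨(-(2*(∫ s in (0:ℝ)..1, g s))), ?_⟩
  rintro t ⟨htl, htr⟩
  rcases eq_or_lt_of_le htl with h | h
  · rw [← h]
    norm_num [hg0]
  rcases eq_or_lt_of_le htr with h2 | h2
  · rw [h2]
    norm_num [hg1]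
  · have := ha0 t ⟨h, h2⟩
    rw [ha00, hb00] at this
    linarith [this]

theorem g_main {g : ℝ → ℝ} (hg0 : g 0 = 0) (hg1 : g 1 = 0)
    (hsym : ∀ t ∈ Icc (0:ℝ) 1, g (1 - t) = g t)
    (hFE : FE g)
    (hreg : ∃ x₀ ∈ Ioo (0:ℝ) 1, ContinuousAt g x₀) :
    ∃ c : ℝ, ∀ t ∈ Icc (0:ℝ) 1, g t = c * (t * Real.log t + (1-t) * Real.log (1-t)) := by
  obtain ⟨x₀, ⟨hx₀0, hx₀1⟩, hc⟩ := hreg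
  have hcontAt := cont_all hFE hsym hx₀0 hx₀1 hc
  obtain ⟨Mg, hMg0, hMg⟩ := bound_global hFE hsym (lb_all hFE ⟨hx₀0, hx₀1⟩ hc)
  have ht0 := tendsto_zero hFE hcontAt hMg0 hMg
  have ht1 := tendsto_one hsym ht0
  have hcont := contOn_Icc hg0 hg1 hcontAt ht0 ht1
  exact g_eq_form hFE hg0 hg1 hsym hcontAt hcont ht0 ht1

end Ent18

open Set

theorem stmt_18 (f : ℝ → ℝ → ℝ → ℝ)
    (hsym1 : ∀ x y z : ℝ, 0 ≤ x → 0 ≤ y → 0 ≤ z → 0 < x + y + z →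
      f x y z = f y x z)
    (hsym2 : ∀ x y z : ℝ, 0 ≤ x → 0 ≤ y → 0 ≤ z → 0 < x + y + z →
      f x y z = f x z y)
    (hhom : ∀ lam x y z : ℝ, 0 < lam → 0 ≤ x → 0 ≤ y → 0 ≤ z → 0 < x + y + z →
      f (lam * x) (lam * y) (lam * z) = lam * f x y z)
    (heq : ∀ x y z : ℝ, 0 ≤ x → 0 ≤ y → 0 ≤ z → 0 < x * y + y * z + z * x →
      f x y z = f (x + y) z 0 + f x y 0)
    (hreg : ∃ x₀ ∈ Ioo (0:ℝ) 1, ContinuousAt (fun x => f (1 - x) x 0) x₀) :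
    ∃ c : ℝ, ∀ x y z : ℝ, 0 ≤ x → 0 ≤ y → 0 ≤ z → 0 < x + y + z →
      f x y z = c * (x * Real.log x + y * Real.log y + z * Real.log z -
        (x + y + z) * Real.log (x + y + z)) := by
  have hzero : ∀ a : ℝ, 0 < a → f a 0 0 = 0 := by
    intro a ha
    have h1 := heq a 0 a (le_of_lt ha) le_rfl (le_of_lt ha) (by nlinarith)
    have h2 := hsym2 a 0 a (le_of_lt ha) le_rfl (le_of_lt ha) (by linarith)
    rw [add_zero] at h1
    linarith
  set g : ℝ → ℝ := fun t => f (1-t) t 0 with hgdef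
  have hg0 : g 0 = 0 := by
    show f (1-0) 0 0 = 0
    rw [show (1:ℝ) - 0 = 1 by ring]
    exact hzero 1 one_pos
  have hg1 : g 1 = 0 := by
    show f (1-1) 1 0 = 0
    rw [show (1:ℝ) - 1 = 0 by ring]
    rw [hsym1 0 1 0 le_rfl zero_le_one le_rfl (by norm_num)]
    exact hzero 1 one_pos
  have hgsym : ∀ t ∈ Icc (0:ℝ) 1, g (1 - t) = g t := by
    rintro t ⟨ht0, ht1⟩
    show f (1-(1-t)) (1-t) 0 = f (1-t) t 0
    rw [show (1:ℝ)-(1-t) = t by ring]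
    exact hsym1 t (1-t) 0 ht0 (by linarith) le_rfl (by linarith)
  have htwo : ∀ a b : ℝ, 0 ≤ a → 0 ≤ b → 0 < a + b → f a b 0 = (a+b) * g (b/(a+b)) := by
    intro a b ha hb hab
    have habne : a + b ≠ 0 := ne_of_gt hab
    have h := hhom (a+b) (a/(a+b)) (b/(a+b)) 0 hab
      (div_nonneg ha (le_of_lt hab)) (div_nonneg hb (le_of_lt hab)) le_rfl
      (by
        rw [← add_div, div_self habne]
        norm_num)
    have e1 : (a+b) * (a/(a+b)) = a := by field_simp
    have e2 : (a+b) * (b/(a+b)) = b := by field_simp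
    have e3 : (a+b) * (0:ℝ) = 0 := mul_zero _
    rw [e1, e2, e3] at h
    rw [h]
    have e4 : 1 - b/(a+b) = a/(a+b) := by field_simp; ring
    show (a+b) * f (a/(a+b)) (b/(a+b)) 0 = (a+b) * f (1 - b/(a+b)) (b/(a+b)) 0
    rw [e4]
  have hgFE : Ent18.FE g := by
    intro x y hx hy hxy
    have hx1 : x < 1 := by linarith
    have hy1 : y < 1 := by linarith
    have hu0 : (0:ℝ) ≤ 1 - x - y := by linarith
    have A1 := heq (1-x-y) y x hu0 (le_of_lt hy) (le_of_lt hx) (by nlinarith)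
    have A3 := hsym2 (1-x-y) y x hu0 (le_of_lt hy) (le_of_lt hx) (by linarith)
    have A2 := heq (1-x-y) x y hu0 (le_of_lt hx) (le_of_lt hy) (by nlinarith)
    have B1 : f (1-x-y+y) x 0 = g x := by
      rw [show (1:ℝ)-x-y+y = 1-x by ring]
    have B2 : f (1-x-y+x) y 0 = g y := by
      rw [show (1:ℝ)-x-y+x = 1-y by ring]
    have C1 : f (1-x-y) y 0 = (1-x) * g (y/(1-x)) := by
      rw [htwo (1-x-y) y hu0 (le_of_lt hy) (by linarith)]
      rw [show (1:ℝ)-x-y+y = 1-x by ring]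
    have C2 : f (1-x-y) x 0 = (1-y) * g (x/(1-y)) := by
      rw [htwo (1-x-y) x hu0 (le_of_lt hx) (by linarith)]
      rw [show (1:ℝ)-x-y+x = 1-y by ring]
    rw [B1, C1] at A1
    rw [B2, C2] at A2
    rw [A1, A2] at A3
    linarith [A3]
  obtain ⟨c, hgc⟩ := Ent18.g_main hg0 hg1 hgsym hgFE hreg
  have ftwo : ∀ a b : ℝ, 0 ≤ a → 0 ≤ b → 0 < a + b →
      f a b 0 = c * (a * Real.log a + b * Real.log b - (a+b) * Real.log (a+b)) := by
    intro a b ha hb hab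
    have habne : a + b ≠ 0 := ne_of_gt hab
    rw [htwo a b ha hb hab]
    have hmem : b/(a+b) ∈ Icc (0:ℝ) 1 :=
      ⟨div_nonneg hb (le_of_lt hab), by rw [div_le_one hab]; linarith⟩
    rw [hgc (b/(a+b)) hmem]
    have e4 : 1 - b/(a+b) = a/(a+b) := by field_simp; ring
    rw [e4]
    rcases eq_or_lt_of_le hb with hb0 | hb0
    · rw [← hb0] at hab ⊢
      have hane : a ≠ 0 := by intro h; rw [h] at hab; norm_num at hab
      rw [zero_div, add_zero, div_self hane]
      norm_num
    rcases eq_or_lt_of_le ha with ha0 | ha0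
    · rw [← ha0] at hab ⊢
      have hbne : b ≠ 0 := by intro h; rw [h] at hab; norm_num at hab
      rw [zero_div, zero_add, div_self hbne]
      norm_num
    · rw [Real.log_div (ne_of_gt hb0) habne, Real.log_div (ne_of_gt ha0) habne]
      have hN : (b/(a+b))*(Real.log b - Real.log (a+b)) + (a/(a+b))*(Real.log a - Real.log (a+b))
          = (a*Real.log a + b*Real.log b - (a+b)*Real.log (a+b))/(a+b) := by
        field_simp
        ring
      rw [hN, mul_comm (a+b) _, mul_assoc, div_mul_cancel₀ _ habne]
  refine ⟨c, ?_⟩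
  intro x y z hx hy hz hs
  by_cases hprod : 0 < x*y + y*z + z*x
  · have hxy : 0 < x + y := by
      rcases lt_or_ge 0 (x+y) with h | h
      · exact h
      · have hx0 : x = 0 := by linarith
        have hy0 : y = 0 := by linarith
        rw [hx0, hy0] at hprod
        nlinarith
    have h1 := heq x y z hx hy hz hprod
    rw [h1, ftwo (x+y) z (by linarith) hz (by linarith), ftwo x y hx hy hxy]
    ring
  · push_neg at hprod
    have hxy : x*y = 0 := by nlinarith
    have hyz : y*z = 0 := by nlinarith
    have hzx : z*x = 0 := by nlinarith
    rcases eq_or_lt_of_le hx with hx0 | hx0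
    · rcases eq_or_lt_of_le hy with hy0 | hy0
      · rcases eq_or_lt_of_le hz with hz0 | hz0
        · exfalso; rw [← hx0, ← hy0, ← hz0] at hs; norm_num at hs
        · -- x = 0, y = 0, z > 0
          rw [← hx0, ← hy0]
          rw [hsym2 0 0 z le_rfl le_rfl hz (by linarith)]
          rw [hsym1 0 z 0 le_rfl hz le_rfl (by linarith)]
          rw [hzero z hz0]
          norm_num
      · -- x = 0, y > 0 ⟹ z = 0
        have hz0 : z = 0 := by
          rcases mul_eq_zero.1 hyz with h | h
          · linarith
          · exact h
        rw [← hx0, hz0]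
        rw [hsym1 0 y 0 le_rfl hy le_rfl (by linarith)]
        rw [hzero y hy0]
        norm_num
    · -- x > 0 ⟹ y = 0, z = 0
      have hy0 : y = 0 := by
        rcases mul_eq_zero.1 hxy with h | h
        · linarith
        · exact h
      have hz0 : z = 0 := by
        rcases mul_eq_zero.1 hzx with h | h
        · exact h
        · linarith
      rw [hy0, hz0, hzero x hx0]
      norm_num
end

section
/- Suppose f : (0,∞)³ → ℝ satisfies f(x,y,z) = x·log x + y·log y + z·log z + ψ(x+y+z) for some ψ : (0,∞) → ℝ, is positively homogeneous of degree 1, and satisfies the entropy equation f(x,y,z) = f(x+y,z,0) + f(x,y,0) (where f is extended to boundary by the same formula with 0·log 0 = 0). Then ψ(t) = −t·log t for all t > 0. -/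
theorem stmt_19 (f : ℝ → ℝ → ℝ → ℝ) (ψ : ℝ → ℝ) (c : ℝ)
    (hform : ∀ x y z : ℝ, 0 ≤ x → 0 ≤ y → 0 ≤ z → 0 < x + y + z →
      f x y z = c * (x * Real.log x + y * Real.log y + z * Real.log z) +
        ψ (x + y + z))
    (hhom : ∀ lam x y z : ℝ, 0 < lam → 0 < x → 0 < y → 0 < z →
      f (lam * x) (lam * y) (lam * z) = lam * f x y z)
    (heq : ∀ x y z : ℝ, 0 < x → 0 < y → 0 < z →
      f x y z = f (x + y) z 0 + f x y 0) :
    ∀ t : ℝ, 0 < t → ψ t = -(c * (t * Real.log t)) := by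
  intro t ht
  have h2 : (0:ℝ) < t / 2 := by linarith
  have key := heq (t / 2) (t / 2) 1 h2 h2 one_pos
  have e1 := hform (t / 2) (t / 2) 1 h2.le h2.le zero_le_one (by linarith)
  have e2 := hform (t / 2 + t / 2) 1 0 (by linarith) zero_le_one le_rfl (by linarith)
  have e3 := hform (t / 2) (t / 2) 0 h2.le h2.le le_rfl (by linarith)
  rw [e1, e2, e3] at key
  have htt : t / 2 + t / 2 = t := by ring
  rw [htt] at key
  simp [Real.log_zero, Real.log_one] at key
  have hlt : Real.log t = Real.log (t / 2) + Real.log 2 := by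
    rw [← Real.log_mul (by positivity) (by norm_num)]
    ring_nf
  nlinarith [key, hlt]
end
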